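/- arXiv:0802.2157 — 10 statements merged into one kernel-verified Lean document; each statement's English description precedes it below -/
import Mathlib

section
/- For every finite simple graph G and every ε > 0 there exists a positive integer k₀ such that for every integer k ≥ k₀ the k-th choice number satisfies ch_k(G) ≤ k·(χ(G) + ε), where χ(G) is the chromatic number of G. -/
/-- A graph `G` is `(a:b)`-choosable if for every assignment of color sets of size `a`
to the vertices, one can choose subsets of size `b` that are disjoint on adjacent vertices. -/
def SimpleGraph.Choosable {V : Type*} (G : SimpleGraph V) (a b : ℕ) : Prop :=
  ∀ S : V → Finset ℕ, (∀ v, (S v).card = a) →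
    ∃ C : V → Finset ℕ, (∀ v, C v ⊆ S v) ∧ (∀ v, (C v).card = b) ∧
      ∀ u v, G.Adj u v → Disjoint (C u) (C v)

/-- The `k`-th choice number of `G`: the least `n` such that `G` is `(n:k)`-choosable. -/
noncomputable def SimpleGraph.chooseNum {V : Type*} (G : SimpleGraph V) (k : ℕ) : ℕ :=
  sInf {n | G.Choosable n k}

open Finset

lemma card_filter_fixed {α β : Type*} [Fintype α] [DecidableEq α] [Fintype β] [DecidableEq β]
    (P : Finset α) (jf : α → β) :
    ((Finset.univ : Finset (α → β)).filter (fun f => ∀ x ∈ P, f x = jf x)).card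
      = Fintype.card β ^ (Fintype.card α - P.card) := by
  classical
  have h1 : ((Finset.univ : Finset (α → β)).filter (fun f => ∀ x ∈ P, f x = jf x)).card
      = (Finset.univ : Finset ((↥((Finset.univ : Finset α) \ P)) → β)).card := by
    refine Finset.card_bij' (fun f _ => fun z => f z.1)
      (fun g _ => fun x => if hx : x ∈ P then jf x else g ⟨x, by simp [hx]⟩)
      ?_ ?_ ?_ ?_
    · intro f hf; exact Finset.mem_univ _
    · intro g hg
      simp only [Finset.mem_filter, Finset.mem_univ, true_and]
      intro x hx; simp [hx]
    · intro f hf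
      funext x
      by_cases hx : x ∈ P
      · simp only [Finset.mem_filter, Finset.mem_univ, true_and] at hf
        simp [hx, hf x hx]
      · simp [hx]
    · intro g hg
      funext z
      have hz : z.1 ∉ P := by
        have := z.2; simp only [Finset.mem_sdiff] at this; exact this.2
      simp [hz]
  rw [h1, Finset.card_univ, Fintype.card_fun, Fintype.card_coe,
    Finset.card_sdiff_of_subset (Finset.subset_univ P), Finset.card_univ]

lemma sum_ind_single {α β : Type*} [Fintype α] [DecidableEq α] [Fintype β] [DecidableEq β]
    (x : α) (j : β) :
    ∑ f : α → β, (if f x = j then 1 else 0 : ℕ)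
      = Fintype.card β ^ (Fintype.card α - 1) := by
  classical
  rw [← Finset.card_filter]
  have : (Finset.univ : Finset (α → β)).filter (fun f => f x = j)
      = (Finset.univ : Finset (α → β)).filter (fun f => ∀ z ∈ ({x} : Finset α), f z = j) := by
    apply Finset.filter_congr; intro f _; simp
  rw [this, card_filter_fixed ({x} : Finset α) (fun _ => j), Finset.card_singleton]

lemma sum_ind_pair {α β : Type*} [Fintype α] [DecidableEq α] [Fintype β] [DecidableEq β]
    {x y : α} (hxy : x ≠ y) (j : β) :
    ∑ f : α → β, (if f x = j ∧ f y = j then 1 else 0 : ℕ)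
      = Fintype.card β ^ (Fintype.card α - 2) := by
  classical
  rw [← Finset.card_filter]
  have : (Finset.univ : Finset (α → β)).filter (fun f => f x = j ∧ f y = j)
      = (Finset.univ : Finset (α → β)).filter
          (fun f => ∀ z ∈ ({x, y} : Finset α), f z = j) := by
    apply Finset.filter_congr; intro f _
    simp only [Finset.mem_insert, Finset.mem_singleton]
    constructor
    · rintro ⟨h1, h2⟩ z (rfl | rfl) <;> assumption
    · intro h; exact ⟨h x (Or.inl rfl), h y (Or.inr rfl)⟩
  rw [this, card_filter_fixed ({x, y} : Finset α) (fun _ => j)]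
  congr 1
  rw [Finset.card_insert_of_notMem (by simp [hxy]), Finset.card_singleton]

lemma exists_good_assignment {α W : Type*} [Fintype α] [DecidableEq α] [Fintype W]
    {q k s : ℕ} (hq : 1 ≤ q) (hk : 1 ≤ k) (hs : 1 ≤ s)
    (col : W → Fin q) (B : W → Finset α)
    (hcard : ∀ v, (B v).card = q * k + s)
    (hlt : Fintype.card W * ((q * k + s) * q) < s * s) :
    ∃ f : α → Fin q, ∀ v : W, k ≤ ((B v).filter (fun x => f x = col v)).card := by
  classical
  rcases isEmpty_or_nonempty W with hW | hW
  · exact ⟨fun _ => ⟨0, hq⟩, fun v => isEmptyElim v⟩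
  by_contra hcon
  push_neg at hcon
  set n := Fintype.card α with hn
  set a := q * k + s with ha
  set m := Fintype.card W with hm
  set X : W → (α → Fin q) → ℕ :=
    fun v f => ((B v).filter (fun x => f x = col v)).card with hX
  obtain ⟨v₀⟩ := hW
  have ha2 : 2 ≤ a := by
    have : 1 ≤ q * k := Nat.one_le_iff_ne_zero.2 (by positivity)
    omega
  have han : a ≤ n := by rw [← hcard v₀]; exact Finset.card_le_univ _
  have hn2 : 2 ≤ n := le_trans ha2 han
  obtain ⟨e, he⟩ : ∃ e, n = e + 2 := ⟨n - 2, by omega⟩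
  have hfq : Fintype.card (Fin q) = q := Fintype.card_fin q
  -- first moment
  have idX : ∀ v : W, ∑ f : α → Fin q, X v f = a * q ^ (e + 1) := by
    intro v
    have h1 : ∀ f : α → Fin q, X v f
        = ∑ x ∈ B v, (if f x = col v then 1 else 0 : ℕ) :=
      fun f => Finset.card_filter _ _
    simp_rw [h1]
    rw [Finset.sum_comm]
    have h2 : ∀ x ∈ B v, ∑ f : α → Fin q, (if f x = col v then 1 else 0 : ℕ)
        = q ^ (e + 1) := by
      intro x _
      rw [sum_ind_single x (col v), hfq, ← hn]
      congr 1; omega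
    rw [Finset.sum_congr rfl h2, Finset.sum_const, hcard v, smul_eq_mul]
  -- second moment
  have idX2 : ∀ v : W, ∑ f : α → Fin q, (X v f) * (X v f)
      = a * q ^ (e + 1) + a * (a - 1) * q ^ e := by
    intro v
    have h1 : ∀ f : α → Fin q, X v f * X v f
        = ∑ x ∈ B v, ∑ y ∈ B v, (if f x = col v ∧ f y = col v then 1 else 0 : ℕ) := by
      intro f
      rw [hX]
      simp only [Finset.card_filter]
      rw [Finset.sum_mul_sum]
      refine Finset.sum_congr rfl fun x _ => Finset.sum_congr rfl fun y _ => ?_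
      by_cases h1 : f x = col v <;> by_cases h2 : f y = col v <;> simp [h1, h2]
    simp_rw [h1]
    rw [Finset.sum_comm]
    have h2 : ∀ x ∈ B v,
        ∑ f : α → Fin q, ∑ y ∈ B v, (if f x = col v ∧ f y = col v then 1 else 0 : ℕ)
          = q ^ (e + 1) + (a - 1) * q ^ e := by
      intro x hx
      rw [Finset.sum_comm]
      have h3 : ∀ y ∈ B v,
          ∑ f : α → Fin q, (if f x = col v ∧ f y = col v then 1 else 0 : ℕ)
            = if x = y then q ^ (e + 1) else q ^ e := by
        intro y _
        by_cases hxy : x = y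
        · subst hxy
          simp only [and_self, if_pos rfl]
          rw [sum_ind_single x (col v), hfq, ← hn]
          congr 1; omega
        · rw [if_neg hxy, sum_ind_pair hxy (col v), hfq, ← hn]
          congr 1; omega
      rw [Finset.sum_congr rfl h3, ← Finset.add_sum_erase _ _ hx, if_pos rfl]
      congr 1
      have h4 : ∀ y ∈ (B v).erase x, (if x = y then q ^ (e + 1) else q ^ e) = q ^ e := by
        intro y hy
        rw [if_neg]
        exact fun h => (Finset.ne_of_mem_erase hy) h.symm
      rw [Finset.sum_congr rfl h4, Finset.sum_const, Finset.card_erase_of_mem hx,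
        hcard v, smul_eq_mul]
    rw [Finset.sum_congr rfl h2, Finset.sum_const, hcard v, smul_eq_mul, mul_add,
      ← mul_assoc]
  -- variance identity over ℤ
  have hcardF : (Finset.univ : Finset (α → Fin q)).card = q ^ (e + 2) := by
    rw [Finset.card_univ, Fintype.card_fun, hfq, ← hn, he]
  have hDsum : ∀ v : W, ∑ f : α → Fin q, ((q : ℤ) * (X v f) - a) ^ 2
      = (a : ℤ) * ((q : ℤ) - 1) * (q : ℤ) ^ (e + 2) := by
    intro v
    have ZX : ∑ f : α → Fin q, ((X v f : ℤ)) = (a : ℤ) * (q : ℤ) ^ (e + 1) := by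
      exact_mod_cast congrArg (Nat.cast : ℕ → ℤ) (idX v)
    have ZX2 : ∑ f : α → Fin q, ((X v f : ℤ)) * ((X v f : ℤ))
        = (a : ℤ) * (q : ℤ) ^ (e + 1) + (a : ℤ) * ((a : ℤ) - 1) * (q : ℤ) ^ e := by
      have h := congrArg (Nat.cast : ℕ → ℤ) (idX2 v)
      push_cast [Nat.cast_sub (by omega : 1 ≤ a)] at h
      exact_mod_cast h
    calc ∑ f : α → Fin q, ((q : ℤ) * (X v f) - a) ^ 2
        = ∑ f : α → Fin q, ((q : ℤ) ^ 2 * ((X v f : ℤ) * (X v f : ℤ))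
            - 2 * (a : ℤ) * q * (X v f : ℤ) + (a : ℤ) ^ 2) := by
          refine Finset.sum_congr rfl fun f _ => by ring
      _ = (q : ℤ) ^ 2 * (∑ f : α → Fin q, (X v f : ℤ) * (X v f : ℤ))
            - 2 * (a : ℤ) * q * (∑ f : α → Fin q, (X v f : ℤ))
            + (a : ℤ) ^ 2 * (q : ℤ) ^ (e + 2) := by
          rw [Finset.sum_add_distrib, Finset.sum_sub_distrib, ← Finset.mul_sum,
            ← Finset.mul_sum, Finset.sum_const, hcardF]
          ring
      _ = (a : ℤ) * ((q : ℤ) - 1) * (q : ℤ) ^ (e + 2) := by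
          rw [ZX, ZX2]; ring
  -- Chebyshev-style bound on bad sets
  have hbad : ∀ v : W, ((s : ℤ)) ^ 2
        * ((Finset.univ.filter (fun f : α → Fin q => X v f < k)).card : ℤ)
      ≤ (a : ℤ) * ((q : ℤ) - 1) * (q : ℤ) ^ (e + 2) := by
    intro v
    rw [← hDsum v]
    calc ((s : ℤ)) ^ 2 * ((Finset.univ.filter (fun f : α → Fin q => X v f < k)).card : ℤ)
        = ∑ f ∈ Finset.univ.filter (fun f : α → Fin q => X v f < k), ((s : ℤ)) ^ 2 := by
          rw [Finset.sum_const, nsmul_eq_mul]; ring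
      _ ≤ ∑ f ∈ Finset.univ.filter (fun f : α → Fin q => X v f < k),
            ((q : ℤ) * (X v f) - a) ^ 2 := by
          refine Finset.sum_le_sum fun f hf => ?_
          have hf' : X v f < k := (Finset.mem_filter.1 hf).2
          have h1 : (s : ℤ) ≤ (a : ℤ) - (q : ℤ) * (X v f) := by
            have hx : (X v f : ℤ) + 1 ≤ (k : ℤ) := by exact_mod_cast hf'
            have hq' : (1 : ℤ) ≤ (q : ℤ) := by exact_mod_cast hq
            have haz : (a : ℤ) = (q : ℤ) * (k : ℤ) + (s : ℤ) := by
              rw [ha]; push_cast; ring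
            nlinarith
          have h2 : ((q : ℤ) * (X v f) - a) ^ 2 = ((a : ℤ) - (q : ℤ) * (X v f)) ^ 2 := by
            ring
          rw [h2]
          have hs0 : (0 : ℤ) ≤ (s : ℤ) := Int.natCast_nonneg s
          nlinarith
      _ ≤ ∑ f : α → Fin q, ((q : ℤ) * (X v f) - a) ^ 2 := by
          refine Finset.sum_le_sum_of_subset_of_nonneg (Finset.filter_subset _ _)
            fun f _ _ => sq_nonneg _
  -- union bound / covering
  have hcover : (q : ℕ) ^ (e + 2)
      ≤ ∑ v : W, (Finset.univ.filter (fun f : α → Fin q => X v f < k)).card := by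
    rw [← hcardF]
    calc (Finset.univ : Finset (α → Fin q)).card
        ≤ (Finset.univ.biUnion
            (fun v : W => Finset.univ.filter (fun f : α → Fin q => X v f < k))).card := by
          refine Finset.card_le_card fun f _ => ?_
          obtain ⟨v, hv⟩ := hcon f
          exact Finset.mem_biUnion.2 ⟨v, Finset.mem_univ v, Finset.mem_filter.2 ⟨Finset.mem_univ f, hv⟩⟩
      _ ≤ ∑ v : W, (Finset.univ.filter (fun f : α → Fin q => X v f < k)).card :=
          Finset.card_biUnion_le
  -- combine to contradiction
  have hQ : (0 : ℤ) < (q : ℤ) ^ (e + 2) := by positivity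
  have key1 : ((s : ℤ)) ^ 2 * (q : ℤ) ^ (e + 2)
      ≤ (m : ℤ) * ((a : ℤ) * ((q : ℤ) - 1) * (q : ℤ) ^ (e + 2)) := by
    calc ((s : ℤ)) ^ 2 * (q : ℤ) ^ (e + 2)
        ≤ ((s : ℤ)) ^ 2 * (∑ v : W,
            ((Finset.univ.filter (fun f : α → Fin q => X v f < k)).card : ℤ)) := by
          refine mul_le_mul_of_nonneg_left ?_ (sq_nonneg _)
          exact_mod_cast hcover
      _ = ∑ v : W, ((s : ℤ)) ^ 2
            * ((Finset.univ.filter (fun f : α → Fin q => X v f < k)).card : ℤ) := by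
          rw [Finset.mul_sum]
      _ ≤ ∑ v : W, (a : ℤ) * ((q : ℤ) - 1) * (q : ℤ) ^ (e + 2) :=
          Finset.sum_le_sum fun v _ => hbad v
      _ = (m : ℤ) * ((a : ℤ) * ((q : ℤ) - 1) * (q : ℤ) ^ (e + 2)) := by
          rw [Finset.sum_const, nsmul_eq_mul, hm, Finset.card_univ]
  have key2 : (m : ℤ) * ((a : ℤ) * (q : ℤ)) < ((s : ℤ)) ^ 2 := by
    rw [sq]; exact_mod_cast hlt
  have hq1 : (1 : ℤ) ≤ (q : ℤ) := by exact_mod_cast hq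
  have ha0 : (0 : ℤ) ≤ (a : ℤ) := Int.natCast_nonneg a
  have hm0 : (0 : ℤ) ≤ (m : ℤ) := Int.natCast_nonneg m
  have h3 : (m : ℤ) * ((a : ℤ) * ((q : ℤ) - 1)) ≤ (m : ℤ) * ((a : ℤ) * (q : ℤ)) := by
    nlinarith
  have h4 : (m : ℤ) * ((a : ℤ) * ((q : ℤ) - 1)) < ((s : ℤ)) ^ 2 := lt_of_le_of_lt h3 key2
  have h5 : (m : ℤ) * ((a : ℤ) * ((q : ℤ) - 1)) * ((q : ℤ) ^ (e + 2))
      < ((s : ℤ)) ^ 2 * (q : ℤ) ^ (e + 2) := mul_lt_mul_of_pos_right h4 hQ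
  have h6 : (m : ℤ) * ((a : ℤ) * ((q : ℤ) - 1) * (q : ℤ) ^ (e + 2))
      = (m : ℤ) * ((a : ℤ) * ((q : ℤ) - 1)) * (q : ℤ) ^ (e + 2) := by ring
  rw [h6] at key1
  linarith

set_option maxHeartbeats 1000000 in
theorem kth_choice_number_le_of_large_k {V : Type*} [Fintype V] (G : SimpleGraph V)
    (ε : ℝ) (hε : 0 < ε) :
    ∃ k₀ : ℕ, 0 < k₀ ∧ ∀ k : ℕ, k₀ ≤ k →
      (G.chooseNum k : ℝ) ≤ (k : ℝ) * ((G.chromaticNumber.toNat : ℝ) + ε) := by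
  classical
  rcases isEmpty_or_nonempty V with hV | hV
  · refine ⟨1, one_pos, fun k hk => ?_⟩
    have h0 : G.Choosable 0 k := fun S hS =>
      ⟨fun _ => ∅, fun v => isEmptyElim v, fun v => isEmptyElim v,
        fun u v h => isEmptyElim u⟩
    have hc : G.chooseNum k = 0 := Nat.eq_zero_of_le_zero (Nat.sInf_le h0)
    rw [hc]
    have h1 : (0 : ℝ) ≤ (k : ℝ) := Nat.cast_nonneg k
    have h2 : (0 : ℝ) ≤ (G.chromaticNumber.toNat : ℝ) + ε := by positivity
    simpa using mul_nonneg h1 h2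
  · obtain ⟨col⟩ := G.colorable_chromaticNumber_of_fintype
    set q := G.chromaticNumber.toNat with hqdef
    have hq : 1 ≤ q := by
      obtain ⟨v⟩ := hV
      exact Fin.pos (col v)
    set m := Fintype.card V with hmdef
    have hm : 1 ≤ m := Fintype.card_pos
    set c : ℝ := 2 * q * (m + 1) / ε with hcdef
    have hc0 : 0 ≤ c := by positivity
    refine ⟨Nat.ceil (c ^ 2) + 1, Nat.succ_pos _, fun k hk => ?_⟩
    have hk1 : 1 ≤ k := le_trans (Nat.succ_le_succ (Nat.zero_le _)) hk
    set r := Nat.sqrt k + 1 with hr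
    have hr1 : 1 ≤ r := Nat.le_add_left 1 _
    set s := q * (m + 1) * r with hs
    have hs1 : 1 ≤ s := by
      calc 1 = 1 * 1 * 1 := by ring
        _ ≤ q * (m + 1) * r := by
            exact Nat.mul_le_mul (Nat.mul_le_mul hq (by omega)) hr1
    set a := q * k + s with ha
    -- G is (a : k)-choosable
    have hchoos : G.Choosable a k := by
      intro S hS
      set T : Finset ℕ := Finset.univ.biUnion S with hT
      have hST : ∀ v, S v ⊆ T := fun v => Finset.subset_biUnion_of_mem S (Finset.mem_univ v)
      set B : V → Finset {x // x ∈ T} := fun v => (S v).subtype (· ∈ T) with hB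
      have hBcard : ∀ v, (B v).card = q * k + s := by
        intro v
        rw [hB]
        simp only
        rw [Finset.card_subtype, Finset.filter_true_of_mem (fun x hx => hST v hx), hS v]
      have hlt : Fintype.card V * ((q * k + s) * q) < s * s := by
        have hkr : k < r * r := Nat.lt_succ_sqrt k
        rw [← hmdef, hs]
        zify
        set R : ℤ := (Nat.sqrt k : ℤ) + 1 with hR
        have hq' : (1 : ℤ) ≤ (q : ℤ) := by exact_mod_cast hq
        have hm' : (1 : ℤ) ≤ (m : ℤ) := by exact_mod_cast hm
        have hr' : (1 : ℤ) ≤ R := by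
          have : (0 : ℤ) ≤ (Nat.sqrt k : ℤ) := Int.natCast_nonneg _
          rw [hR]; linarith
        have hkr' : (k : ℤ) + 1 ≤ R * R := by
          rw [hR]
          have := hkr
          rw [hr] at this
          exact_mod_cast this
        have h1 : (m : ℤ) * q * q * ((k : ℤ) + 1) ≤ (m : ℤ) * q * q * (R * R) :=
          mul_le_mul_of_nonneg_left hkr' (by positivity)
        have h2 : (m : ℤ) * q * q * ((m : ℤ) + 1) * R
            ≤ (m : ℤ) * q * q * ((m : ℤ) + 1) * (R * R) := by
          have hrr : R ≤ R * R := by nlinarith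
          exact mul_le_mul_of_nonneg_left hrr (by positivity)
        have hqq : (1 : ℤ) ≤ (q : ℤ) * q := by nlinarith
        have hRR : (1 : ℤ) ≤ R * R := by nlinarith
        have h3 : (1 : ℤ) ≤ ((q : ℤ) * q) * (R * R) := by nlinarith [hqq, hRR]
        have h4 : (0 : ℤ) ≤ (m : ℤ) * q * q := by positivity
        have hrR' : ((r : ℕ) : ℤ) = R := by rw [hR, hr, Nat.cast_add, Nat.cast_one]
        rw [hrR']
        linarith [h1, h2, h3, h4]
      obtain ⟨f, hf⟩ := exists_good_assignment hq hk1 hs1 (fun v => col v) B hBcard hlt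
      have hDex : ∀ v, ∃ D ⊆ (B v).filter (fun x => f x = col v), D.card = k :=
        fun v => Finset.exists_subset_card_eq (hf v)
      choose D hD1 hD2 using hDex
      refine ⟨fun v => (D v).map ⟨Subtype.val, Subtype.val_injective⟩, ?_, ?_, ?_⟩
      · intro v x hx
        simp only [Finset.mem_map, Function.Embedding.coeFn_mk] at hx
        obtain ⟨y, hy, rfl⟩ := hx
        have hy' := hD1 v hy
        rw [Finset.mem_filter] at hy'
        exact (Finset.mem_subtype.1 hy'.1)
      · intro v
        rw [Finset.card_map, hD2 v]
      · intro u v huv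
        rw [Finset.disjoint_left]
        intro x hxu hxv
        simp only [Finset.mem_map, Function.Embedding.coeFn_mk] at hxu hxv
        obtain ⟨y, hy, rfl⟩ := hxu
        obtain ⟨z, hz, hzy⟩ := hxv
        have hyz : z = y := Subtype.ext hzy
        subst hyz
        have h1 := (Finset.mem_filter.1 (hD1 u hy)).2
        have h2 := (Finset.mem_filter.1 (hD1 v hz)).2
        exact col.valid huv (h1 ▸ h2 ▸ rfl)
    -- hence chooseNum k ≤ a
    have hle : G.chooseNum k ≤ a := Nat.sInf_le hchoos
    have hleR : (G.chooseNum k : ℝ) ≤ (a : ℝ) := Nat.cast_le.2 hle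
    refine le_trans hleR ?_
    -- now show (a : ℝ) ≤ k * (q + ε)
    have hkR1 : (1 : ℝ) ≤ (k : ℝ) := by exact_mod_cast hk1
    have hkR0 : (0 : ℝ) ≤ (k : ℝ) := by linarith
    have hsqrt_pos : (1 : ℝ) ≤ Real.sqrt (k : ℝ) := by
      rw [show (1 : ℝ) = Real.sqrt 1 from (Real.sqrt_one).symm]
      exact Real.sqrt_le_sqrt hkR1
    have hnsqrt : ((Nat.sqrt k : ℝ)) ≤ Real.sqrt (k : ℝ) := by
      rw [Real.le_sqrt (Nat.cast_nonneg _) hkR0]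
      exact_mod_cast Nat.sqrt_le' k
    have hrR : ((r : ℝ)) ≤ 2 * Real.sqrt (k : ℝ) := by
      have : ((r : ℝ)) = (Nat.sqrt k : ℝ) + 1 := by rw [hr]; push_cast; ring
      rw [this]; linarith
    have hcsqrt : c ≤ Real.sqrt (k : ℝ) := by
      rw [Real.le_sqrt hc0 hkR0]
      have h1 : c ^ 2 ≤ (Nat.ceil (c ^ 2) : ℝ) := Nat.le_ceil _
      have h2 : ((Nat.ceil (c ^ 2) : ℕ) : ℝ) ≤ (k : ℝ) := by
        exact_mod_cast le_trans (Nat.le_succ _) hk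
      linarith
    have hsle : (s : ℝ) ≤ ε * (k : ℝ) := by
      have h1 : (s : ℝ) = (q : ℝ) * ((m : ℝ) + 1) * (r : ℝ) := by rw [hs]; push_cast; ring
      have h2 : (q : ℝ) * ((m : ℝ) + 1) * (r : ℝ)
          ≤ (q : ℝ) * ((m : ℝ) + 1) * (2 * Real.sqrt (k : ℝ)) := by
        have hq0 : (0 : ℝ) ≤ (q : ℝ) * ((m : ℝ) + 1) := by positivity
        exact mul_le_mul_of_nonneg_left hrR hq0
      have h3 : 2 * (q : ℝ) * ((m : ℝ) + 1) = c * ε := by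
        rw [hcdef]; field_simp
      have h4 : c * ε * Real.sqrt (k : ℝ) ≤ Real.sqrt (k : ℝ) * ε * Real.sqrt (k : ℝ) := by
        have : c * ε ≤ Real.sqrt (k : ℝ) * ε :=
          mul_le_mul_of_nonneg_right hcsqrt (le_of_lt hε)
        exact mul_le_mul_of_nonneg_right this (Real.sqrt_nonneg _)
      have h5 : Real.sqrt (k : ℝ) * ε * Real.sqrt (k : ℝ) = ε * (k : ℝ) := by
        rw [mul_comm (Real.sqrt (k : ℝ)) ε, mul_assoc, Real.mul_self_sqrt hkR0]
      calc (s : ℝ) = (q : ℝ) * ((m : ℝ) + 1) * (r : ℝ) := h1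
        _ ≤ (q : ℝ) * ((m : ℝ) + 1) * (2 * Real.sqrt (k : ℝ)) := h2
        _ = 2 * (q : ℝ) * ((m : ℝ) + 1) * Real.sqrt (k : ℝ) := by ring
        _ = c * ε * Real.sqrt (k : ℝ) := by rw [h3]
        _ ≤ Real.sqrt (k : ℝ) * ε * Real.sqrt (k : ℝ) := h4
        _ = ε * (k : ℝ) := h5
    have haR : (a : ℝ) = (q : ℝ) * (k : ℝ) + (s : ℝ) := by rw [ha]; push_cast; ring
    rw [haR]
    have : (k : ℝ) * ((q : ℝ) + ε) = (q : ℝ) * (k : ℝ) + ε * (k : ℝ) := by ring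
    rw [this]
    linarith
end

section
/- For all integers l > m ≥ 3 there exist a finite simple graph G and positive integers a, b, c, d with c/d = l and a/b = m such that G is (a:b)-choosable but not (c:d)-choosable. (In particular, one may take d = 1, c = l, a = km, b = k for a suitable positive integer k.) -/
open Finset

def biGraph (K : Type) : SimpleGraph (Fin 2 × K) where
  Adj x y := x.1 ≠ y.1
  symm := ⟨fun x y h => h.symm⟩
  loopless := ⟨fun x h => h rfl⟩


lemma card_powerset_filter_inter (U S : Finset ℕ) (hSU : S ⊆ U) (b : ℕ) :
    ((U.powerset).filter fun T => (T ∩ S).card < b).card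
      = ((S.powerset).filter fun P => P.card < b).card * 2 ^ ((U \ S).card) := by
  classical
  rw [← Finset.card_powerset (U \ S), ← Finset.card_product]
  refine Finset.card_bij' (fun T _ => (T ∩ S, T \ S)) (fun P _ => P.1 ∪ P.2) ?_ ?_ ?_ ?_
  · intro T hT
    rw [mem_filter, mem_powerset] at hT
    rw [mem_product, mem_filter, mem_powerset, mem_powerset]
    exact ⟨⟨inter_subset_right, hT.2⟩, sdiff_subset_sdiff hT.1 le_rfl⟩
  · intro P hP
    simp only [mem_filter, mem_powerset, mem_product] at hP ⊢
    obtain ⟨⟨h1, h2⟩, h3⟩ := hP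
    have hdisj : ∀ x ∈ P.2, x ∉ S := by
      intro x hx
      have := h3 hx
      rw [mem_sdiff] at this
      exact this.2
    have hP1 : (P.1 ∪ P.2) ∩ S = P.1 := by
      ext x
      simp only [mem_inter, mem_union]
      constructor
      · rintro ⟨h | h, hs⟩
        · exact h
        · exact absurd hs (hdisj _ h)
      · intro h; exact ⟨Or.inl h, h1 h⟩
    constructor
    · exact union_subset (h1.trans hSU) (h3.trans sdiff_subset)
    · rw [hP1]; exact h2
  · intro T hT
    show T ∩ S ∪ T \ S = T
    rw [union_comm, sdiff_union_inter]
  · intro P hP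
    simp only [mem_filter, mem_powerset, mem_product] at hP
    obtain ⟨⟨h1, h2⟩, h3⟩ := hP
    have hdisj : ∀ x ∈ P.2, x ∉ S := by
      intro x hx
      have := h3 hx
      rw [mem_sdiff] at this
      exact this.2
    have e1 : (P.1 ∪ P.2) ∩ S = P.1 := by
      ext y
      simp only [mem_inter, mem_union]
      constructor
      · rintro ⟨h | h, hs⟩
        · exact h
        · exact absurd hs (hdisj _ h)
      · intro h; exact ⟨Or.inl h, h1 h⟩
    have e2 : (P.1 ∪ P.2) \ S = P.2 := by
      ext y
      simp only [mem_sdiff, mem_union]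
      constructor
      · rintro ⟨h | h, hs⟩
        · exact absurd (h1 h) hs
        · exact h
      · intro h; exact ⟨Or.inr h, hdisj _ h⟩
    exact Prod.ext e1 e2


lemma card_powerset_filter_sdiff (U S : Finset ℕ) (hSU : S ⊆ U) (b : ℕ) :
    ((U.powerset).filter fun T => (S \ T).card < b).card
      = ((U.powerset).filter fun T => (T ∩ S).card < b).card := by
  classical
  refine Finset.card_bij' (fun T _ => U \ T) (fun T _ => U \ T) ?_ ?_ ?_ ?_
  · intro T hT
    rw [mem_filter, mem_powerset] at hT
    rw [mem_filter, mem_powerset]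
    refine ⟨sdiff_subset, ?_⟩
    have : (U \ T) ∩ S = S \ T := by
      ext x
      simp only [mem_inter, mem_sdiff]
      constructor
      · rintro ⟨⟨hu, ht⟩, hs⟩; exact ⟨hs, ht⟩
      · rintro ⟨hs, ht⟩; exact ⟨⟨hSU hs, ht⟩, hs⟩
    rw [this]; exact hT.2
  · intro T hT
    rw [mem_filter, mem_powerset] at hT
    rw [mem_filter, mem_powerset]
    refine ⟨sdiff_subset, ?_⟩
    have : S \ (U \ T) = T ∩ S := by
      ext x
      simp only [mem_inter, mem_sdiff]
      constructor
      · rintro ⟨hs, ht⟩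
        refine ⟨?_, hs⟩
        by_contra h
        exact ht ⟨hSU hs, h⟩
      · rintro ⟨ht, hs⟩; exact ⟨hs, fun h => h.2 ht⟩
    rw [this]; exact hT.2
  · intro T hT
    rw [mem_filter, mem_powerset] at hT
    exact Finset.sdiff_sdiff_eq_self hT.1
  · intro T hT
    rw [mem_filter, mem_powerset] at hT
    exact Finset.sdiff_sdiff_eq_self hT.1

lemma card_powerset_filter_card_lt (S : Finset ℕ) (b : ℕ) :
    ((S.powerset).filter fun P => P.card < b).card
      = ∑ i ∈ Finset.range b, S.card.choose i := by
  classical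
  have h : (S.powerset).filter (fun P => P.card < b)
      = (Finset.range b).biUnion (fun i => S.powersetCard i) := by
    ext P
    simp only [mem_filter, mem_powerset, mem_biUnion, mem_range, mem_powersetCard]
    constructor
    · rintro ⟨h1, h2⟩; exact ⟨P.card, h2, h1, rfl⟩
    · rintro ⟨i, hi, h1, h2⟩; exact ⟨h1, h2 ▸ hi⟩
  rw [h, card_biUnion]
  · simp [card_powersetCard]
  · intro i _ j _ hij
    simp only [disjoint_left]
    intro P hP hP'
    rw [mem_powersetCard] at hP hP'
    exact hij (hP.2 ▸ hP'.2 ▸ rfl)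

lemma sum_choose_lt (b k : ℕ) (hk : k ≤ b) :
    ∑ i ∈ Finset.range k, (3 * b).choose i ≤ (3 * b).choose k := by
  induction k with
  | zero => simp
  | succ k ih =>
    rw [Finset.sum_range_succ]
    have h1 : ∑ i ∈ Finset.range k, (3 * b).choose i ≤ (3 * b).choose k :=
      ih (Nat.le_of_succ_le hk)
    have h2 : 2 * (3 * b).choose k ≤ (3 * b).choose (k + 1) := by
      have key := Nat.choose_succ_right_eq (3 * b) k
      have h3 : 2 * (k + 1) ≤ 3 * b - k := by omega
      have h4 : 2 * (3 * b).choose k * (k + 1) ≤ (3 * b).choose (k + 1) * (k + 1) := by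
        rw [key]
        calc 2 * (3 * b).choose k * (k + 1) = (3 * b).choose k * (2 * (k + 1)) := by ring
          _ ≤ (3 * b).choose k * (3 * b - k) := Nat.mul_le_mul_left _ h3
      exact Nat.le_of_mul_le_mul_right h4 (Nat.succ_pos k)
    omega

lemma choose_3b_bound (b : ℕ) : (3 * b).choose b * 4 ^ b ≤ 27 ^ b := by
  induction b with
  | zero => simp
  | succ b ih =>
    have e1 : (3 * b + 3).choose (b + 1) * (b + 1) = (3 * b + 3) * (3 * b + 2).choose b := by
      have h := Nat.add_one_mul_choose_eq (3 * b + 2) b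
      have hs : 3 * b + 2 + 1 = 3 * b + 3 := by omega
      rw [hs] at h
      have hs2 : b.succ = b + 1 := rfl
      omega
    have e2 : (3 * b + 1).choose b * (3 * b + 2) = (3 * b + 2).choose b * (2 * b + 2) := by
      have := Nat.choose_mul_succ_eq (3 * b + 1) b
      have h : 3 * b + 1 + 1 - b = 2 * b + 2 := by omega
      rw [h] at this
      convert this using 2 <;> omega
    have e3 : (3 * b).choose b * (3 * b + 1) = (3 * b + 1).choose b * (2 * b + 1) := by
      have := Nat.choose_mul_succ_eq (3 * b) b
      have h : 3 * b + 1 - b = 2 * b + 1 := by omega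
      rw [h] at this
      exact this
    -- combined identity
    have key : (3 * b + 3).choose (b + 1) * ((b + 1) * (2 * b + 1) * (2 * b + 2))
        = (3 * b + 1) * (3 * b + 2) * (3 * b + 3) * (3 * b).choose b := by
      calc (3 * b + 3).choose (b + 1) * ((b + 1) * (2 * b + 1) * (2 * b + 2))
          = ((3 * b + 3).choose (b + 1) * (b + 1)) * ((2 * b + 1) * (2 * b + 2)) := by ring
        _ = ((3 * b + 3) * (3 * b + 2).choose b) * ((2 * b + 1) * (2 * b + 2)) := by rw [e1]
        _ = (3 * b + 3) * (2 * b + 1) * ((3 * b + 2).choose b * (2 * b + 2)) := by ring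
        _ = (3 * b + 3) * (2 * b + 1) * ((3 * b + 1).choose b * (3 * b + 2)) := by rw [e2]
        _ = (3 * b + 3) * (3 * b + 2) * ((3 * b + 1).choose b * (2 * b + 1)) := by ring
        _ = (3 * b + 3) * (3 * b + 2) * ((3 * b).choose b * (3 * b + 1)) := by rw [e3]
        _ = (3 * b + 1) * (3 * b + 2) * (3 * b + 3) * (3 * b).choose b := by ring
    have h27 : 4 * ((3 * b + 1) * (3 * b + 2) * (3 * b + 3))
        ≤ 27 * ((b + 1) * (2 * b + 1) * (2 * b + 2)) := by nlinarith
    have pos : 0 < (b + 1) * (2 * b + 1) * (2 * b + 2) := by positivity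
    rw [show 3 * (b + 1) = 3 * b + 3 by ring]
    have goal' : (3 * b + 3).choose (b + 1) * 4 ^ (b + 1) * ((b + 1) * (2 * b + 1) * (2 * b + 2))
        ≤ 27 ^ (b + 1) * ((b + 1) * (2 * b + 1) * (2 * b + 2)) := by
      calc (3 * b + 3).choose (b + 1) * 4 ^ (b + 1) * ((b + 1) * (2 * b + 1) * (2 * b + 2))
          = ((3 * b + 3).choose (b + 1) * ((b + 1) * (2 * b + 1) * (2 * b + 2))) * 4 ^ (b+1) := by
            ring
        _ = ((3 * b + 1) * (3 * b + 2) * (3 * b + 3) * (3 * b).choose b) * 4 ^ (b + 1) := by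
            rw [key]
        _ = (4 * ((3 * b + 1) * (3 * b + 2) * (3 * b + 3))) * ((3 * b).choose b * 4 ^ b) := by
            rw [pow_succ]; ring
        _ ≤ (27 * ((b + 1) * (2 * b + 1) * (2 * b + 2))) * 27 ^ b :=
            Nat.mul_le_mul h27 ih
        _ = 27 ^ (b + 1) * ((b + 1) * (2 * b + 1) * (2 * b + 2)) := by rw [pow_succ]; ring
    exact Nat.le_of_mul_le_mul_right goal' pos

lemma exists_good_b (N : ℕ) (hN : 0 < N) : ∃ b : ℕ, 0 < b ∧ N * (3 * b).choose b < 8 ^ b := by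
  obtain ⟨b, hb⟩ := pow_unbounded_of_one_lt (N : ℝ) (show (1:ℝ) < 32/27 by norm_num)
  have hb' : (N : ℝ) * 27 ^ b < 32 ^ b := by
    have h27 : (0:ℝ) < 27 ^ b := by positivity
    calc (N : ℝ) * 27 ^ b < (32/27) ^ b * 27 ^ b := by
          exact mul_lt_mul_of_pos_right hb h27
      _ = 32 ^ b := by
          rw [div_pow, div_mul_eq_mul_div, mul_div_assoc, div_self (ne_of_gt h27), mul_one]
  have hnat : N * 27 ^ b < 32 ^ b := by exact_mod_cast hb'
  have hb0 : 0 < b := by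
    rcases Nat.eq_zero_or_pos b with h | h
    · subst h; simp at hnat; omega
    · exact h
  refine ⟨b, hb0, ?_⟩
  have h1 : N * (3 * b).choose b * 4 ^ b ≤ N * 27 ^ b := by
    calc N * (3 * b).choose b * 4 ^ b = N * ((3 * b).choose b * 4 ^ b) := by ring
      _ ≤ N * 27 ^ b := Nat.mul_le_mul_left _ (choose_3b_bound b)
  have h2 : N * (3 * b).choose b * 4 ^ b < 8 ^ b * 4 ^ b := by
    calc N * (3 * b).choose b * 4 ^ b ≤ N * 27 ^ b := h1
      _ < 32 ^ b := hnat
      _ = 8 ^ b * 4 ^ b := by rw [← mul_pow]; norm_num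
  exact Nat.lt_of_mul_lt_mul_right h2

-- monotonicity in a
lemma choosable_mono {V : Type*} (G : SimpleGraph V) {a a' b : ℕ} (h : G.Choosable a b)
    (haa : a ≤ a') : G.Choosable a' b := by
  intro S hS
  have hex : ∀ v, ∃ t ⊆ S v, t.card = a := fun v =>
    Finset.exists_subset_card_eq (by rw [hS v]; exact haa)
  choose S₀ hS₀sub hS₀card using hex
  obtain ⟨C, hC1, hC2, hC3⟩ := h S₀ hS₀card
  exact ⟨C, fun v => (hC1 v).trans (hS₀sub v), hC2, hC3⟩


abbrev KV (l : ℕ) : Type := {s : Finset ℕ // s ∈ (Finset.range (2 * l - 1)).powersetCard l}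

theorem KV_nonempty (l : ℕ) (hl : 3 ≤ l) : Nonempty (KV l) := by
  have h : l ≤ (Finset.range (2 * l - 1)).card := by
    rw [Finset.card_range]; omega
  obtain ⟨t, ht, htc⟩ := Finset.exists_subset_card_eq h
  exact ⟨⟨t, Finset.mem_powersetCard.mpr ⟨ht, htc⟩⟩⟩

lemma biGraph_not_choosable (l : ℕ) (hl : 3 ≤ l) : ¬ (biGraph (KV l)).Choosable l 1 := by
  classical
  intro h
  obtain ⟨C, hC1, hC2, hC3⟩ := h (fun v => v.2.val)
    (fun v => (Finset.mem_powersetCard.mp v.2.2).2)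
  set T : Fin 2 → Finset ℕ := fun i =>
    (Finset.range (2 * l - 1)).filter (fun x => ∃ s : KV l, x ∈ C (i, s)) with hTdef
  have hTsub : ∀ i, T i ⊆ Finset.range (2 * l - 1) := fun i => Finset.filter_subset _ _
  have hT : ∀ i, l ≤ (T i).card := by
    intro i
    have hD : (Finset.range (2 * l - 1) \ T i).card < l := by
      by_contra hcon
      push_neg at hcon
      obtain ⟨s₀, hs₀sub, hs₀card⟩ :=
        Finset.exists_subset_card_eq hcon
      have hs₀mem : s₀ ∈ (Finset.range (2 * l - 1)).powersetCard l :=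
        Finset.mem_powersetCard.mpr ⟨hs₀sub.trans sdiff_subset, hs₀card⟩
      set v : Fin 2 × KV l := (i, ⟨s₀, hs₀mem⟩) with hv
      have hcard1 : (C v).card = 1 := hC2 v
      obtain ⟨x, hx⟩ := Finset.card_pos.mp (by omega : 0 < (C v).card)
      have hxS : x ∈ s₀ := hC1 v hx
      have hxD := hs₀sub hxS
      rw [Finset.mem_sdiff] at hxD
      apply hxD.2
      rw [hTdef]
      exact Finset.mem_filter.mpr ⟨hxD.1, ⟨⟨s₀, hs₀mem⟩, hx⟩⟩
    have hcr := Finset.card_sdiff_of_subset (hTsub i)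
    rw [Finset.card_range] at hcr
    have hle := Finset.card_le_card (hTsub i)
    rw [Finset.card_range] at hle
    omega
  have hdisj : Disjoint (T 0) (T 1) := by
    rw [Finset.disjoint_left]
    intro x hx0 hx1
    rw [hTdef, Finset.mem_filter] at hx0 hx1
    obtain ⟨_, s, hs⟩ := hx0
    obtain ⟨_, t, ht⟩ := hx1
    have hadj : (biGraph (KV l)).Adj (0, s) (1, t) := by
      simp [biGraph]
    exact Finset.disjoint_left.mp (hC3 _ _ hadj) hs ht
  have hunion : (T 0 ∪ T 1).card ≤ 2 * l - 1 := by
    calc (T 0 ∪ T 1).card ≤ (Finset.range (2 * l - 1)).card :=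
        Finset.card_le_card (Finset.union_subset (hTsub 0) (hTsub 1))
      _ = 2 * l - 1 := Finset.card_range _
  rw [Finset.card_union_of_disjoint hdisj] at hunion
  have h0 := hT 0
  have h1 := hT 1
  omega

lemma biGraph_choosable (K : Type) [Fintype K] [Nonempty K] (b : ℕ) (hb0 : 0 < b)
    (hb : Fintype.card (Fin 2 × K) * (3 * b).choose b < 8 ^ b) :
    (biGraph K).Choosable (3 * b) b := by
  classical
  intro S hS
  set U : Finset ℕ := Finset.univ.biUnion S with hU
  have hSU : ∀ v : Fin 2 × K, S v ⊆ U := fun v => Finset.subset_biUnion_of_mem S (mem_univ v)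
  have hu3b : 3 * b ≤ U.card := by
    obtain ⟨v⟩ : Nonempty (Fin 2 × K) := inferInstance
    calc 3 * b = (S v).card := (hS v).symm
      _ ≤ U.card := Finset.card_le_card (hSU v)
  -- the per-vertex bad sets
  have hcount : ∀ v : Fin 2 × K,
      ((U.powerset).filter fun T =>
        (if v.1 = 0 then ((S v) ∩ T).card else ((S v) \ T).card) < b).card
        ≤ (3 * b).choose b * 2 ^ (U.card - 3 * b) := by
    intro v
    have hdiff : (U \ S v).card = U.card - 3 * b := by
      rw [card_sdiff_of_subset (hSU v), hS v]
    have hbase : ((U.powerset).filter fun T => ((T ∩ S v).card < b)).card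
        ≤ (3 * b).choose b * 2 ^ (U.card - 3 * b) := by
      rw [card_powerset_filter_inter U (S v) (hSU v) b, card_powerset_filter_card_lt, hdiff,
        hS v]
      exact Nat.mul_le_mul_right _ (sum_choose_lt b b le_rfl)
    by_cases hv : v.1 = 0
    · simp only [hv, if_pos]
      convert hbase using 2
      ext T
      simp [inter_comm]
    · simp only [hv, if_neg, if_false]
      calc ((U.powerset).filter fun T => (S v \ T).card < b).card
          = ((U.powerset).filter fun T => (T ∩ S v).card < b).card :=
            card_powerset_filter_sdiff U (S v) (hSU v) b
        _ ≤ _ := hbase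
  -- union bound
  set Bad : Finset (Finset ℕ) := (U.powerset).filter (fun T => ∃ v : Fin 2 × K,
      (if v.1 = 0 then ((S v) ∩ T).card else ((S v) \ T).card) < b) with hBad
  have hBadsub : Bad ⊆ Finset.univ.biUnion (fun v : Fin 2 × K =>
      (U.powerset).filter fun T =>
        (if v.1 = 0 then ((S v) ∩ T).card else ((S v) \ T).card) < b) := by
    intro T hT
    rw [hBad, mem_filter] at hT
    obtain ⟨hT1, v, hv⟩ := hT
    exact mem_biUnion.mpr ⟨v, mem_univ v, mem_filter.mpr ⟨hT1, hv⟩⟩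
  have hBadcard : Bad.card < 2 ^ U.card := by
    calc Bad.card ≤ ∑ v : Fin 2 × K, ((U.powerset).filter fun T =>
          (if v.1 = 0 then ((S v) ∩ T).card else ((S v) \ T).card) < b).card :=
          (Finset.card_le_card hBadsub).trans (Finset.card_biUnion_le)
      _ ≤ ∑ _v : Fin 2 × K, (3 * b).choose b * 2 ^ (U.card - 3 * b) := Finset.sum_le_sum fun v _ => hcount v
      _ = Fintype.card (Fin 2 × K) * ((3 * b).choose b * 2 ^ (U.card - 3 * b)) := by
          rw [Finset.sum_const, Finset.card_univ, smul_eq_mul]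
      _ = (Fintype.card (Fin 2 × K) * (3 * b).choose b) * 2 ^ (U.card - 3 * b) := by ring
      _ < 8 ^ b * 2 ^ (U.card - 3 * b) := by
          exact (Nat.mul_lt_mul_right (by positivity)).mpr hb
      _ = 2 ^ (3 * b) * 2 ^ (U.card - 3 * b) := by
          rw [show (8:ℕ) = 2 ^ 3 by norm_num, ← pow_mul, mul_comm 3 b, mul_comm b 3]
      _ = 2 ^ U.card := by rw [← pow_add]; congr 1; omega
  -- a good transversal exists
  have hgood : ∃ T ∈ U.powerset, ∀ v : Fin 2 × K,
      b ≤ (if v.1 = 0 then ((S v) ∩ T).card else ((S v) \ T).card) := by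
    by_contra hcon
    push_neg at hcon
    have : U.powerset ⊆ Bad := by
      intro T hT
      rw [hBad, mem_filter]
      obtain ⟨v, hv⟩ := hcon T hT
      exact ⟨hT, v, hv⟩
    have := Finset.card_le_card this
    rw [Finset.card_powerset] at this
    omega
  obtain ⟨T, hTU, hT⟩ := hgood
  -- choose the color sets
  have hex : ∀ v : Fin 2 × K, ∃ Cv, Cv ⊆ (if v.1 = 0 then S v ∩ T else S v \ T) ∧ Cv.card = b := by
    intro v
    apply Finset.exists_subset_card_eq
    by_cases hv : v.1 = 0
    · simpa [hv] using hT v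
    · simpa [hv] using hT v
  choose C hC1 hC2 using hex
  refine ⟨C, ?_, hC2, ?_⟩
  · intro v
    refine (hC1 v).trans ?_
    by_cases hv : v.1 = 0 <;> simp [hv, inter_subset_left, sdiff_subset]
  · intro x y hxy
    have hadj : x.1 ≠ y.1 := hxy
    have h2 : ∀ i : Fin 2, i = 0 ∨ i = 1 := by decide
    have hsub0 : ∀ v : Fin 2 × K, v.1 = 0 → C v ⊆ T := by
      intro v hv
      refine (hC1 v).trans ?_
      simp [hv, inter_subset_right]
    have hsub1 : ∀ v : Fin 2 × K, v.1 = 1 → ∀ x ∈ C v, x ∉ T := by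
      intro v hv x hx
      have : x ∈ S v \ T := by
        have := hC1 v
        rw [if_neg (by simp [hv])] at this
        exact this hx
      exact (mem_sdiff.mp this).2
    rcases h2 x.1 with hx0 | hx1 <;> rcases h2 y.1 with hy0 | hy1
    · exact absurd (hx0.trans hy0.symm) hadj
    · rw [Finset.disjoint_left]
      intro z hzx hzy
      exact hsub1 y hy1 z hzy (hsub0 x hx0 hzx)
    · rw [Finset.disjoint_right]
      intro z hzy hzx
      exact hsub1 x hx1 z hzx (hsub0 y hy0 hzy)
    · exact absurd (hx1.trans hy1.symm) hadj

theorem exists_ab_choosable_not_cd_choosable (l m : ℕ) (hm : 3 ≤ m) (hlm : m < l) :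
    ∃ (V : Type) (_ : Fintype V) (G : SimpleGraph V) (a b c d : ℕ),
      0 < a ∧ 0 < b ∧ 0 < c ∧ 0 < d ∧ c = l * d ∧ a = m * b ∧
      G.Choosable a b ∧ ¬ G.Choosable c d := by
  classical
  have hl : 3 ≤ l := by omega
  haveI : Nonempty (KV l) := KV_nonempty l hl
  obtain ⟨b, hb0, hb⟩ := exists_good_b (Fintype.card (Fin 2 × KV l)) Fintype.card_pos
  have hch3 : (biGraph (KV l)).Choosable (3 * b) b := biGraph_choosable (KV l) b hb0 hb
  have hch : (biGraph (KV l)).Choosable (m * b) b :=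
    choosable_mono _ hch3 (Nat.mul_le_mul_right b hm)
  refine ⟨Fin 2 × KV l, inferInstance, biGraph (KV l), m * b, b, l, 1, ?_, hb0, by omega,
    one_pos, (mul_one l).symm, rfl, hch, ?_⟩
  · positivity
  · exact biGraph_not_choosable l hl
end

section
/- Let D = (V,E) be a finite digraph containing no odd directed (simple) cycle, and let k ≥ 1. For each vertex v ∈ V let S(v) be a set of size k·(d⁺_D(v) + 1), where d⁺_D(v) is the outdegree of v in D. Then there exist subsets C(v) ⊆ S(v) with |C(v)| = k for all v ∈ V such that C(u) ∩ C(v) = ∅ for every two adjacent vertices u, v ∈ V (i.e., whenever (u,v) or (v,u) is an edge of D). -/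
set_option linter.unusedSectionVars false

/-- A directed graph (given by its edge relation `E`) has an odd directed simple cycle
if there are distinct vertices `v, l₀, …, l_{n-1}` with edges
`v → l₀ → ⋯ → l_{n-1} → v`, the length `n + 1` being odd. -/
def HasOddDirectedCycle {V : Type*} (E : V → V → Prop) : Prop :=
  ∃ (v : V) (l : List V), (v :: l).Nodup ∧ Odd (l.length + 1) ∧ List.Chain E v (l ++ [v])

section aux
variable {V : Type*}

theorem List.chain_split {R : V → V → Prop} {a b : V} {l₁ l₂ : List V} :
    List.Chain R a (l₁ ++ b :: l₂) ↔ List.Chain R a (l₁ ++ [b]) ∧ List.Chain R b l₂ :=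
  List.isChain_cons_split

theorem List.chain_singleton {R : V → V → Prop} {a b : V} :
    List.Chain R a [b] ↔ R a b :=
  List.isChain_pair

lemma exists_dup_split {l : List V} (h : ¬ l.Nodup) :
    ∃ (x : V) (l₁ l₂ : List V), l = l₁ ++ x :: l₂ ∧ x ∈ l₂ := by
  induction l with
  | nil => simp at h
  | cons a t ih =>
    by_cases ha : a ∈ t
    · exact ⟨a, [], t, rfl, ha⟩
    · have ht : ¬ t.Nodup := fun hn => h (List.nodup_cons.mpr ⟨ha, hn⟩)
      obtain ⟨x, l₁, l₂, rfl, hx⟩ := ih ht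
      exact ⟨x, a :: l₁, l₂, rfl, hx⟩

lemma no_odd_closed_walk {E : V → V → Prop} (hodd : ¬ HasOddDirectedCycle E) :
    ∀ (n : ℕ) (v : V) (l : List V), l.length + 1 = n → List.Chain E v (l ++ [v]) →
      ¬ Odd n := by
  intro n
  induction n using Nat.strong_induction_on with
  | _ n ih =>
  intro v l hlen hchain hparity
  by_cases hnd : (v :: l).Nodup
  · exact hodd ⟨v, l, hnd, hlen ▸ hparity, hchain⟩
  · by_cases hv : v ∈ l
    · -- split at an occurrence of v
      obtain ⟨l₁, l₂, rfl⟩ := List.append_of_mem hv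
      rw [List.append_assoc, List.cons_append, List.chain_split] at hchain
      obtain ⟨h1, h2⟩ := hchain
      simp only [List.length_append, List.length_cons] at hlen
      rw [Nat.odd_iff] at hparity
      rcases (by rw [Nat.odd_iff, Nat.odd_iff]; omega :
          Odd (l₁.length + 1) ∨ Odd (l₂.length + 1)) with ho | ho
      · exact ih (l₁.length + 1) (by omega) v l₁ rfl h1 ho
      · exact ih (l₂.length + 1) (by omega) v l₂ rfl h2 ho
    · have h : ¬ l.Nodup := fun hn => hnd (List.nodup_cons.mpr ⟨hv, hn⟩)
      obtain ⟨x, l₁, l₂, rfl, hx⟩ := exists_dup_split h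
      obtain ⟨l₂₁, l₂₂, rfl⟩ := List.append_of_mem hx
      rw [List.append_assoc, List.cons_append, List.chain_split] at hchain
      obtain ⟨h1, h2⟩ := hchain
      rw [List.append_assoc, List.cons_append, List.chain_split] at h2
      obtain ⟨h2, h3⟩ := h2
      have houter : List.Chain E v ((l₁ ++ x :: l₂₂) ++ [v]) := by
        rw [List.append_assoc, List.cons_append, List.chain_split]
        exact ⟨h1, h3⟩
      simp only [List.length_append, List.length_cons] at hlen
      rw [Nat.odd_iff] at hparity
      rcases (by rw [Nat.odd_iff, Nat.odd_iff]
                 simp only [List.length_append, List.length_cons]; omega :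
          Odd (l₂₁.length + 1) ∨ Odd ((l₁ ++ x :: l₂₂).length + 1)) with ho | ho
      · exact ih (l₂₁.length + 1) (by omega) x l₂₁ rfl h2 ho
      · refine ih ((l₁ ++ x :: l₂₂).length + 1) ?_ v (l₁ ++ x :: l₂₂) rfl houter ho
        simp only [List.length_append, List.length_cons]
        omega

open scoped Classical

variable [Fintype V]

def WalkN (E : V → V → Prop) (B : Finset V) (a b : V) (n : ℕ) : Prop :=
  ∃ l : List V, l.length + 1 = n ∧ List.Chain (fun x y => E x y ∧ y ∈ B) a (l ++ [b])

variable {E : V → V → Prop} {B : Finset V}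

lemma WalkN.trans {a b c : V} {m n : ℕ} (h1 : WalkN E B a b m) (h2 : WalkN E B b c n) :
    WalkN E B a c (m + n) := by
  obtain ⟨l₁, hl₁, hc₁⟩ := h1
  obtain ⟨l₂, hl₂, hc₂⟩ := h2
  refine ⟨l₁ ++ b :: l₂, by simp; omega, ?_⟩
  rw [List.append_assoc, List.cons_append, List.chain_split]
  exact ⟨hc₁, hc₂⟩

lemma walkN_single {a b : V} (h : E a b) (hb : b ∈ B) : WalkN E B a b 1 :=
  ⟨[], rfl, List.chain_singleton.mpr ⟨h, hb⟩⟩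

lemma WalkN.mem_last {a b : V} {n : ℕ} (h : WalkN E B a b n) : b ∈ B := by
  obtain ⟨l, -, hc⟩ := h
  induction l generalizing a with
  | nil => exact (List.chain_singleton.mp hc).2
  | cons x t ih => exact ih (List.chain_cons.mp hc).2

lemma WalkN.closed_not_odd (hodd : ¬ HasOddDirectedCycle E) {a : V} {n : ℕ}
    (h : WalkN E B a a n) : ¬ Odd n := by
  obtain ⟨l, hl, hc⟩ := h
  exact no_odd_closed_walk hodd n a l hl (List.IsChain.imp (fun _ _ hx => hx.1) hc)

def Reach (E : V → V → Prop) (B : Finset V) (a b : V) : Prop :=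
  a = b ∨ ∃ n, WalkN E B a b n

lemma Reach.refl (a : V) : Reach E B a a := Or.inl rfl

lemma Reach.trans {a b c : V} (h1 : Reach E B a b) (h2 : Reach E B b c) :
    Reach E B a c := by
  rcases h1 with rfl | ⟨m, h1⟩
  · exact h2
  rcases h2 with rfl | ⟨n, h2⟩
  · exact Or.inr ⟨m, h1⟩
  · exact Or.inr ⟨m + n, h1.trans h2⟩

lemma WalkN.first {v b : V} {n : ℕ} (h : WalkN E B v b n) :
    ∃ w, E v w ∧ w ∈ B ∧ Reach E B w b := by
  obtain ⟨l, hl, hc⟩ := h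
  cases l with
  | nil => exact ⟨b, (List.chain_singleton.mp hc).1, (List.chain_singleton.mp hc).2, .refl b⟩
  | cons w t =>
    obtain ⟨⟨hE, hw⟩, hc'⟩ := List.chain_cons.mp hc
    exact ⟨w, hE, hw, Or.inr ⟨t.length + 1, t, rfl, hc'⟩⟩

lemma exists_reach_max (hB : B.Nonempty) :
    ∃ m ∈ B, ∀ v ∈ B, Reach E B m v → Reach E B v m := by
  obtain ⟨m, hm, hmin⟩ := B.exists_min_image
    (fun v => (B.filter (Reach E B v ·)).card) hB
  refine ⟨m, hm, fun v hv hmv => ?_⟩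
  by_contra hvm
  have hsub : B.filter (Reach E B v ·) ⊂ B.filter (Reach E B m ·) := by
    constructor
    · intro w hw
      rw [Finset.mem_filter] at hw ⊢
      exact ⟨hw.1, hmv.trans hw.2⟩
    · intro hss
      have : m ∈ B.filter (Reach E B v ·) := hss (Finset.mem_filter.mpr ⟨hm, .refl m⟩)
      exact hvm (Finset.mem_filter.mp this).2
  exact absurd (hmin v hv) (not_le.mpr (Finset.card_lt_card hsub))

lemma richardson (hloop : ∀ v, ¬ E v v) (hodd : ¬ HasOddDirectedCycle E) (B : Finset V) :
    ∃ K : Finset V, K ⊆ B ∧ (∀ u ∈ K, ∀ v ∈ K, ¬ E u v) ∧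
      (∀ v ∈ B, v ∉ K → ∃ u ∈ K, E v u) := by
  induction B using Finset.strongInduction with
  | _ B ih =>
  rcases B.eq_empty_or_nonempty with rfl | hB
  · exact ⟨∅, by simp⟩
  obtain ⟨m, hm, hmax⟩ := exists_reach_max (E := E) hB
  set S : Finset V := B.filter (Reach E B m ·) with hS
  have hmS : m ∈ S := Finset.mem_filter.mpr ⟨hm, .refl m⟩
  have hterm : ∀ u ∈ S, ∀ w, E u w → w ∈ B → w ∈ S := by
    intro u hu w hE hw
    rw [hS, Finset.mem_filter] at hu ⊢
    exact ⟨hw, hu.2.trans (Or.inr ⟨1, walkN_single hE hw⟩)⟩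
  set ER : V → Prop := fun v => v = m ∨ ∃ n, Even n ∧ WalkN E B m v n with hER
  set KS : Finset V := S.filter ER with hKS
  have hmKS : m ∈ KS := Finset.mem_filter.mpr ⟨hmS, Or.inl rfl⟩
  -- parity is well-defined on S
  have hpar : ∀ v ∈ S, ∀ p q, WalkN E B m v p → WalkN E B m v q → p % 2 = q % 2 := by
    intro v hv p q hp hq
    have hvm : Reach E B v m := hmax v (Finset.mem_filter.mp hv).1
      (Finset.mem_filter.mp hv).2
    rcases hvm with rfl | ⟨c, hc⟩
    · have h1 := hp.closed_not_odd hodd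
      have h2 := hq.closed_not_odd hodd
      rw [Nat.odd_iff] at h1 h2
      omega
    · have h1 := (hp.trans hc).closed_not_odd hodd
      have h2 := (hq.trans hc).closed_not_odd hodd
      rw [Nat.odd_iff] at h1 h2
      omega
  -- KS is independent
  have hKSind : ∀ u ∈ KS, ∀ v ∈ KS, ¬ E u v := by
    intro u hu v hv hE
    rw [hKS, Finset.mem_filter] at hu hv
    have hvB : v ∈ B := (Finset.mem_filter.mp hv.1).1
    -- an odd walk from m to v
    have hoddwalk : ∃ p, Odd p ∧ WalkN E B m v p := by
      rcases hu.2 with rfl | ⟨n, hn, hw⟩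
      · exact ⟨1, odd_one, walkN_single hE hvB⟩
      · exact ⟨n + 1, hn.add_one, hw.trans (walkN_single hE hvB)⟩
    obtain ⟨p, hpodd, hpw⟩ := hoddwalk
    rcases hv.2 with rfl | ⟨q, hq, hqw⟩
    · exact hpw.closed_not_odd hodd hpodd
    · have := hpar v hv.1 p q hpw hqw
      rw [Nat.odd_iff] at hpodd
      rw [Nat.even_iff] at hq
      omega
  -- KS dominates S
  have hKSdom : ∀ v ∈ S, v ∉ KS → ∃ u ∈ KS, E v u := by
    intro v hv hvKS
    have hnER : ¬ ER v := fun h => hvKS (Finset.mem_filter.mpr ⟨hv, h⟩)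
    have hvne : v ≠ m := fun h => hnER (Or.inl h)
    have hreach : Reach E B m v := (Finset.mem_filter.mp hv).2
    obtain ⟨n, hw⟩ : ∃ n, WalkN E B m v n := by
      rcases hreach with rfl | h
      · exact absurd rfl hvne
      · exact h
    have hnodd : Odd n := by
      rcases Nat.even_or_odd n with he | ho
      · exact absurd (Or.inr ⟨n, he, hw⟩) hnER
      · exact ho
    have hvm : Reach E B v m := hmax v (Finset.mem_filter.mp hv).1 hreach
    obtain ⟨c, hc⟩ : ∃ c, WalkN E B v m c := by
      rcases hvm with rfl | h
      · exact absurd rfl hvne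
      · exact h
    obtain ⟨w, hEvw, hwB, -⟩ := hc.first
    have hwS : w ∈ S := hterm v hv w hEvw hwB
    refine ⟨w, Finset.mem_filter.mpr ⟨hwS, Or.inr ⟨n + 1, ?_, hw.trans (walkN_single hEvw hwB)⟩⟩, hEvw⟩
    exact hnodd.add_one
  -- remove S and the in-neighborhood of KS, recurse
  set B' : Finset V := B \ (S ∪ B.filter (fun v => ∃ u ∈ KS, E v u)) with hB'
  have hlt : B' ⊂ B := by
    refine Finset.ssubset_iff_of_subset (Finset.sdiff_subset) |>.mpr ?_
    exact ⟨m, hm, by simp [hB', hmS]⟩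
  obtain ⟨K', hK'sub, hK'ind, hK'dom⟩ := ih B' hlt
  have hK'B : ∀ v ∈ K', v ∈ B ∧ v ∉ S ∧ ¬ ∃ u ∈ KS, E v u := by
    intro v hv
    have h := hK'sub hv
    rw [hB', Finset.mem_sdiff, Finset.mem_union] at h
    exact ⟨h.1, fun hs => h.2 (Or.inl hs),
      fun he => h.2 (Or.inr (Finset.mem_filter.mpr ⟨h.1, he⟩))⟩
  refine ⟨K' ∪ KS, ?_, ?_, ?_⟩
  · intro v hv
    rcases Finset.mem_union.mp hv with h | h
    · exact (hK'B v h).1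
    · exact (Finset.mem_filter.mp (Finset.mem_filter.mp h).1).1
  · intro u hu v hv hE
    rcases Finset.mem_union.mp hu with hu' | hu' <;> rcases Finset.mem_union.mp hv with hv' | hv'
    · exact hK'ind u hu' v hv' hE
    · exact (hK'B u hu').2.2 ⟨v, hv', hE⟩
    · have hvB : v ∈ B := (hK'B v hv').1
      have : v ∈ S := hterm u (Finset.mem_filter.mp hu').1 v hE hvB
      exact (hK'B v hv').2.1 this
    · exact hKSind u hu' v hv' hE
  · intro v hvB hvK
    have hvK' : v ∉ K' := fun h => hvK (Finset.mem_union_left _ h)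
    have hvKS : v ∉ KS := fun h => hvK (Finset.mem_union_right _ h)
    by_cases hvS : v ∈ S
    · obtain ⟨u, hu, hE⟩ := hKSdom v hvS hvKS
      exact ⟨u, Finset.mem_union_right _ hu, hE⟩
    by_cases hvN : ∃ u ∈ KS, E v u
    · obtain ⟨u, hu, hE⟩ := hvN
      exact ⟨u, Finset.mem_union_right _ hu, hE⟩
    · have hvB' : v ∈ B' := by
        rw [hB', Finset.mem_sdiff, Finset.mem_union]
        refine ⟨hvB, fun h => ?_⟩
        rcases h with h | h
        · exact hvS h
        · exact hvN (Finset.mem_filter.mp h).2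
      obtain ⟨u, hu, hE⟩ := hK'dom v hvB' hvK'
      exact ⟨u, Finset.mem_union_left _ hu, hE⟩

lemma main_ind (hloop : ∀ v, ¬ E v v) (hodd : ¬ HasOddDirectedCycle E) :
    ∀ (N : ℕ) (need : V → ℕ) (L : V → Finset ℕ),
      (∑ v, need v) ≤ N →
      (∀ v, need v + ∑ u ∈ Finset.univ.filter (fun u => E v u), need u ≤ (L v).card) →
      ∃ C : V → Finset ℕ, (∀ v, C v ⊆ L v) ∧ (∀ v, (C v).card = need v) ∧
        ∀ u v, E u v ∨ E v u → Disjoint (C u) (C v) := by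
  intro N
  induction N with
  | zero =>
    intro need L hsum hinv
    have hz : ∀ v, need v = 0 := by
      intro v
      have := Finset.single_le_sum (f := need) (fun i _ => Nat.zero_le _) (Finset.mem_univ v)
      omega
    exact ⟨fun _ => ∅, fun v => Finset.empty_subset _, fun v => by simp [hz v], by simp⟩
  | succ N ihN =>
    intro need L hsum hinv
    by_cases hz : ∀ v, need v = 0
    · exact ⟨fun _ => ∅, fun v => Finset.empty_subset _, fun v => by simp [hz v], by simp⟩
    push_neg at hz
    obtain ⟨v₀, hv₀⟩ := hz
    have hLv₀ : (L v₀).Nonempty := by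
      rw [← Finset.card_pos]
      have := hinv v₀
      omega
    obtain ⟨c, hc⟩ := hLv₀
    set Bc : Finset V := Finset.univ.filter (fun v => c ∈ L v ∧ 0 < need v) with hBc
    have hv₀Bc : v₀ ∈ Bc := Finset.mem_filter.mpr ⟨Finset.mem_univ _, hc, Nat.pos_of_ne_zero hv₀⟩
    obtain ⟨K, hKsub, hKind, hKdom⟩ := richardson hloop hodd Bc
    have hKne : K.Nonempty := by
      rcases K.eq_empty_or_nonempty with rfl | h
      · obtain ⟨u, hu, -⟩ := hKdom v₀ hv₀Bc (by simp)
        simp at hu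
      · exact h
    have hKmem : ∀ u ∈ K, c ∈ L u ∧ 0 < need u := by
      intro u hu
      exact (Finset.mem_filter.mp (hKsub hu)).2
    set need' : V → ℕ := fun v => if v ∈ K then need v - 1 else need v with hneed'
    set L' : V → Finset ℕ := fun v => if v ∈ Bc then (L v).erase c else L v with hL'
    have hneedle : ∀ v, need' v ≤ need v := by
      intro v; rw [hneed']; dsimp only; split <;> omega
    have hsum' : ∑ v, need' v ≤ N := by
      obtain ⟨u₀, hu₀⟩ := hKne
      have hlt : ∑ v, need' v < ∑ v, need v := by
        refine Finset.sum_lt_sum (fun i _ => hneedle i) ⟨u₀, Finset.mem_univ _, ?_⟩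
        have := (hKmem u₀ hu₀).2
        rw [hneed']; simp only [hu₀, if_pos]
        omega
      omega
    have hinv' : ∀ v, need' v + ∑ u ∈ Finset.univ.filter (fun u => E v u), need' u ≤ (L' v).card := by
      intro v
      have hle : ∑ u ∈ Finset.univ.filter (fun u => E v u), need' u ≤
          ∑ u ∈ Finset.univ.filter (fun u => E v u), need u :=
        Finset.sum_le_sum fun i _ => hneedle i
      have hiv := hinv v
      by_cases hvK : v ∈ K
      · have hvBc := hKsub hvK
        have hcL : c ∈ L v := (hKmem v hvK).1
        have hcard : (L' v).card = (L v).card - 1 := by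
          rw [hL']; simp only [hvBc, if_pos]
          exact Finset.card_erase_of_mem hcL
        have hpos : 0 < (L v).card := Finset.card_pos.mpr ⟨c, hcL⟩
        have : need' v = need v - 1 := by rw [hneed']; simp [hvK]
        have hnp := (hKmem v hvK).2
        omega
      by_cases hvBc : v ∈ Bc
      · obtain ⟨u, huK, hEvu⟩ := hKdom v hvBc hvK
        have hstrict : ∑ u ∈ Finset.univ.filter (fun u => E v u), need' u <
            ∑ u ∈ Finset.univ.filter (fun u => E v u), need u := by
          refine Finset.sum_lt_sum (fun i _ => hneedle i)
            ⟨u, Finset.mem_filter.mpr ⟨Finset.mem_univ _, hEvu⟩, ?_⟩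
          have := (hKmem u huK).2
          rw [hneed']; simp only [huK, if_pos]
          omega
        have hcL : c ∈ L v := (Finset.mem_filter.mp hvBc).2.1
        have hcard : (L' v).card = (L v).card - 1 := by
          rw [hL']; simp only [hvBc, if_pos]
          exact Finset.card_erase_of_mem hcL
        have hpos : 0 < (L v).card := Finset.card_pos.mpr ⟨c, hcL⟩
        have : need' v = need v := by rw [hneed']; simp [hvK]
        omega
      · have hcard : (L' v).card = (L v).card := by rw [hL']; simp [hvBc]
        have : need' v = need v := by rw [hneed']; simp [hvK]
        omega
    obtain ⟨C', hC'sub, hC'card, hC'dis⟩ := ihN need' L' hsum' hinv'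
    have hcnot : ∀ w, w ∉ K → c ∉ C' w := by
      intro w hwK hcw
      have hsub := hC'sub w hcw
      rw [hL'] at hsub
      dsimp only at hsub
      by_cases hwBc : w ∈ Bc
      · rw [if_pos hwBc] at hsub
        exact Finset.notMem_erase c (L w) hsub
      · rw [if_neg hwBc] at hsub
        have hneed0 : need w = 0 := by
          by_contra h
          exact hwBc (Finset.mem_filter.mpr ⟨Finset.mem_univ _, hsub, Nat.pos_of_ne_zero h⟩)
        have hemp : C' w = ∅ := Finset.card_eq_zero.mp
          (by rw [hC'card w, hneed']; simp [hwK, hneed0])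
        simp [hemp] at hcw
    refine ⟨fun v => if v ∈ K then insert c (C' v) else C' v, ?_, ?_, ?_⟩
    · intro v
      by_cases hvK : v ∈ K
      · simp only [hvK, if_pos]
        refine Finset.insert_subset (hKmem v hvK).1 ?_
        refine (hC'sub v).trans ?_
        rw [hL']; dsimp only; rw [if_pos (hKsub hvK)]
        exact Finset.erase_subset c (L v)
      · simp only [hvK, if_neg, if_false]
        refine (hC'sub v).trans ?_
        rw [hL']; dsimp only; split
        · exact Finset.erase_subset c (L v)
        · exact subset_rfl
    · intro v
      by_cases hvK : v ∈ K
      · simp only [hvK, if_pos]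
        have hcnotin : c ∉ C' v := by
          have h2 := hC'sub v
          rw [hL'] at h2
          dsimp only at h2
          rw [if_pos (hKsub hvK)] at h2
          exact fun h => Finset.notMem_erase c (L v) (h2 h)
        rw [Finset.card_insert_of_notMem hcnotin, hC'card v, hneed']
        have := (hKmem v hvK).2
        simp only [hvK, if_pos]
        omega
      · simp only [hvK, if_neg, if_false]
        rw [hC'card v, hneed']
        simp [hvK]
    · intro u v hadj
      have hdis := hC'dis u v hadj
      by_cases huK : u ∈ K <;> by_cases hvK : v ∈ K <;>
        simp only [huK, hvK, if_pos, if_neg, if_false, if_true]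
      · exfalso
        rcases hadj with h | h
        · exact hKind u huK v hvK h
        · exact hKind v hvK u huK h
      · rw [Finset.disjoint_insert_left]
        exact ⟨hcnot v hvK, hdis⟩
      · rw [Finset.disjoint_insert_right]
        exact ⟨hcnot u huK, hdis⟩
      · exact hdis

end aux

theorem digraph_no_odd_cycle_choice {V : Type*} [Fintype V] (E : V → V → Prop)
    (hloop : ∀ v, ¬ E v v) (hodd : ¬ HasOddDirectedCycle E) (k : ℕ) (hk : 1 ≤ k)
    (S : V → Finset ℕ) (hS : ∀ v, (S v).card = k * (Nat.card {u // E v u} + 1)) :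
    ∃ C : V → Finset ℕ, (∀ v, C v ⊆ S v) ∧ (∀ v, (C v).card = k) ∧
      ∀ u v, E u v ∨ E v u → Disjoint (C u) (C v) := by
  classical
  refine main_ind hloop hodd (∑ _v : V, k) (fun _ => k) S le_rfl fun v => ?_
  rw [hS v, Finset.sum_const, smul_eq_mul]
  have hcard : Nat.card {u // E v u} = (Finset.univ.filter (fun u => E v u)).card := by
    rw [Nat.card_eq_fintype_card, Fintype.card_subtype]
  rw [hcard]
  ring_nf
  omega
end

section
/- Every even cycle C_{2n} (n ≥ 2) is (2k:k)-choosable for every positive integer k. -/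
open Finset
open Fin.CommRing Fin.NatCast

/-- Kernel lemma: every "induced subdigraph" of the directed even cycle on `Fin (p+2)`
(edges `u → u+1`) has a kernel. -/
lemma kernel_exists (p : ℕ) (hme : Even (p + 2)) (U : Set (Fin (p + 2))) :
    ∃ K : Set (Fin (p + 2)), K ⊆ U ∧ (∀ u, u ∈ K → u + 1 ∉ K) ∧
      (∀ u ∈ U, u ∉ K → u + 1 ∈ K) := by
  classical
  have hval1 : (1 : Fin (p + 2)).val = 1 := rfl
  by_cases hU : U = Set.univ
  · subst hU
    have flip : ∀ u : Fin (p + 2), (Even ((u + 1).val) ↔ ¬ Even u.val) := by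
      intro u
      have h1 : (u + 1).val = (u.val + 1) % (p + 2) := by
        rw [Fin.add_def, hval1]
      have h2 : u.val < p + 2 := u.isLt
      rw [Nat.even_iff, Nat.even_iff]
      rcases Nat.lt_or_ge (u.val + 1) (p + 2) with h | h
      · rw [h1, Nat.mod_eq_of_lt h]; omega
      · have : u.val + 1 = p + 2 := by omega
        rw [h1, this, Nat.mod_self]
        rw [Nat.even_iff] at hme
        omega
    refine ⟨{u | Even u.val}, fun _ _ => trivial, ?_, ?_⟩
    · intro u hu h1
      exact ((flip u).mp h1) hu
    · intro u _ hu
      exact (flip u).mpr hu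
  · obtain ⟨z, hz⟩ := Set.ne_univ_iff_exists_notMem U |>.mp hU
    have hex : ∀ u : Fin (p + 2), ∃ j : ℕ, u + ((j + 1 : ℕ) : Fin (p + 2)) ∉ U := by
      intro u
      refine ⟨(z - u - 1).val, ?_⟩
      have h : (((z - u - 1).val + 1 : ℕ) : Fin (p + 2)) = z - u := by
        push_cast [Fin.cast_val_eq_self]
        ring
      rw [h]
      have : u + (z - u) = z := by ring
      rwa [this]
    set g : Fin (p + 2) → ℕ := fun u => Nat.find (hex u) with hg
    have hgspec : ∀ u, u + ((g u + 1 : ℕ) : Fin (p + 2)) ∉ U := fun u => Nat.find_spec (hex u)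
    have hgmin : ∀ u j, j < g u → u + ((j + 1 : ℕ) : Fin (p + 2)) ∈ U := by
      intro u j hj
      have := Nat.find_min (hex u) hj
      exact not_not.mp this
    have hsucc : ∀ u : Fin (p + 2), u + 1 ∈ U → g u = g (u + 1) + 1 := by
      intro u hu1
      have h0 : 0 < g u := by
        rcases Nat.eq_zero_or_pos (g u) with h | h
        · exfalso
          have := hgspec u
          rw [h] at this
          have h1 : ((0 + 1 : ℕ) : Fin (p + 2)) = 1 := by norm_num
          rw [h1] at this
          exact this hu1
        · exact h
      have le1 : g (u + 1) ≤ g u - 1 := by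
        apply Nat.find_le
        have : (u + 1) + ((g u - 1 + 1 : ℕ) : Fin (p + 2)) = u + ((g u + 1 : ℕ) : Fin (p + 2)) := by
          have h1 : g u - 1 + 1 = g u := by omega
          rw [h1]
          push_cast
          ring
        rw [this]
        exact hgspec u
      have le2 : g u ≤ g (u + 1) + 1 := by
        apply Nat.find_le
        have : u + ((g (u + 1) + 1 + 1 : ℕ) : Fin (p + 2))
            = (u + 1) + ((g (u + 1) + 1 : ℕ) : Fin (p + 2)) := by
          push_cast
          ring
        rw [this]
        exact hgspec (u + 1)
      omega
    refine ⟨{u | u ∈ U ∧ Even (g u)}, fun u hu => hu.1, ?_, ?_⟩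
    · rintro u ⟨huU, hue⟩ ⟨h1U, h1e⟩
      have := hsucc u h1U
      rw [Nat.even_iff] at hue h1e
      omega
    · intro u huU hnk
      have hodd : ¬ Even (g u) := fun h => hnk ⟨huU, h⟩
      have h0 : 0 < g u := by
        rcases Nat.eq_zero_or_pos (g u) with h | h
        · exact absurd (h ▸ Even.zero) hodd
        · exact h
      have hu1 : u + 1 ∈ U := by
        have := hgmin u 0 h0
        simpa using this
      refine ⟨hu1, ?_⟩
      have := hsucc u hu1
      rw [Nat.even_iff] at hodd ⊢
      omega

/-- Key lemma: kernel-method list assignment on the directed cycle. -/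
lemma key_lemma (p : ℕ) (hme : Even (p + 2)) (N : ℕ) :
    ∀ (b : Fin (p + 2) → ℕ) (S : Fin (p + 2) → Finset ℕ),
      (∑ v, b v) ≤ N → (∀ v, b v + b (v + 1) ≤ (S v).card) →
      ∃ C : Fin (p + 2) → Finset ℕ, (∀ v, C v ⊆ S v) ∧ (∀ v, (C v).card = b v) ∧
        (∀ v, Disjoint (C v) (C (v + 1))) := by
  classical
  induction N with
  | zero =>
    intro b S hsum _
    have hb : ∀ v, b v = 0 := by
      intro v
      have := Finset.single_le_sum (f := b) (fun i _ => Nat.zero_le _) (Finset.mem_univ v)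
      omega
    exact ⟨fun _ => ∅, fun v => Finset.empty_subset _, fun v => by simp [hb v],
      fun v => Finset.disjoint_empty_left _⟩
  | succ N ih =>
    intro b S hsum hinv
    by_cases hb0 : ∀ v, b v = 0
    · exact ⟨fun _ => ∅, fun v => Finset.empty_subset _, fun v => by simp [hb0 v],
        fun v => Finset.disjoint_empty_left _⟩
    push_neg at hb0
    obtain ⟨v₀, hv₀⟩ := hb0
    have hS0 : (S v₀).Nonempty := Finset.card_pos.mp (by have := hinv v₀; omega)
    obtain ⟨c, hc⟩ := hS0
    set U : Set (Fin (p + 2)) := {v | c ∈ S v ∧ 0 < b v} with hUdef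
    obtain ⟨K, hKU, hKind, hKabs⟩ := kernel_exists p hme U
    set b' : Fin (p + 2) → ℕ := fun v => if v ∈ K then b v - 1 else b v with hb'
    set S' : Fin (p + 2) → Finset ℕ := fun v => if v ∈ U then (S v).erase c else S v with hS'
    have hv₀U : v₀ ∈ U := ⟨hc, by omega⟩
    have hb'le : ∀ v, b' v ≤ b v := by
      intro v
      by_cases h : v ∈ K <;> simp [hb', h]
    have hKne : ∃ w, w ∈ K := by
      by_cases h : v₀ ∈ K
      · exact ⟨v₀, h⟩
      · exact ⟨v₀ + 1, hKabs v₀ hv₀U h⟩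
    have hsum' : ∑ v, b' v ≤ N := by
      obtain ⟨w, hw⟩ := hKne
      have hwp : 0 < b w := (hKU hw).2
      have hlt : ∑ v, b' v < ∑ v, b v := by
        apply Finset.sum_lt_sum (fun v _ => hb'le v)
        exact ⟨w, Finset.mem_univ w, by simp [hb', hw]; omega⟩
      omega
    have hinv' : ∀ v, b' v + b' (v + 1) ≤ (S' v).card := by
      intro v
      have hin := hinv v
      by_cases hvU : v ∈ U
      · have hcS : c ∈ S v := hvU.1
        have hcard : (S' v).card = (S v).card - 1 := by
          simp [hS', hvU, Finset.card_erase_of_mem hcS]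
        have hSpos : 0 < (S v).card := Finset.card_pos.mpr ⟨c, hcS⟩
        by_cases hvK : v ∈ K
        · have h1 : b' v = b v - 1 := by simp [hb', hvK]
          have h2 : b' (v + 1) ≤ b (v + 1) := hb'le _
          have h0 : 0 < b v := hvU.2
          omega
        · have hvk1 : v + 1 ∈ K := hKabs v hvU hvK
          have h01 : 0 < b (v + 1) := (hKU hvk1).2
          have h1 : b' (v + 1) = b (v + 1) - 1 := by simp [hb', hvk1]
          have h2 : b' v = b v := by simp [hb', hvK]
          omega
      · have hvK : v ∉ K := fun h => hvU (hKU h)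
        have h1 : b' v = b v := by simp [hb', hvK]
        have h2 : b' (v + 1) ≤ b (v + 1) := hb'le _
        have h3 : S' v = S v := by simp [hS', hvU]
        rw [h3]
        omega
    obtain ⟨C', hC'sub, hC'card, hC'disj⟩ := ih b' S' hsum' hinv'
    have hno : ∀ w, c ∉ C' w := by
      intro w
      by_cases hwU : w ∈ U
      · intro hcw
        have hsub : C' w ⊆ (S w).erase c := by
          have := hC'sub w
          rwa [show S' w = (S w).erase c by simp [hS', hwU]] at this
        exact (Finset.mem_erase.mp (hsub hcw)).1 rfl
      · have hwK : w ∉ K := fun h => hwU (hKU h)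
        by_cases hcw : c ∈ S w
        · have hbw : b w = 0 := by
            by_contra h
            exact hwU ⟨hcw, by omega⟩
          have hcard0 : (C' w).card = 0 := by
            rw [hC'card w]
            simp [hb', hwK, hbw]
          rw [Finset.card_eq_zero.mp hcard0]
          exact Finset.notMem_empty c
        · intro hmem
          have := hC'sub w hmem
          rw [show S' w = S w by simp [hS', hwU]] at this
          exact hcw this
    refine ⟨fun v => if v ∈ K then insert c (C' v) else C' v, ?_, ?_, ?_⟩
    · intro v
      have hsub : C' v ⊆ S v := by
        refine (hC'sub v).trans ?_
        by_cases hvU : v ∈ U <;> simp [hS', hvU, Finset.erase_subset]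
      by_cases hvK : v ∈ K
      · simp only [if_pos hvK]
        exact Finset.insert_subset (hKU hvK).1 hsub
      · simp only [if_neg hvK]
        exact hsub
    · intro v
      by_cases hvK : v ∈ K
      · simp only [if_pos hvK]
        rw [Finset.card_insert_of_notMem (hno v), hC'card v]
        have h0 : 0 < b v := (hKU hvK).2
        simp only [hb', if_pos hvK]
        omega
      · simp only [if_neg hvK]
        rw [hC'card v]
        simp [hb', hvK]
    · intro v
      by_cases h1 : v ∈ K <;> by_cases h2 : v + 1 ∈ K
      · exact absurd h2 (hKind v h1)
      · simp only [if_pos h1, if_neg h2]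
        exact Finset.disjoint_insert_left.mpr ⟨hno (v + 1), hC'disj v⟩
      · simp only [if_neg h1, if_pos h2]
        exact Finset.disjoint_insert_right.mpr ⟨hno v, hC'disj v⟩
      · simp only [if_neg h1, if_neg h2]
        exact hC'disj v

theorem evenCycle_choosable' (p k : ℕ) (hme : Even (p + 2)) :
    ∀ S : Fin (p + 2) → Finset ℕ, (∀ v, (S v).card = 2 * k) →
    ∃ C : Fin (p + 2) → Finset ℕ, (∀ v, C v ⊆ S v) ∧ (∀ v, (C v).card = k) ∧
      ∀ u v, (SimpleGraph.cycleGraph (p + 2)).Adj u v → Disjoint (C u) (C v) := by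
  intro S hS
  obtain ⟨C, h1, h2, h3⟩ := key_lemma p hme (∑ _v : Fin (p + 2), k) (fun _ => k) S le_rfl
    (fun v => by rw [hS v]; show k + k ≤ 2 * k; omega)
  refine ⟨C, h1, h2, ?_⟩
  intro u v huv
  rw [SimpleGraph.cycleGraph_adj] at huv
  rcases huv with h | h
  · have hu : u = v + 1 := by
      have := sub_eq_iff_eq_add.mp h
      rw [this]; ring
    rw [hu]
    exact (h3 v).symm
  · have hv : v = u + 1 := by
      have := sub_eq_iff_eq_add.mp h
      rw [this]; ring
    rw [hv]
    exact h3 u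

theorem evenCycle_choosable (n : ℕ) (hn : 2 ≤ n) (k : ℕ) (hk : 0 < k) :
    (SimpleGraph.cycleGraph (2 * n)).Choosable (2 * k) k := by
  obtain ⟨p, hp⟩ : ∃ p, 2 * n = p + 2 := ⟨2 * n - 2, by omega⟩
  have hme : Even (p + 2) := hp ▸ even_two_mul n
  rw [hp]
  exact evenCycle_choosable' p k hme
end

section
/- Every finite bipartite simple graph G is (k(⌈M(G)⌉ + 1):k)-choosable for every positive integer k, where M(G) = max |E(H)|/|V(H)| taken over all subgraphs H of G with at least one vertex. -/
open Finset
open scoped Classical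

section AuxChoosable


lemma kernel_lemma {V : Type*} (col : V → Fin 2) (R : V → V → Prop) (T : Set V)
    (hR : ∀ u v, R u v → u ∈ T ∧ v ∈ T ∧ col u ≠ col v) :
    ∃ K : Set V, K ⊆ T ∧ (∀ u ∈ K, ∀ v ∈ K, ¬ R u v) ∧
      ∀ v ∈ T, v ∉ K → ∃ w ∈ K, R v w := by
  classical
  set A : Set V := {v | v ∈ T ∧ col v = 0} with hA
  set B : Set V := {v | v ∈ T ∧ col v ≠ 0} with hB
  set Tf : Set V → Set V := fun S => {b | b ∈ B ∧ ∀ s ∈ S, ¬ R b s} with hTf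
  have hTmono : ∀ S S' : Set V, S ⊆ S' → Tf S' ⊆ Tf S := by
    intro S S' hSS b hb
    exact ⟨hb.1, fun s hs => hb.2 s (hSS hs)⟩
  set g : Set V →o Set V :=
    ⟨fun S => {a | a ∈ A ∧ ∀ b ∈ Tf S, ¬ R a b},
     by
      intro S S' hSS a ha
      exact ⟨ha.1, fun b hb => ha.2 b (hTmono S S' hSS hb)⟩⟩ with hg
  set S₀ : Set V := g.lfp with hS₀
  have hfix : g S₀ = S₀ := g.map_lfp
  have hS₀A : S₀ ⊆ A := by
    rw [← hfix]; intro a ha; exact ha.1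
  have htwo : ∀ x : Fin 2, x ≠ 0 → x = 1 := by decide
  refine ⟨S₀ ∪ Tf S₀, ?_, ?_, ?_⟩
  · intro v hv
    rcases hv with hv | hv
    · exact (hS₀A hv).1
    · exact hv.1.1
  · rintro u hu v hv hRuv
    obtain ⟨-, -, hne⟩ := hR u v hRuv
    rcases hu with hu | hu <;> rcases hv with hv | hv
    · exact hne (((hS₀A hu).2).trans ((hS₀A hv).2).symm)
    · have hu' : u ∈ g S₀ := by rw [hfix]; exact hu
      exact hu'.2 v hv hRuv
    · exact hu.2 v hv hRuv
    · exact hne ((htwo _ hu.1.2).trans (htwo _ hv.1.2).symm)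
  · intro v hvT hvK
    by_cases hc : col v = 0
    · have hvA : v ∈ A := ⟨hvT, hc⟩
      have hvS : v ∉ g S₀ := by rw [hfix]; exact fun h => hvK (Or.inl h)
      have : ¬ ∀ b ∈ Tf S₀, ¬ R v b := fun h => hvS ⟨hvA, h⟩
      push_neg at this
      obtain ⟨b, hb, hRb⟩ := this
      exact ⟨b, Or.inr hb, hRb⟩
    · have hvB : v ∈ B := ⟨hvT, hc⟩
      have hvT' : v ∉ Tf S₀ := fun h => hvK (Or.inr h)
      have : ¬ ∀ s ∈ S₀, ¬ R v s := fun h => hvT' ⟨hvB, h⟩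
      push_neg at this
      obtain ⟨s, hs, hRs⟩ := this
      exact ⟨s, Or.inl hs, hRs⟩

lemma color_lemma {V : Type*} [Fintype V] (G : SimpleGraph V) (col : V → Fin 2)
    (hcol : ∀ u v, G.Adj u v → col u ≠ col v)
    (D : V → V → Prop) (hDG : ∀ u v, D u v → G.Adj u v)
    (hcover : ∀ u v, G.Adj u v → D u v ∨ D v u) :
    ∀ (N : ℕ) (dem : V → ℕ) (L : V → Finset ℕ), (∑ v, dem v) ≤ N →
      (∀ v, dem v + ∑ w ∈ univ.filter (fun w => D v w), dem w ≤ (L v).card) →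
      ∃ C : V → Finset ℕ, (∀ v, C v ⊆ L v) ∧ (∀ v, (C v).card = dem v) ∧
        ∀ u v, G.Adj u v → Disjoint (C u) (C v) := by
  intro N
  induction N with
  | zero =>
    intro dem L hsum hinv
    have hz : ∀ v, dem v = 0 := by
      intro v
      have := Finset.single_le_sum (f := dem) (fun i _ => Nat.zero_le _) (mem_univ v)
      omega
    exact ⟨fun _ => ∅, fun v => empty_subset _, fun v => by simp [hz v], fun u v _ => by simp⟩
  | succ N ih =>
    intro dem L hsum hinv
    by_cases h0 : ∑ v, dem v = 0
    · have hz : ∀ v, dem v = 0 := by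
        intro v
        have := Finset.single_le_sum (f := dem) (fun i _ => Nat.zero_le _) (mem_univ v)
        omega
      exact ⟨fun _ => ∅, fun v => empty_subset _, fun v => by simp [hz v], fun u v _ => by simp⟩
    · obtain ⟨v₀, hv₀⟩ : ∃ v, dem v ≠ 0 := by
        by_contra h; push_neg at h
        exact h0 (Finset.sum_eq_zero fun v _ => h v)
      have hcard0 : 0 < (L v₀).card := by have := hinv v₀; omega
      obtain ⟨c, hc⟩ := Finset.card_pos.1 hcard0
      set T : Set V := {v | dem v ≠ 0 ∧ c ∈ L v} with hT
      set R : V → V → Prop := fun u v => D u v ∧ u ∈ T ∧ v ∈ T with hRdef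
      obtain ⟨K, hKT, hKind, hKabs⟩ := kernel_lemma col R T
        (fun u v h => ⟨h.2.1, h.2.2, hcol u v (hDG u v h.1)⟩)
      have hKdem : ∀ v ∈ K, 1 ≤ dem v := fun v hv => Nat.one_le_iff_ne_zero.2 (hKT hv).1
      have hKc : ∀ v ∈ K, c ∈ L v := fun v hv => (hKT hv).2
      set dem' : V → ℕ := fun v => if v ∈ K then dem v - 1 else dem v with hdem'
      set L' : V → Finset ℕ := fun v => if v ∈ T then (L v).erase c else L v with hL'
      have hle : ∀ w, dem' w ≤ dem w := by
        intro w; simp only [hdem']; split <;> omega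
      have hsumle : ∀ s : Finset V, ∑ w ∈ s, dem' w ≤ ∑ w ∈ s, dem w :=
        fun s => Finset.sum_le_sum (fun w _ => hle w)
      have hL'sub : ∀ v, L' v ⊆ L v := by
        intro v; simp only [hL']; split
        · exact erase_subset _ _
        · exact subset_rfl
      have hK0 : K.Nonempty := by
        have hv₀T : v₀ ∈ T := ⟨hv₀, hc⟩
        by_cases hv₀K : v₀ ∈ K
        · exact ⟨v₀, hv₀K⟩
        · obtain ⟨w, hw, -⟩ := hKabs v₀ hv₀T hv₀K
          exact ⟨w, hw⟩
      have hsum' : ∑ v, dem' v ≤ N := by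
        obtain ⟨u, hu⟩ := hK0
        have hlt : ∑ v, dem' v < ∑ v, dem v := by
          refine Finset.sum_lt_sum (fun i _ => hle i) ⟨u, mem_univ u, ?_⟩
          have := hKdem u hu
          simp only [hdem', if_pos hu]; omega
        omega
      have hinv' : ∀ v, dem' v + ∑ w ∈ univ.filter (fun w => D v w), dem' w ≤ (L' v).card := by
        intro v
        have hinvv := hinv v
        by_cases hvT : v ∈ T
        · have hcv : c ∈ L v := hvT.2
          have hcardL : (L' v).card = (L v).card - 1 := by
            simp only [hL', if_pos hvT, card_erase_of_mem hcv]
          have hLpos : 1 ≤ (L v).card := card_pos.2 ⟨c, hcv⟩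
          by_cases hvK : v ∈ K
          · have h1 := hsumle (univ.filter (fun w => D v w))
            have h2 := hKdem v hvK
            have hdv : dem' v = dem v - 1 := by simp only [hdem', if_pos hvK]
            rw [hdv, hcardL]
            omega
          · obtain ⟨w, hwK, hRvw⟩ := hKabs v hvT hvK
            have hwmem : w ∈ univ.filter (fun w => D v w) := by
              simp only [mem_filter, mem_univ, true_and]; exact hRvw.1
            have hlt : ∑ x ∈ univ.filter (fun w => D v w), dem' x
                < ∑ x ∈ univ.filter (fun w => D v w), dem x := by
              refine Finset.sum_lt_sum (fun i _ => hle i) ⟨w, hwmem, ?_⟩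
              have := hKdem w hwK
              simp only [hdem', if_pos hwK]; omega
            have hdv : dem' v = dem v := by simp only [hdem', if_neg hvK]
            rw [hdv, hcardL]
            omega
        · have hvK : v ∉ K := fun h => hvT (hKT h)
          have h1 := hsumle (univ.filter (fun w => D v w))
          have hdv : dem' v = dem v := by simp only [hdem', if_neg hvK]
          have hcardL : L' v = L v := by simp only [hL', if_neg hvT]
          rw [hdv, hcardL]
          omega
      obtain ⟨C', hC'1, hC'2, hC'3⟩ := ih dem' L' hsum' hinv'
      have hcC' : ∀ x, x ∉ K → c ∉ C' x := by
        intro x hxK hcx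
        by_cases hxT : x ∈ T
        · have : c ∈ L' x := hC'1 x hcx
          simp only [hL', if_pos hxT] at this
          exact notMem_erase c _ this
        · have hx' : ¬ (dem x ≠ 0 ∧ c ∈ L x) := hxT
          push_neg at hx'
          by_cases hdx : dem x = 0
          · have : (C' x).card = dem' x := hC'2 x
            simp only [hdem', if_neg hxK, hdx] at this
            have := card_eq_zero.1 this
            rw [this] at hcx
            exact absurd hcx (notMem_empty c)
          · have : c ∈ L' x := hC'1 x hcx
            simp only [hL', if_neg hxT] at this
            exact (hx' hdx) this
      refine ⟨fun v => if v ∈ K then insert c (C' v) else C' v, ?_, ?_, ?_⟩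
      · intro v
        by_cases hvK : v ∈ K
        · simp only [if_pos hvK]
          exact insert_subset (hKc v hvK) ((hC'1 v).trans (hL'sub v))
        · simp only [if_neg hvK]
          exact (hC'1 v).trans (hL'sub v)
      · intro v
        by_cases hvK : v ∈ K
        · have hcnot : c ∉ C' v := by
            intro hcx
            have : c ∈ L' v := hC'1 v hcx
            simp only [hL', if_pos (hKT hvK)] at this
            exact notMem_erase c _ this
          have h2 := hC'2 v
          simp only [hdem', if_pos hvK] at h2
          have := hKdem v hvK
          simp only [if_pos hvK, card_insert_of_notMem hcnot, h2]
          omega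
        · have h2 := hC'2 v
          simp only [hdem', if_neg hvK] at h2
          simp only [if_neg hvK, h2]
      · intro u v huv
        have hnKK : ¬ (u ∈ K ∧ v ∈ K) := by
          rintro ⟨hu, hv⟩
          rcases hcover u v huv with h | h
          · exact hKind u hu v hv ⟨h, hKT hu, hKT hv⟩
          · exact hKind v hv u hu ⟨h, hKT hv, hKT hu⟩
        have hdisj := hC'3 u v huv
        by_cases huK : u ∈ K <;> by_cases hvK : v ∈ K
        · exact absurd ⟨huK, hvK⟩ hnKK
        · simp only [if_pos huK, if_neg hvK]
          exact Finset.disjoint_insert_left.2 ⟨hcC' v hvK, hdisj⟩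
        · simp only [if_neg huK, if_pos hvK]
          exact Finset.disjoint_insert_right.2 ⟨hcC' u huK, hdisj⟩
        · simp only [if_neg huK, if_neg hvK]; exact hdisj

lemma orient_lemma {V : Type*} [Fintype V] (G : SimpleGraph V) (d : ℕ)
    (hbound : ∀ H : G.Subgraph, H.verts.Nonempty → H.edgeSet.ncard ≤ d * H.verts.ncard) :
    ∃ D : V → V → Prop, (∀ u v, D u v → G.Adj u v) ∧
      (∀ u v, G.Adj u v → D u v ∨ D v u) ∧
      ∀ v, (univ.filter (fun w => D v w)).card ≤ d := by
  classical
  let ι := {e : Sym2 V // e ∈ G.edgeSet}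
  let t : ι → Finset (V × Fin d) := fun e => (univ.filter (· ∈ e.1)) ×ˢ univ
  have hall : ∀ s : Finset ι, s.card ≤ (s.biUnion t).card := by
    intro s
    rcases s.eq_empty_or_nonempty with rfl | hs
    · simp
    set Vs : Finset V := s.biUnion (fun e => univ.filter (· ∈ e.1)) with hVs
    set Es : Set (Sym2 V) := ↑(s.image Subtype.val) with hEs
    have hEsG : ∀ e ∈ Es, e ∈ G.edgeSet := by
      rintro e he
      simp only [hEs, coe_image, Set.mem_image, mem_coe] at he
      obtain ⟨e', -, rfl⟩ := he
      exact e'.2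
    set H : G.Subgraph :=
      { verts := ↑Vs
        Adj := fun u v => s(u, v) ∈ Es
        adj_sub := fun {u v} h => (SimpleGraph.mem_edgeSet G).1 (hEsG _ h)
        edge_vert := by
          intro u v h
          simp only [hEs, coe_image, Set.mem_image, mem_coe] at h
          obtain ⟨e', he', hee⟩ := h
          simp only [hVs, coe_biUnion, Set.mem_iUnion, mem_coe, mem_filter, mem_univ,
            true_and]
          exact ⟨e', he', by rw [hee]; exact Sym2.mem_mk_left u v⟩
        symm := by
          refine ⟨fun u v h => ?_⟩
          rwa [Sym2.eq_swap] at h } with hH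
    have hHedge : H.edgeSet = Es := by
      ext e
      induction e using Sym2.ind with
      | _ u v =>
        rw [SimpleGraph.Subgraph.mem_edgeSet]
    have hcard1 : H.edgeSet.ncard = s.card := by
      rw [hHedge, hEs, Set.ncard_coe_finset,
        Finset.card_image_of_injective _ Subtype.val_injective]
    have hverts : H.verts.ncard = Vs.card := by
      rw [show H.verts = ↑Vs from rfl, Set.ncard_coe_finset]
    have hVsne : H.verts.Nonempty := by
      obtain ⟨e, he⟩ := hs
      refine ⟨e.1.out.1, ?_⟩
      show e.1.out.1 ∈ (↑Vs : Set V)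
      simp only [hVs, coe_biUnion, Set.mem_iUnion, mem_coe, mem_filter, mem_univ, true_and]
      exact ⟨e, he, Sym2.out_fst_mem e.1⟩
    have := hbound H hVsne
    have hsVs : s.card ≤ d * Vs.card := by rw [← hcard1, ← hverts]; exact this
    have hbU : s.biUnion t = Vs ×ˢ univ := by
      ext ⟨x, j⟩
      simp only [mem_biUnion, mem_product, mem_univ, and_true, t, mem_filter, true_and, hVs]
    rw [hbU, card_product, card_univ, Fintype.card_fin]
    calc s.card ≤ d * Vs.card := hsVs
      _ = Vs.card * d := Nat.mul_comm _ _
  obtain ⟨f, hfinj, hf⟩ := (Finset.all_card_le_biUnion_card_iff_exists_injective t).1 hall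
  have hf1 : ∀ e : ι, (f e).1 ∈ e.1 := by
    intro e
    have := hf e
    simp only [t, mem_product, mem_filter, mem_univ, true_and, and_true] at this
    exact this
  refine ⟨fun u v => ∃ h : s(u, v) ∈ G.edgeSet, (f ⟨s(u, v), h⟩).1 = u, ?_, ?_, ?_⟩
  · rintro u v ⟨h, -⟩
    exact (SimpleGraph.mem_edgeSet G).1 h
  · intro u v huv
    have he : s(u, v) ∈ G.edgeSet := (SimpleGraph.mem_edgeSet G).2 huv
    rcases (Sym2.mem_iff).1 (hf1 ⟨s(u, v), he⟩) with h | h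
    · exact Or.inl ⟨he, h⟩
    · refine Or.inr ⟨(Sym2.eq_swap (a := v) (b := u)) ▸ he, ?_⟩
      have hsub : (⟨s(v, u), (Sym2.eq_swap (a := v) (b := u)) ▸ he⟩ : ι)
          = ⟨s(u, v), he⟩ := Subtype.ext (Sym2.eq_swap)
      rw [hsub]
      exact h
  · intro v
    set Dv : Finset V := univ.filter
      (fun w => ∃ h : s(v, w) ∈ G.edgeSet, (f ⟨s(v, w), h⟩).1 = v) with hDv
    have : Dv.card ≤ ((univ : Finset (Fin d)).image Fin.castSucc).card := by
      refine Finset.card_le_card_of_injOn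
        (fun u => if h : s(v, u) ∈ G.edgeSet then (f ⟨s(v, u), h⟩).2.castSucc
          else Fin.last d) ?_ ?_
      · intro u hu
        simp only [hDv, mem_coe, mem_filter] at hu
        obtain ⟨-, h, -⟩ := hu
        dsimp only
        rw [dif_pos h]
        exact mem_image_of_mem _ (mem_univ _)
      · intro u₁ h₁ u₂ h₂ heq
        simp only [hDv, coe_filter, Set.mem_setOf_eq, mem_univ, true_and] at h₁ h₂
        obtain ⟨he₁, hv₁⟩ := h₁
        obtain ⟨he₂, hv₂⟩ := h₂
        dsimp only at heq
        rw [dif_pos he₁, dif_pos he₂] at heq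
        have h2 : (f ⟨s(v, u₁), he₁⟩).2 = (f ⟨s(v, u₂), he₂⟩).2 :=
          Fin.castSucc_injective d heq
        have hfe : f ⟨s(v, u₁), he₁⟩ = f ⟨s(v, u₂), he₂⟩ :=
          Prod.ext (hv₁.trans hv₂.symm) h2
        have := hfinj hfe
        have hsym : s(v, u₁) = s(v, u₂) := Subtype.ext_iff.1 this
        exact (Sym2.congr_right).1 hsym
    rw [card_image_of_injective _ (Fin.castSucc_injective d), card_univ,
      Fintype.card_fin] at this
    convert this using 2
    rw [hDv]
    ext w
    simp only [mem_filter]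

end AuxChoosable

theorem bipartite_choosable_ceil_M {V : Type*} [Fintype V] (G : SimpleGraph V)
    (hbip : G.Colorable 2) (M : ℝ)
    (hM : IsGreatest {x : ℝ | ∃ H : G.Subgraph, H.verts.Nonempty ∧
        x = (H.edgeSet.ncard : ℝ) / (H.verts.ncard : ℝ)} M)
    (k : ℕ) (hk : 0 < k) :
    G.Choosable (k * (⌈M⌉₊ + 1)) k := by
  classical
  intro S hS
  set d : ℕ := ⌈M⌉₊ with hd
  have hbound : ∀ H : G.Subgraph, H.verts.Nonempty → H.edgeSet.ncard ≤ d * H.verts.ncard := by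
    intro H hH
    have hx : ((H.edgeSet.ncard : ℝ) / (H.verts.ncard : ℝ)) ≤ M := hM.2 ⟨H, hH, rfl⟩
    have hvfin : H.verts.Finite := H.verts.toFinite
    have hv : 0 < H.verts.ncard := (Set.ncard_pos hvfin).2 hH
    have hv' : (0 : ℝ) < (H.verts.ncard : ℝ) := by exact_mod_cast hv
    have hMd : M ≤ (d : ℝ) := Nat.le_ceil M
    rw [div_le_iff₀ hv'] at hx
    have hreal : (H.edgeSet.ncard : ℝ) ≤ (d : ℝ) * (H.verts.ncard : ℝ) := by
      calc (H.edgeSet.ncard : ℝ) ≤ M * (H.verts.ncard : ℝ) := hx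
        _ ≤ (d : ℝ) * (H.verts.ncard : ℝ) := by
          exact mul_le_mul_of_nonneg_right hMd (le_of_lt hv')
    exact_mod_cast hreal
  obtain ⟨D, hDG, hcover, hdeg⟩ := orient_lemma G d hbound
  let col : G.Coloring (Fin 2) := hbip.some
  have hcol : ∀ u v, G.Adj u v → col u ≠ col v := fun u v h => col.valid h
  have hinv : ∀ v, (fun _ : V => k) v +
      ∑ w ∈ Finset.univ.filter (fun w => D v w), (fun _ : V => k) w ≤ (S v).card := by
    intro v
    have h1 : ∑ w ∈ Finset.univ.filter (fun w => D v w), k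
        = (Finset.univ.filter (fun w => D v w)).card * k := by
      rw [Finset.sum_const, smul_eq_mul]
    have h2 := hdeg v
    rw [hS v]
    calc k + ∑ w ∈ Finset.univ.filter (fun w => D v w), k
        = k + (Finset.univ.filter (fun w => D v w)).card * k := by rw [h1]
      _ ≤ k + d * k := by
          have := Nat.mul_le_mul_right k h2
          omega
      _ = k * (d + 1) := by ring
  obtain ⟨C, h1, h2, h3⟩ := color_lemma G (fun v => col v) hcol D hDG hcover
    (∑ _v : V, k) (fun _ => k) S le_rfl hinv
  exact ⟨C, h1, h2, h3⟩
end

section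
/- If every induced subgraph of a finite simple graph G has a vertex of degree at most d (i.e., G is d-degenerate), then G is (k(d+1):k)-choosable for every positive integer k. -/
theorem degenerate_choosable {V : Type*} [Fintype V] (G : SimpleGraph V) (d : ℕ)
    (hdeg : ∀ A : Set V, A.Nonempty → ∃ v ∈ A, {u ∈ A | G.Adj v u}.ncard ≤ d)
    (k : ℕ) (hk : 0 < k) :
    G.Choosable (k * (d + 1)) k := by
  classical
  intro S hS
  suffices h : ∀ A : Finset V, ∃ C : V → Finset ℕ, (∀ v ∈ A, C v ⊆ S v) ∧
      (∀ v ∈ A, (C v).card = k) ∧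
      ∀ u ∈ A, ∀ v ∈ A, G.Adj u v → Disjoint (C u) (C v) by
    obtain ⟨C, h1, h2, h3⟩ := h Finset.univ
    exact ⟨C, fun v => h1 v (Finset.mem_univ v), fun v => h2 v (Finset.mem_univ v),
      fun u v huv => h3 u (Finset.mem_univ u) v (Finset.mem_univ v) huv⟩
  intro A
  induction A using Finset.strongInduction with
  | _ A ih =>
    rcases A.eq_empty_or_nonempty with rfl | hne
    · exact ⟨fun _ => ∅, by simp, by simp, by simp⟩
    · obtain ⟨v, hvA, hvd⟩ := hdeg ↑A (by exact_mod_cast hne)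
      obtain ⟨C, h1, h2, h3⟩ := ih (A.erase v) (Finset.erase_ssubset hvA)
      set N := (A.erase v).filter (G.Adj v) with hN
      have hNd : N.card ≤ d := by
        have hsub : (N : Set V) ⊆ {u ∈ (↑A : Set V) | G.Adj v u} := by
          intro u hu
          simp only [hN, Finset.coe_filter, Set.mem_setOf_eq] at hu ⊢
          exact ⟨Finset.mem_of_mem_erase hu.1, hu.2⟩
        calc N.card = (N : Set V).ncard := (Set.ncard_coe_finset N).symm
          _ ≤ {u ∈ (↑A : Set V) | G.Adj v u}.ncard :=
              Set.ncard_le_ncard hsub (Set.toFinite _)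
          _ ≤ d := hvd
      set T := N.biUnion C with hT
      have hTcard : T.card ≤ k * d := by
        calc T.card ≤ ∑ u ∈ N, (C u).card := Finset.card_biUnion_le
          _ ≤ ∑ _u ∈ N, k := Finset.sum_le_sum
              (fun u hu => le_of_eq (h2 u (Finset.mem_of_mem_filter u hu)))
          _ = N.card * k := by rw [Finset.sum_const, smul_eq_mul]
          _ ≤ d * k := Nat.mul_le_mul_right k hNd
          _ = k * d := Nat.mul_comm d k
      have hSv : (S v).card = k * d + k := by rw [hS v]; ring
      have hk' : k ≤ (S v \ T).card := by
        have h1' : (S v).card - T.card ≤ (S v \ T).card := Finset.le_card_sdiff T (S v)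
        omega
      obtain ⟨Cv, hCv_sub, hCv_card⟩ := Finset.exists_subset_card_eq hk'
      refine ⟨Function.update C v Cv, ?_, ?_, ?_⟩
      · intro u hu
        by_cases huv : u = v
        · subst huv
          rw [Function.update_self]
          exact hCv_sub.trans (Finset.sdiff_subset)
        · rw [Function.update_of_ne huv]
          exact h1 u (Finset.mem_erase.2 ⟨huv, hu⟩)
      · intro u hu
        by_cases huv : u = v
        · subst huv; rw [Function.update_self]; exact hCv_card
        · rw [Function.update_of_ne huv]
          exact h2 u (Finset.mem_erase.2 ⟨huv, hu⟩)
      · intro u hu w hw hadj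
        have key : ∀ w' ∈ A, G.Adj v w' → w' ≠ v →
            Disjoint Cv (C w') := by
          intro w' hw' hadj' hne'
          have hwN : w' ∈ N := Finset.mem_filter.2 ⟨Finset.mem_erase.2 ⟨hne', hw'⟩, hadj'⟩
          have : C w' ⊆ T := Finset.subset_biUnion_of_mem C hwN
          exact Finset.sdiff_disjoint.mono hCv_sub this
        by_cases huv : u = v
        · have hadj' : G.Adj v w := huv ▸ hadj
          have hwv : w ≠ v := fun h => G.irrefl (h ▸ hadj')
          rw [huv, Function.update_self, Function.update_of_ne hwv]
          exact key w hw hadj' hwv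
        · by_cases hwv : w = v
          · have hadj' : G.Adj v u := hwv ▸ hadj.symm
            rw [hwv, Function.update_self, Function.update_of_ne huv]
            exact (key u hu hadj' huv).symm
          · rw [Function.update_of_ne huv, Function.update_of_ne hwv]
            exact h3 u (Finset.mem_erase.2 ⟨huv, hu⟩) w (Finset.mem_erase.2 ⟨hwv, hw⟩) hadj
end

section
/- If G is a finite triangulated (chordal) simple graph, i.e., G contains no induced cycle C_n for any n ≥ 4, then ch_k(G) = k·χ(G) = k·ω(G) for every positive integer k, where χ(G) is the chromatic number and ω(G) is the clique number of G. -/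
namespace ChordalAux
open SimpleGraph List
variable {V : Type*} {G : SimpleGraph V}

def StepIn (G : SimpleGraph V) (t : Set V) (x y : V) : Prop := G.Adj x y ∧ x ∈ t ∧ y ∈ t

def RIn (G : SimpleGraph V) (t : Set V) : V → V → Prop := Relation.ReflTransGen (StepIn G t)

def Wok (G : SimpleGraph V) (u v : V) (A : Set V) (W : List V) : Prop :=
  2 ≤ W.length ∧ (∀ i (h : i + 1 < W.length), G.Adj W[i] W[i+1]) ∧
  (∀ (h : 0 < W.length), W[0] = u) ∧
  (∀ (h : 0 < W.length), W[W.length - 1] = v) ∧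
  (∀ i (h : i < W.length), 0 < i → i + 1 < W.length → W[i] ∈ A)

lemma gE (l : List V) {a b : ℕ} (hab : a = b) (h : a < l.length) :
    l[a]'h = l[b]'(hab ▸ h) := by subst hab; rfl

lemma RIn.refl {t : Set V} {x : V} : RIn G t x x := Relation.ReflTransGen.refl

lemma RIn.symm {t : Set V} {x y : V} (h : RIn G t x y) : RIn G t y x :=
  (@Relation.ReflTransGen.symmetric _ (StepIn G t) ⟨fun _ _ h => ⟨h.1.symm, h.2.2, h.2.1⟩⟩).symm _ _ h

lemma RIn.trans {t : Set V} {x y z : V} (h : RIn G t x y) (h' : RIn G t y z) : RIn G t x z :=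
  Relation.ReflTransGen.trans h h'

lemma RIn.mono {t t' : Set V} (hst : t ⊆ t') {x y : V} (h : RIn G t x y) : RIn G t' x y :=
  Relation.ReflTransGen.mono (fun _ _ hr => ⟨hr.1, hst hr.2.1, hst hr.2.2⟩) _ _ h

lemma RIn.mem_right {t : Set V} {x y : V} (h : RIn G t x y) : x = y ∨ y ∈ t := by
  rcases h.cases_tail with h | ⟨b, _, hs⟩
  · exact Or.inl h.symm
  · exact Or.inr hs.2.2

lemma splice {u v : V} {A : Set V} {W : List V} (hW : Wok G u v A W)
    {a b : ℕ} (ha : 1 ≤ a) (hab : a < b) (hb : b < W.length)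
    (hadj : G.Adj (W[a-1]'(by omega)) (W[b]'hb)) :
    Wok G u v A (W.take a ++ W.drop b) ∧
      (W.take a ++ W.drop b).length = a + (W.length - b) := by
  obtain ⟨hlen, hchain, h0, hl, hA⟩ := hW
  have hlen' : (W.take a ++ W.drop b).length = a + (W.length - b) := by
    simp [List.length_append, List.length_take, List.length_drop]; omega
  have hget : ∀ i (h : i < (W.take a ++ W.drop b).length),
      (W.take a ++ W.drop b)[i] = if h' : i < a then W[i]'(by omega) else W[b + (i - a)]'(by omega) := by
    intro i h
    split_ifs with h'
    · rw [List.getElem_append_left (by simp [List.length_take]; omega)]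
      exact List.getElem_take
    · rw [List.getElem_append_right (by simp [List.length_take]; omega)]
      simp only [List.getElem_drop, List.length_take]
      congr 1; omega
  refine ⟨⟨by omega, ?_, ?_, ?_, ?_⟩, hlen'⟩
  · intro i h
    rw [hget i (by omega), hget (i+1) h]
    rcases lt_trichotomy (i+1) a with h1 | h1 | h1
    · rw [dif_pos (by omega), dif_pos h1]; exact hchain i (by omega)
    · rw [dif_pos (by omega), dif_neg (by omega)]
      convert hadj using 2 <;> omega
    · rw [dif_neg (by omega), dif_neg (by omega)]
      have e1 : b + (i + 1 - a) = (b + (i - a)) + 1 := by omega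
      have := hchain (b + (i - a)) (by omega)
      convert this using 2 <;> omega
  · intro h; rw [hget 0 h, dif_pos (by omega)]; exact h0 (by omega)
  · intro h
    rw [hget _ (by omega), dif_neg (by omega)]
    convert hl (by omega) using 2
    omega
  · intro i h hi0 hi1
    rw [hget i h]
    split_ifs with h'
    · exact hA i (by omega) hi0 (by omega)
    · exact hA _ (by omega) (by omega) (by omega)


def IndW (G : SimpleGraph V) (u v : V) (A : Set V) (W : List V) : Prop :=
  3 ≤ W.length ∧ W.Nodup ∧
  (∀ i (h : i + 1 < W.length), G.Adj W[i] W[i+1]) ∧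
  (∀ i j (hj : j < W.length) (hij : i + 1 < j), ¬ G.Adj (W[i]'(by omega)) W[j]) ∧
  (∀ (h : 0 < W.length), W[0] = u) ∧
  (∀ (h : 0 < W.length), W[W.length - 1] = v) ∧
  (∀ i (h : i < W.length), 0 < i → i + 1 < W.length → W[i] ∈ A)

theorem exists_indW {u v : V} {A : Set V} (huA : u ∉ A) (hvA : v ∉ A)
    (huv : u ≠ v) (hnadj : ¬ G.Adj u v) (hex : ∃ W, Wok G u v A W) :
    ∃ W, IndW G u v A W := by
  classical
  have hne : {n | ∃ W, Wok G u v A W ∧ W.length = n}.Nonempty := by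
    obtain ⟨W, hW⟩ := hex; exact ⟨W.length, W, hW, rfl⟩
  obtain ⟨W, hW, hWlen⟩ := Nat.sInf_mem hne
  have hmin : ∀ W', Wok G u v A W' → W.length ≤ W'.length := by
    intro W' hW'
    rw [hWlen]; exact Nat.sInf_le ⟨W', hW', rfl⟩
  obtain ⟨hlen, hchain, h0, hl, hA⟩ := hW
  -- distinctness of entries
  have hinj : ∀ i j (hi : i < W.length) (hj : j < W.length), i < j → W[i] ≠ W[j] := by
    intro i j hi hj hij heq
    have hi1 : 1 ≤ i := by
      rcases Nat.eq_zero_or_pos i with rfl | h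
      · exfalso
        rcases Nat.lt_or_ge (j+1) W.length with hj1 | hj1
        · have hmem := hA j hj (by omega) hj1
          rw [← heq, h0 (by omega)] at hmem
          exact huA hmem
        · have hjl : j = W.length - 1 := by omega
          have hv : W[j] = v := by
            have h2 := hl (by omega); convert h2 using 2 <;> omega
          rw [hv, h0 (by omega)] at heq
          exact huv heq
      · exact h
    have hj1 : j + 1 < W.length := by
      rcases Nat.lt_or_ge (j+1) W.length with h | h
      · exact h
      · exfalso
        rcases Nat.lt_or_ge (i+1) W.length with h2 | h2
        · have hv : W[j] = v := by
            have h3 := hl (by omega); convert h3 using 2 <;> omega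
          have hmem := hA i (by omega) (by omega) h2
          rw [heq, hv] at hmem
          exact hvA hmem
        · omega
    have hadj : G.Adj (W[i]'(by omega)) (W[j+1]'(by omega)) := by
      have := hchain j (by omega); rwa [heq]
    have hsp := (splice ⟨hlen, hchain, h0, hl, hA⟩ (a := i+1) (b := j+1)
      (by omega) (by omega) (by omega) (by simpa using hadj))
    have h2 := hmin _ hsp.1
    rw [hsp.2] at h2
    omega
  have hnodup : W.Nodup := by
    rw [List.nodup_iff_injective_get]
    intro a b hab
    by_contra hne'
    rcases Nat.lt_or_ge a.1 b.1 with h | h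
    · exact hinj a.1 b.1 a.2 b.2 h (by simpa using hab)
    · have : b.1 < a.1 := by
        rcases Nat.lt_or_ge b.1 a.1 with h' | h'
        · exact h'
        · exact absurd (Fin.ext (le_antisymm h' h)) hne'
      exact hinj b.1 a.1 b.2 a.2 this (by simpa using hab.symm)
  have hnochord : ∀ i j (hj : j < W.length) (hij : i + 1 < j), ¬ G.Adj (W[i]'(by omega)) W[j] := by
    intro i j hj hij hadj
    have := (splice ⟨hlen, hchain, h0, hl, hA⟩ (a := i+1) (b := j)
      (by omega) (by omega) (by omega) (by simpa using hadj))
    have h2 := hmin _ this.1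
    rw [this.2] at h2
    omega
  have h3 : 3 ≤ W.length := by
    rcases Nat.lt_or_ge W.length 3 with h | h
    · exfalso
      have : W.length = 2 := by omega
      have := hchain 0 (by omega)
      rw [h0 (by omega)] at this
      have h1 : W[1]'(by omega) = v := by
        have h2 := hl (by omega); convert h2 using 2 <;> omega
      rw [h1] at this
      exact hnadj this
    · exact h
  exact ⟨W, h3, hnodup, hchain, hnochord, h0, hl, hA⟩

lemma IndW.adj_iff {u v : V} {A : Set V} {W : List V} (h : IndW G u v A W)
    {i j : ℕ} (hi : i < W.length) (hj : j < W.length) (hij : i < j) :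
    G.Adj W[i] W[j] ↔ j = i + 1 := by
  constructor
  · intro hadj
    by_contra hne
    exact h.2.2.2.1 i j hj (by omega) hadj
  · rintro rfl
    exact h.2.2.1 i (by omega)

/-- build a cycle embedding from a list whose adjacencies are exactly cyclic-consecutive -/
lemma cycle_of_list (L : List V) {n : ℕ} (hn : L.length = n + 2) (h4 : 4 ≤ L.length)
    (hnd : L.Nodup)
    (hcore : ∀ i j (hi : i < L.length) (hj : j < L.length), i < j →
      (G.Adj L[i] L[j] ↔ (j = i + 1 ∨ (i = 0 ∧ j = L.length - 1)))) :
    Nonempty (cycleGraph (n+2) ↪g G) := by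
  have hlen : L.length = n + 2 := hn
  -- mod characterization
  have hmod : ∀ x y : ℕ, x < n + 2 → y < n + 2 →
      (x = (y + 1) % (n + 2) ↔ (x = y + 1 ∨ (y = n + 1 ∧ x = 0))) := by
    intro x y hx hy
    rcases Nat.lt_or_ge (y + 1) (n + 2) with h | h
    · rw [Nat.mod_eq_of_lt h]; omega
    · have : y + 1 = n + 2 := by omega
      rw [this, Nat.mod_self]; omega
  have hsub : ∀ i j : Fin (n+2), (i - j = 1 ↔ (i : ℕ) = ((j : ℕ) + 1) % (n + 2)) := by
    intro i j
    rw [sub_eq_iff_eq_add']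
    rw [Fin.ext_iff, Fin.val_add, Fin.val_one]
  have hbd : ∀ i : Fin (n+2), (i : ℕ) < L.length := fun i => by
    have := i.isLt; omega
  have hgetinj : ∀ i j : Fin (n+2), L[(i:ℕ)]'(hbd i) = L[(j:ℕ)]'(hbd j) → i = j := by
    intro i j hij
    have hinj := List.nodup_iff_injective_get.mp hnd
    have := @hinj ⟨(i : ℕ), hbd i⟩ ⟨(j : ℕ), hbd j⟩ (by simpa using hij)
    simpa [Fin.ext_iff] using this
  refine ⟨⟨⟨fun i => L[(i:ℕ)]'(hbd i), ?_⟩, ?_⟩⟩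
  · intro i j hij
    exact hgetinj i j hij
  intro i j
  simp only [Function.Embedding.coeFn_mk, cycleGraph_adj]
  show G.Adj (L[(i:ℕ)]'(hbd i)) (L[(j:ℕ)]'(hbd j)) ↔ _
  rw [hsub i j, hsub j i, hmod i j i.isLt j.isLt, hmod j i j.isLt i.isLt]
  rcases lt_trichotomy (i : ℕ) (j : ℕ) with h | h | h
  · rw [hcore i j (hbd i) (hbd j) h]
    have hi := i.isLt; have hj := j.isLt
    omega
  · have : i = j := Fin.ext h
    subst this
    simp only [SimpleGraph.irrefl, false_iff]
    have hi := i.isLt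
    omega
  · rw [G.adj_comm, hcore j i (hbd j) (hbd i) h]
    have hi := i.isLt; have hj := j.isLt
    omega

theorem glue {u v : V} {A B : Set V} {P Q : List V}
    (hP : IndW G u v A P) (hQ : IndW G u v B Q)
    (hABadj : ∀ x ∈ A, ∀ y ∈ B, ¬ G.Adj x y)
    (hABdisj : ∀ x ∈ A, x ∉ B)
    (huA : u ∉ A) (huB : u ∉ B) (hvA : v ∉ A) (hvB : v ∉ B) :
    ∃ n, 4 ≤ n ∧ Nonempty (cycleGraph n ↪g G) := by
  obtain ⟨hp3, hPnd, hPchain, hPnoc, hPu, hPv, hPA⟩ := id hP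
  obtain ⟨hq3, hQnd, hQchain, hQnoc, hQu, hQv, hQB⟩ := id hQ
  set R : List V := ((Q.drop 1).dropLast).reverse with hR
  set L : List V := P ++ R with hL
  have hRlen : R.length = Q.length - 2 := by
    simp [hR]
    omega
  have hm : L.length = P.length + (Q.length - 2) := by
    simp [hL, hRlen]
  have hgetR : ∀ t (h : t < R.length), R[t] = Q[Q.length - 2 - t]'(by omega) := by
    intro t h
    simp only [hR, List.getElem_reverse, List.getElem_dropLast, List.getElem_drop,
      List.length_dropLast, List.length_drop]
    apply gE
    simp only [hR, List.length_reverse, List.length_dropLast, List.length_drop] at h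
    omega
  have hgetP : ∀ i (h : i < P.length), L[i]'(by rw [hm]; omega) = P[i] := by
    intro i h
    exact List.getElem_append_left h
  have hgetQ : ∀ j (h1 : P.length ≤ j) (h2 : j < L.length),
      L[j]'h2 = Q[Q.length - 2 - (j - P.length)]'(by omega) := by
    intro j h1 h2
    have e1 : L[j]'h2 = R[j - P.length]'(by rw [hRlen]; rw [hm] at h2; omega) :=
      List.getElem_append_right h1
    rw [e1]
    exact hgetR _ (by rw [hRlen]; rw [hm] at h2; omega)
  -- interior membership of Q elements:
  have hQint : ∀ t (h : t < Q.length), 0 < t → t + 1 < Q.length → Q[t] ∈ B := hQB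
  -- nodup of L
  have hmemR : ∀ x ∈ R, x ∈ B := by
    intro x hx
    obtain ⟨t, ht, rfl⟩ := List.mem_iff_getElem.mp hx
    rw [hgetR t ht]
    exact hQB _ (by omega) (by omega) (by omega)
  have hmemP : ∀ x ∈ P, x = u ∨ x = v ∨ x ∈ A := by
    intro x hx
    obtain ⟨t, ht, rfl⟩ := List.mem_iff_getElem.mp hx
    rcases Nat.eq_zero_or_pos t with rfl | ht0
    · exact Or.inl (hPu (by omega))
    rcases Nat.lt_or_ge (t+1) P.length with ht1 | ht1
    · exact Or.inr (Or.inr (hPA t ht ht0 ht1))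
    · have : t = P.length - 1 := by omega
      subst this
      exact Or.inr (Or.inl (hPv (by omega)))
  have hLnd : L.Nodup := by
    rw [hL]
    refine List.Nodup.append hPnd ?_ ?_
    · rw [hR, List.nodup_reverse]
      exact hQnd.sublist ((List.dropLast_sublist _).trans (List.drop_sublist _ _))
    · intro x hxP hxR
      have hxB := hmemR x hxR
      rcases hmemP x hxP with rfl | rfl | hxA
      · exact huB hxB
      · exact hvB hxB
      · exact hABdisj x hxA hxB
  -- the core adjacency characterization
  have hcore : ∀ i j (hi : i < L.length) (hj : j < L.length), i < j →
      (G.Adj L[i] L[j] ↔ (j = i + 1 ∨ (i = 0 ∧ j = L.length - 1))) := by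
    intro i j hi hj hij
    rcases Nat.lt_or_ge j P.length with hjP | hjP
    · -- both in P
      rw [hgetP i (by omega), hgetP j (by omega)]
      rw [hP.adj_iff (by omega) (by omega) hij]
      omega
    rcases Nat.lt_or_ge i P.length with hiP | hiP
    · -- i in P, j in R; let jq be the Q-index of L[j]
      rw [hgetP i (by omega), hgetQ j hjP hj]
      set jq := Q.length - 2 - (j - P.length) with hjq
      have hjq1 : 1 ≤ jq := by omega
      have hjq2 : jq ≤ Q.length - 2 := by omega
      rcases Nat.eq_zero_or_pos i with rfl | hi0
      · -- L[i] = u = Q[0]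
        rw [hPu (by omega), ← hQu (by omega)]
        rw [hQ.adj_iff (i := 0) (j := jq) (by omega) (by omega) (by omega)]
        omega
      rcases Nat.lt_or_ge (i+1) P.length with hi1 | hi1
      · -- L[i] interior of P
        have hAi : P[i]'(by omega) ∈ A := hPA i (by omega) hi0 hi1
        have hBj : Q[jq]'(by omega) ∈ B := hQB jq (by omega) (by omega) (by omega)
        constructor
        · intro hadj
          exact absurd hadj (hABadj _ hAi _ hBj)
        · intro hcases
          exfalso
          omega
      · -- i = P.length - 1, L[i] = v = Q[Q.length - 1]
        have hiv : i = P.length - 1 := by omega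
        subst hiv
        rw [hPv (by omega), ← hQv (by omega), G.adj_comm]
        rw [hQ.adj_iff (i := jq) (j := Q.length - 1) (by omega) (by omega) (by omega)]
        omega
    · -- both in R
      rw [hgetQ i hiP hi, hgetQ j hjP hj]
      set iq := Q.length - 2 - (i - P.length) with hiq
      set jq := Q.length - 2 - (j - P.length) with hjq
      have hlt : jq < iq := by omega
      rw [G.adj_comm]
      rw [hQ.adj_iff (i := jq) (j := iq) (by omega) (by omega) hlt]
      omega
  have h4 : 4 ≤ L.length := by omega
  obtain ⟨n, hn⟩ : ∃ n, L.length = n + 2 := ⟨L.length - 2, by omega⟩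
  exact ⟨n + 2, by omega, cycle_of_list L hn h4 hLnd hcore⟩

def WalkList (r : V → V → Prop) (x y : V) (L : List V) : Prop :=
  1 ≤ L.length ∧ (∀ (h : 0 < L.length), L[0] = x) ∧
  (∀ (h : 0 < L.length), L[L.length-1] = y) ∧
  (∀ i (h : i + 1 < L.length), r L[i] L[i+1])

lemma rtg_walkList {r : V → V → Prop} {x y : V} (h : Relation.ReflTransGen r x y) :
    ∃ L, WalkList r x y L ∧ ∀ z ∈ L, Relation.ReflTransGen r x z := by
  induction h with
  | refl =>
    refine ⟨[x], ⟨by simp, by simp, by simp, by simp⟩, ?_⟩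
    intro z hz
    simp at hz
    subst hz
    exact Relation.ReflTransGen.refl
  | @tail b c hxb hbc ih =>
    obtain ⟨L, ⟨h1, h2, h3, h4⟩, h5⟩ := ih
    refine ⟨L ++ [c], ⟨by simp, ?_, ?_, ?_⟩, ?_⟩
    · intro h
      rw [List.getElem_append_left (by omega)]
      exact h2 (by omega)
    · intro h
      have e : (L ++ [c]).length - 1 = L.length := by simp
      rw [gE _ e]
      exact List.getElem_concat_length rfl _
    · intro i hi
      simp only [List.length_append, List.length_singleton] at hi
      rcases Nat.lt_or_ge (i+1) L.length with h' | h'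
      · rw [List.getElem_append_left (by omega), List.getElem_append_left (by omega)]
        exact h4 i h'
      · have e1 : i + 1 = L.length := by omega
        rw [List.getElem_append_left (by omega)]
        rw [gE _ e1]
        rw [List.getElem_concat_length rfl]
        have hb : L[i]'(by omega) = b := by
          rw [gE L (show i = L.length - 1 by omega)]
          exact h3 (by omega)
        rw [hb]
        exact hbc
    · intro z hz
      rcases List.mem_append.mp hz with h' | h'
      · exact h5 z h'
      · simp at h'
        subst h'
        exact hxb.tail hbc

lemma wok_sandwich {u v x x' : V} {A : Set V} {L : List V} {r : V → V → Prop}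
    (hr : ∀ a b, r a b → G.Adj a b)
    (hL : WalkList r x x' L) (hmem : ∀ z ∈ L, z ∈ A)
    (hux : G.Adj u x) (hx'v : G.Adj x' v) :
    Wok G u v A (u :: (L ++ [v])) := by
  obtain ⟨h1, h2, h3, h4⟩ := hL
  have hlen : (u :: (L ++ [v])).length = L.length + 2 := by simp
  have hget0 : ∀ (h : 0 < (u :: (L ++ [v])).length), (u :: (L ++ [v]))[0] = u := by
    intro h; rfl
  have hgetmid : ∀ i (h : i < L.length), (u :: (L ++ [v]))[i+1]'(by simp; omega) = L[i] := by
    intro i h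
    rw [List.getElem_cons_succ]
    exact List.getElem_append_left h
  have hgetlast : (u :: (L ++ [v]))[L.length + 1]'(by simp) = v := by
    rw [List.getElem_cons_succ]
    exact List.getElem_concat_length rfl _
  refine ⟨by omega, ?_, hget0, ?_, ?_⟩
  · intro i hi
    rw [hlen] at hi
    rcases Nat.eq_zero_or_pos i with rfl | hi0
    · rw [hget0 (by omega), hgetmid 0 (by omega), h2 (by omega)]
      exact hux
    rcases Nat.lt_or_ge i L.length with h' | h'
    · have e1 : i = (i - 1) + 1 := by omega
      rw [gE _ e1, hgetmid (i-1) (by omega)]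
      rw [hgetmid i h']
      have h6 := h4 (i-1) (by omega)
      rw [gE L (show i - 1 + 1 = i by omega)] at h6
      exact hr _ _ h6
    · have e1 : i = L.length := by omega
      subst e1
      have e2 : L.length = (L.length - 1) + 1 := by omega
      have hx'' : (u :: (L ++ [v]))[L.length]'(by simp) = x' := by
        rw [gE _ e2, hgetmid (L.length - 1) (by omega)]
        exact h3 (by omega)
      rw [hx'', hgetlast]
      exact hx'v
  · intro h
    have e : (u :: (L ++ [v])).length - 1 = L.length + 1 := by simp
    rw [gE _ e]
    exact hgetlast
  · intro i h hi0 hi1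
    rw [hlen] at h hi1
    have e1 : i = (i - 1) + 1 := by omega
    rw [gE _ e1, hgetmid (i-1) (by omega)]
    exact hmem _ (List.getElem_mem _)

/-- `v` is simplicial within `s` -/
def SimpIn (G : SimpleGraph V) (s : Finset V) (v : V) : Prop :=
  ∀ x ∈ s, ∀ y ∈ s, G.Adj v x → G.Adj v y → x = y ∨ G.Adj x y

theorem simplicial_rec (hch : ∀ n : ℕ, 4 ≤ n → IsEmpty (cycleGraph n ↪g G)) :
    ∀ N (s : Finset V), s.card ≤ N → s.Nonempty →
      ((∃ v ∈ s, SimpIn G s v) ∧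
       (∀ a ∈ s, ∀ b ∈ s, a ≠ b → ¬G.Adj a b →
         ∃ v ∈ s, ∃ w ∈ s, SimpIn G s v ∧ SimpIn G s w ∧ v ≠ w ∧ ¬G.Adj v w)) := by
  classical
  intro N
  induction N with
  | zero =>
    intro s hcard hne
    exfalso
    rw [Nat.le_zero, Finset.card_eq_zero] at hcard
    exact Finset.not_nonempty_empty (hcard ▸ hne)
  | succ N IH =>
    intro s hcard hne
    have part2 : ∀ a ∈ s, ∀ b ∈ s, a ≠ b → ¬G.Adj a b →
        ∃ v ∈ s, ∃ w ∈ s, SimpIn G s v ∧ SimpIn G s w ∧ v ≠ w ∧ ¬G.Adj v w := by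
      intro a ha b hb hab hnadj
      -- separators
      set P : Finset V → Prop := fun S => ¬ RIn G (↑s \ ↑S) a b with hPdef
      haveI : DecidablePred P := Classical.decPred P
      have hPfull : P ((s.erase a).erase b) := by
        intro hreach
        have hsub : (↑s \ ↑((s.erase a).erase b) : Set V) ⊆ {a, b} := by
          intro x hx
          obtain ⟨hxs, hx2⟩ := hx
          by_cases h1 : x = a
          · simp [h1]
          by_cases h2 : x = b
          · simp [h2]
          exact absurd (Finset.mem_coe.mpr
            (Finset.mem_erase.mpr ⟨h2, Finset.mem_erase.mpr ⟨h1, Finset.mem_coe.mp hxs⟩⟩)) hx2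
        -- every vertex reachable from a is a
        have key : ∀ z, RIn G (↑s \ ↑((s.erase a).erase b)) a z → z = a := by
          intro z hz
          induction hz with
          | refl => rfl
          | @tail c z hac hcz ih =>
            obtain ⟨hadj, hc, hz'⟩ := hcz
            rw [ih] at hadj
            rcases Set.mem_insert_iff.mp (hsub hz') with rfl | h
            · exact absurd hadj (G.irrefl)
            · rw [Set.mem_singleton_iff] at h; subst h; exact absurd hadj hnadj
        exact hab (key b hreach).symm
      -- minimal separator S
      set T := ((s.erase a).erase b).powerset.filter P with hT
      have hTne : T.Nonempty := ⟨(s.erase a).erase b,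
        Finset.mem_filter.mpr ⟨Finset.mem_powerset.mpr le_rfl, hPfull⟩⟩
      obtain ⟨S, hST, hSmin⟩ := T.exists_min_image Finset.card hTne
      rw [hT, Finset.mem_filter, Finset.mem_powerset] at hST
      obtain ⟨hSsub, hSsep⟩ := hST
      have haS : a ∉ S := fun h => by
        have := hSsub h; simp at this
      have hbS : b ∉ S := fun h => by
        have := hSsub h; simp at this
      have hSs : ∀ x ∈ S, x ∈ s := fun x h =>
        Finset.mem_of_mem_erase (Finset.mem_of_mem_erase (hSsub h))
      set t : Set V := ↑s \ ↑S with ht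
      set A : Set V := {x | x ∈ t ∧ RIn G t a x} with hA
      set B : Set V := {x | x ∈ t ∧ RIn G t b x} with hB
      have hat : a ∈ t := ⟨ha, haS⟩
      have hbt : b ∈ t := ⟨hb, hbS⟩
      have haA : a ∈ A := ⟨hat, Relation.ReflTransGen.refl⟩
      have hbB : b ∈ B := ⟨hbt, Relation.ReflTransGen.refl⟩
      have hbA : b ∉ A := fun h => hSsep h.2
      have haB : a ∉ B := fun h => hSsep h.2.symm
      have hAs : ∀ x ∈ A, x ∈ s := fun x hx => hx.1.1
      have hBs : ∀ x ∈ B, x ∈ s := fun x hx => hx.1.1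
      have hAS : ∀ x ∈ A, x ∉ S := fun x hx => hx.1.2
      have hBS : ∀ x ∈ B, x ∉ S := fun x hx => hx.1.2
      have hABdisj : ∀ x ∈ A, x ∉ B := by
        intro x hx hx'
        exact hSsep (hx.2.trans hx'.2.symm)
      have hAclosed : ∀ x ∈ A, ∀ y, G.Adj x y → y ∈ t → y ∈ A := by
        intro x hx y hadj hyt
        exact ⟨hyt, hx.2.trans (Relation.ReflTransGen.single ⟨hadj, hx.1, hyt⟩)⟩
      have hBclosed : ∀ x ∈ B, ∀ y, G.Adj x y → y ∈ t → y ∈ B := by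
        intro x hx y hadj hyt
        exact ⟨hyt, hx.2.trans (Relation.ReflTransGen.single ⟨hadj, hx.1, hyt⟩)⟩
      have hnoedge : ∀ x ∈ A, ∀ y ∈ B, ¬G.Adj x y := by
        intro x hx y hy hadj
        exact hABdisj y (hAclosed x hx y hadj hy.1) hy
      -- each separator vertex has neighbors in both components
      have hreachAll : ∀ u ∈ S, RIn G (↑s \ ↑(S.erase u)) a b := by
        intro u hu
        by_contra hre
        have hmem : S.erase u ∈ T := by
          rw [hT, Finset.mem_filter, Finset.mem_powerset]
          exact ⟨le_trans (Finset.erase_subset u S) hSsub, hre⟩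
        have := hSmin _ hmem
        have hlt := Finset.card_erase_lt_of_mem hu
        omega
      have hnbr : ∀ u ∈ S, ∀ (c d : V), c ∈ t → d ∉ ({x | x ∈ t ∧ RIn G t c x} : Set V) →
          RIn G (↑s \ ↑(S.erase u)) c d → ∃ x, (x ∈ t ∧ RIn G t c x) ∧ G.Adj x u := by
        intro u hu c d hct hdC hreach
        set C : Set V := {x | x ∈ t ∧ RIn G t c x} with hC
        have key : ∀ z, RIn G (↑s \ ↑(S.erase u)) c z → z ∈ C ∨ ∃ x, x ∈ C ∧ G.Adj x u := by
          intro z hz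
          induction hz with
          | refl => exact Or.inl ⟨hct, Relation.ReflTransGen.refl⟩
          | @tail e z hce hez ih =>
            rcases ih with hC' | hdone
            · obtain ⟨hadj, he', hz'⟩ := hez
              by_cases hzS : z ∈ S
              · have hzu : z = u := by
                  by_contra hzu
                  exact hz'.2 (Finset.mem_erase.mpr ⟨hzu, hzS⟩)
                subst hzu
                exact Or.inr ⟨e, hC', hadj⟩
              · have hzt : z ∈ t := ⟨hz'.1, hzS⟩
                exact Or.inl ⟨hzt, hC'.2.trans
                  (Relation.ReflTransGen.single ⟨hadj, hC'.1, hzt⟩)⟩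
            · exact Or.inr hdone
        rcases key d hreach with h | h
        · exact absurd h hdC
        · exact h
      have hnbrA : ∀ u ∈ S, ∃ x ∈ A, G.Adj u x := by
        intro u hu
        obtain ⟨x, hx, hadj⟩ := hnbr u hu a b hat hbA (hreachAll u hu)
        exact ⟨x, hx, hadj.symm⟩
      have hnbrB : ∀ u ∈ S, ∃ x ∈ B, G.Adj u x := by
        intro u hu
        obtain ⟨x, hx, hadj⟩ := hnbr u hu b a hbt haB (hreachAll u hu).symm
        exact ⟨x, hx, hadj.symm⟩
      -- S is a clique
      have hSclique : ∀ u ∈ S, ∀ w ∈ S, u ≠ w → G.Adj u w := by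
        intro u hu w hw huw
        by_contra hnadj'
        have huA : u ∉ A := fun h => hAS u h hu
        have huB : u ∉ B := fun h => hBS u h hu
        have hwA : w ∉ A := fun h => hAS w h hw
        have hwB : w ∉ B := fun h => hBS w h hw
        have hwalk : ∀ (c : V) (C : Set V), C = {x | x ∈ t ∧ RIn G t c x} →
            (∃ x ∈ C, G.Adj u x) → (∃ x ∈ C, G.Adj w x) → ∃ W, Wok G u w C W := by
          rintro c C rfl ⟨x, hx, hux⟩ ⟨x', hx', hwx'⟩
          have hxx' : RIn G t x x' := hx.2.symm.trans hx'.2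
          obtain ⟨L, hL, hLmem⟩ := rtg_walkList hxx'
          refine ⟨u :: (L ++ [w]), wok_sandwich (fun p q hpq => hpq.1) hL ?_ hux hwx'.symm⟩
          intro z hz
          have := hLmem z hz
          rcases RIn.mem_right this with rfl | hzt
          · exact hx
          · exact ⟨hzt, hx.2.trans (hLmem z hz)⟩
        obtain ⟨WA, hWA⟩ := hwalk a A rfl (hnbrA u hu) (hnbrA w hw)
        obtain ⟨WB, hWB⟩ := hwalk b B rfl (hnbrB u hu) (hnbrB w hw)
        obtain ⟨PA, hPA⟩ := exists_indW huA hwA huw hnadj' ⟨WA, hWA⟩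
        obtain ⟨PB, hPB⟩ := exists_indW huB hwB huw hnadj' ⟨WB, hWB⟩
        obtain ⟨n, hn4, ⟨emb⟩⟩ := glue hPA hPB hnoedge hABdisj huA huB hwA hwB
        exact (hch n hn4).false emb
      -- lift simpliciality from a component side to s
      have hlift : ∀ (c : V) (C : Set V) (Cs : Finset V), C = {x | x ∈ t ∧ RIn G t c x} →
          (∀ x, x ∈ Cs ↔ x ∈ s ∧ (x ∈ C ∨ x ∈ S)) →
          ∀ v ∈ C, SimpIn G Cs v → SimpIn G s v := by
        rintro c C Cs rfl hCs v hv hsimp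
        intro x hx y hy hvx hvy
        have hmem : ∀ z, z ∈ s → G.Adj v z → z ∈ Cs := by
          intro z hz hadj
          rw [hCs]
          refine ⟨hz, ?_⟩
          by_cases hzS : z ∈ S
          · exact Or.inr hzS
          · exact Or.inl ⟨⟨hz, hzS⟩, hv.2.trans
              (Relation.ReflTransGen.single ⟨hadj, hv.1, ⟨hz, hzS⟩⟩)⟩
        exact hsimp x (hmem x hx hvx) y (hmem y hy hvy) hvx hvy
      -- find a simplicial vertex inside a component
      have hfind : ∀ (c : V) (C : Set V), C = {x | x ∈ t ∧ RIn G t c x} → c ∈ C →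
          (∃ z ∈ s, z ∉ C ∧ z ∉ S) → ∃ v ∈ C, SimpIn G s v := by
        rintro c C rfl hc hmiss
        set Cs : Finset V := s.filter (fun x => x ∈ ({x | x ∈ t ∧ RIn G t c x} : Set V) ∨ x ∈ S) with hCsdef
        have hCs : ∀ x, x ∈ Cs ↔ x ∈ s ∧ (x ∈ ({x | x ∈ t ∧ RIn G t c x} : Set V) ∨ x ∈ S) := by
          intro x; rw [hCsdef, Finset.mem_filter]
        have hcCs : c ∈ Cs := (hCs c).mpr ⟨hc.1.1, Or.inl hc⟩
        have hcard2 : Cs.card ≤ N := by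
          obtain ⟨z, hzs, hzC, hzS⟩ := hmiss
          have hzCs : z ∉ Cs := by
            rw [hCs]
            rintro ⟨_, h | h⟩
            · exact hzC h
            · exact hzS h
          have hsub2 : Cs ⊆ s := Finset.filter_subset _ _
          have hlt : Cs.card < s.card :=
            Finset.card_lt_card (Finset.ssubset_iff_of_subset hsub2 |>.mpr ⟨z, hzs, hzCs⟩)
          omega
        have hCne : Cs.Nonempty := ⟨c, hcCs⟩
        by_cases hcl : ∀ x ∈ Cs, ∀ y ∈ Cs, x ≠ y → G.Adj x y
        · refine ⟨c, hc, hlift c _ Cs rfl hCs c hc ?_⟩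
          intro x hx y hy _ _
          by_cases hxy : x = y
          · exact Or.inl hxy
          · exact Or.inr (hcl x hx y hy hxy)
        · push_neg at hcl
          obtain ⟨p, hp, q, hq, hpq, hnadjpq⟩ := hcl
          obtain ⟨v, hv, w, hw, hsv, hsw, hvw, hnvw⟩ :=
            (IH Cs hcard2 hCne).2 p hp q hq hpq hnadjpq
          have hvw' : v ∈ ({x | x ∈ t ∧ RIn G t c x} : Set V) ∨ w ∈ ({x | x ∈ t ∧ RIn G t c x} : Set V) := by
            rcases ((hCs v).mp hv).2 with h | h
            · exact Or.inl h
            rcases ((hCs w).mp hw).2 with h2 | h2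
            · exact Or.inr h2
            exact absurd (hSclique v h w h2 hvw) hnvw
          rcases hvw' with h | h
          · exact ⟨v, h, hlift c _ Cs rfl hCs v h hsv⟩
          · exact ⟨w, h, hlift c _ Cs rfl hCs w h hsw⟩
      obtain ⟨v, hvA, hsv⟩ := hfind a A rfl haA ⟨b, hb, hbA, hbS⟩
      obtain ⟨w, hwB, hsw⟩ := hfind b B rfl hbB ⟨a, ha, haB, haS⟩
      exact ⟨v, hAs v hvA, w, hBs w hwB, hsv, hsw,
        fun h => hABdisj v hvA (h ▸ hwB), hnoedge v hvA w hwB⟩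
    constructor
    · by_cases hcl : ∀ x ∈ s, ∀ y ∈ s, x ≠ y → G.Adj x y
      · obtain ⟨x, hx⟩ := hne
        refine ⟨x, hx, ?_⟩
        intro p hp q hq _ _
        by_cases hpq : p = q
        · exact Or.inl hpq
        · exact Or.inr (hcl p hp q hq hpq)
      · push_neg at hcl
        obtain ⟨p, hp, q, hq, hpq, hnadj⟩ := hcl
        obtain ⟨v, hv, w, hw, hv2, _, _, _⟩ := part2 p hp q hq hpq hnadj
        exact ⟨v, hv, hv2⟩
    · exact part2

theorem greedy [Fintype V] (hch : ∀ n : ℕ, 4 ≤ n → IsEmpty (cycleGraph n ↪g G)) (k : ℕ)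
    (hk : 0 < k) :
    ∀ N (s : Finset V), s.card ≤ N → ∀ (S : V → Finset ℕ),
      (∀ v ∈ s, k * G.cliqueNum ≤ (S v).card) →
      ∃ C : V → Finset ℕ, (∀ v ∈ s, C v ⊆ S v ∧ (C v).card = k) ∧
        (∀ u ∈ s, ∀ w ∈ s, G.Adj u w → Disjoint (C u) (C w)) := by
  classical
  intro N
  induction N with
  | zero =>
    intro s hcard S hS
    rw [Nat.le_zero, Finset.card_eq_zero] at hcard
    subst hcard
    exact ⟨fun _ => ∅, fun v hv => absurd hv (Finset.notMem_empty v), fun u hu => absurd hu (Finset.notMem_empty u)⟩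
  | succ N IH =>
    intro s hcard S hS
    rcases Finset.eq_empty_or_nonempty s with rfl | hne
    · exact ⟨fun _ => ∅, fun v hv => absurd hv (Finset.notMem_empty v), fun u hu => absurd hu (Finset.notMem_empty u)⟩
    obtain ⟨⟨v, hv, hsimp⟩, -⟩ := simplicial_rec hch s.card s le_rfl hne
    set s' := s.erase v with hs'
    have hcard' : s'.card ≤ N := by
      have h1 : s'.card < s.card := by rw [hs']; exact Finset.card_erase_lt_of_mem hv
      omega
    obtain ⟨C', hC'1, hC'2⟩ := IH s' hcard' S (fun u hu => hS u (Finset.mem_of_mem_erase hu))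
    set Nv := s'.filter (fun u => G.Adj v u) with hNv
    have hNvs' : Nv ⊆ s' := Finset.filter_subset _ _
    have hNv_adj : ∀ u ∈ Nv, G.Adj v u := fun u hu => (Finset.mem_filter.mp hu).2
    have hvNv : v ∉ Nv := fun h => absurd h (by
      simp [hNv, hs', Finset.mem_filter])
    have hclique : G.IsClique ↑(insert v Nv) := by
      intro x hx y hy hxy
      simp only [Finset.coe_insert, Set.mem_insert_iff, Finset.mem_coe] at hx hy
      rcases hx with rfl | hx
      · rcases hy with rfl | hy
        · exact absurd rfl hxy
        · exact hNv_adj y hy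
      · rcases hy with rfl | hy
        · exact (hNv_adj x hx).symm
        · rcases hsimp x (Finset.mem_of_mem_erase (hNvs' hx))
            y (Finset.mem_of_mem_erase (hNvs' hy)) (hNv_adj x hx) (hNv_adj y hy) with h | h
          · exact absurd h hxy
          · exact h
    have hNvcard : Nv.card + 1 ≤ G.cliqueNum := by
      have h1 : (insert v Nv).card ≤ G.cliqueNum :=
        IsClique.card_le_cliqueNum (tc := hclique)
      rw [Finset.card_insert_of_notMem hvNv] at h1
      omega
    set Forb := Nv.biUnion (fun u => C' u) with hForb
    have hForbcard : Forb.card ≤ Nv.card * k := by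
      calc Forb.card ≤ ∑ u ∈ Nv, (C' u).card := Finset.card_biUnion_le
        _ = Nv.card * k := by
          rw [Finset.sum_congr rfl (fun u hu => (hC'1 u (hNvs' hu)).2)]
          simp [mul_comm]
    have havail : k ≤ (S v \ Forb).card := by
      have h1 := Finset.le_card_sdiff Forb (S v)
      have h2 := hS v hv
      have h3 : Nv.card * k + k ≤ k * G.cliqueNum := by
        calc Nv.card * k + k = k * (Nv.card + 1) := by ring
          _ ≤ k * G.cliqueNum := Nat.mul_le_mul_left k hNvcard
      omega
    obtain ⟨c, hc1, hc2⟩ := Finset.exists_subset_card_eq havail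
    refine ⟨Function.update C' v c, ?_, ?_⟩
    · intro u hu
      by_cases huv : u = v
      · subst huv
        rw [Function.update_self]
        exact ⟨hc1.trans (Finset.sdiff_subset), hc2⟩
      · rw [Function.update_of_ne huv]
        exact hC'1 u (Finset.mem_erase.mpr ⟨huv, hu⟩)
    · intro x hx y hy hadj
      have hdisj : ∀ z ∈ s', G.Adj v z → Disjoint c (C' z) := by
        intro z hz hadjz
        rw [Finset.disjoint_left]
        intro m hm hm'
        have hmA : m ∈ S v \ Forb := hc1 hm
        have : m ∈ Forb := Finset.mem_biUnion.mpr
          ⟨z, Finset.mem_filter.mpr ⟨hz, hadjz⟩, hm'⟩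
        exact (Finset.mem_sdiff.mp hmA).2 this
      by_cases hxv : x = v
      · subst hxv
        have hyv : y ≠ x := fun h => G.irrefl (h ▸ hadj)
        rw [Function.update_self, Function.update_of_ne hyv]
        exact hdisj y (Finset.mem_erase.mpr ⟨hyv, hy⟩) hadj
      by_cases hyv : y = v
      · subst hyv
        rw [Function.update_self, Function.update_of_ne hxv]
        exact (hdisj x (Finset.mem_erase.mpr ⟨hxv, hx⟩) hadj.symm).symm
      · rw [Function.update_of_ne hxv, Function.update_of_ne hyv]
        exact hC'2 x (Finset.mem_erase.mpr ⟨hxv, hx⟩) y (Finset.mem_erase.mpr ⟨hyv, hy⟩) hadj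


end ChordalAux

theorem chordal_kth_choice_number {V : Type*} [Fintype V] (G : SimpleGraph V)
    (hchordal : ∀ n : ℕ, 4 ≤ n → IsEmpty (SimpleGraph.cycleGraph n ↪g G))
    (k : ℕ) (hk : 0 < k) :
    G.chooseNum k = k * G.chromaticNumber.toNat ∧
    k * G.chromaticNumber.toNat = k * G.cliqueNum := by
  classical
  open ChordalAux Finset in
  set ω := G.cliqueNum with hω
  -- upper: G is (k*ω : k)-choosable
  have hup : G.Choosable (k * ω) k := by
    intro S hS
    obtain ⟨C, h1, h2⟩ := greedy hchordal k hk Finset.univ.card Finset.univ le_rfl S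
      (fun v _ => le_of_eq (hS v).symm)
    exact ⟨C, fun v => (h1 v (Finset.mem_univ v)).1, fun v => (h1 v (Finset.mem_univ v)).2,
      fun u w hadj => h2 u (Finset.mem_univ u) w (Finset.mem_univ w) hadj⟩
  -- lower bound for choosability
  have hlow : ∀ n, G.Choosable n k → k * ω ≤ n := by
    intro n hn
    obtain ⟨T, hT⟩ := G.exists_isNClique_cliqueNum
    obtain ⟨C, h1, h2, h3⟩ := hn (fun _ => Finset.range n) (fun _ => Finset.card_range n)
    have hdisj : ∀ x ∈ T, ∀ y ∈ T, x ≠ y → Disjoint (C x) (C y) := by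
      intro x hx y hy hxy
      exact h3 x y (hT.1 (Finset.mem_coe.mpr hx) (Finset.mem_coe.mpr hy) hxy)
    have hcard : (T.biUnion C).card = ω * k := by
      rw [Finset.card_biUnion hdisj]
      rw [Finset.sum_congr rfl (fun u _ => h2 u)]
      simp [hT.2, hω]
    have hsub : T.biUnion C ⊆ Finset.range n := by
      intro m hm
      obtain ⟨u, _, hmu⟩ := Finset.mem_biUnion.mp hm
      exact h1 u hmu
    have := Finset.card_le_card hsub
    rw [hcard, Finset.card_range] at this
    calc k * ω = ω * k := Nat.mul_comm k ω
      _ ≤ n := this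
  have hchoose : G.chooseNum k = k * ω :=
    le_antisymm (Nat.sInf_le hup) (le_csInf ⟨_, hup⟩ hlow)
  -- coloring with ω colors
  have hcol : G.Colorable ω := by
    obtain ⟨C, h1, h2⟩ := greedy hchordal 1 one_pos Finset.univ.card Finset.univ le_rfl
      (fun _ => Finset.range ω) (fun v _ => by simp [hω])
    have hne : ∀ v, (C v).Nonempty := fun v =>
      Finset.card_pos.mp (by rw [(h1 v (Finset.mem_univ v)).2]; omega)
    have hbd : ∀ v, (C v).min' (hne v) < ω := fun v =>
      Finset.mem_range.mp ((h1 v (Finset.mem_univ v)).1 ((C v).min'_mem (hne v)))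
    refine ⟨⟨fun v => ⟨(C v).min' (hne v), hbd v⟩, ?_⟩⟩
    intro x y hadj heq
    have hd := h2 x (Finset.mem_univ x) y (Finset.mem_univ y) hadj
    have : (C x).min' (hne x) = (C y).min' (hne y) := by
      simpa [Fin.ext_iff] using heq
    exact Finset.disjoint_left.mp hd ((C x).min'_mem (hne x))
      (this ▸ (C y).min'_mem (hne y))
  -- clique number lower-bounds any coloring
  have hωle : ∀ n, G.Colorable n → ω ≤ n := by
    intro n ⟨c⟩
    obtain ⟨T, hT⟩ := G.exists_isNClique_cliqueNum
    have hinj : Set.InjOn (fun x => c x) ↑T := by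
      intro x hx y hy heq
      by_contra hne
      exact c.valid (hT.1 hx hy hne) heq
    have := Finset.card_le_card_of_injOn (fun x => c x)
      (fun x _ => Finset.mem_univ (c x)) hinj
    rw [hT.2] at this
    simpa using this
  have hχ : G.chromaticNumber.toNat = ω := by
    have hle : G.chromaticNumber ≤ (ω : ℕ∞) := hcol.chromaticNumber_le
    have h1 : G.chromaticNumber.toNat ≤ ω := by
      have := ENat.toNat_le_toNat hle (by simp)
      simpa using this
    have h2 : ω ≤ G.chromaticNumber.toNat :=
      hωle _ (G.colorable_chromaticNumber_of_fintype)
    omega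
  rw [hχ, hchoose]
  exact ⟨rfl, rfl⟩
end

section
/- If a finite simple graph G contains no cycle C_n (as a subgraph) for every n ≥ 4, then the line graph L(G) satisfies ch(L(G)) = χ(L(G)), i.e., the choice number of L(G) equals its chromatic number. -/
open SimpleGraph Walk

open Finset in
lemma clique_card_le {W : Type*} {H : SimpleGraph W} {n : ℕ} (hfree : H.CliqueFree (n+1))
    {t : Finset W} (ht : H.IsClique t) : t.card ≤ n := by
  by_contra h
  push_neg at h
  obtain ⟨u, hu, hcard⟩ := t.exists_subset_card_eq h
  exact hfree u ⟨ht.subset (by exact_mod_cast Finset.coe_subset.2 hu), hcard⟩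

open Finset in
lemma greedy_choosable {W : Type*} [Fintype W] (H : SimpleGraph W) {n : ℕ}
    (hfree : H.CliqueFree (n+1))
    (hsimp : ∀ A : Finset W, A.Nonempty → ∃ v ∈ A, ∀ u ∈ A, ∀ w ∈ A,
        H.Adj u v → H.Adj w v → u ≠ w → H.Adj u w) :
    H.Choosable n 1 := by
  classical
  intro S hS
  suffices h : ∀ A : Finset W, ∃ c : W → ℕ, (∀ v ∈ A, c v ∈ S v) ∧
      (∀ u ∈ A, ∀ v ∈ A, H.Adj u v → c u ≠ c v) by
    obtain ⟨c, hc1, hc2⟩ := h Finset.univ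
    refine ⟨fun v => {c v}, fun v => Finset.singleton_subset_iff.2 (hc1 v (mem_univ v)),
      fun v => Finset.card_singleton _, fun u v huv => ?_⟩
    simpa [Finset.disjoint_singleton] using (hc2 u (mem_univ u) v (mem_univ v) huv)
  intro A
  induction A using Finset.strongInduction with
  | _ A ih =>
    rcases A.eq_empty_or_nonempty with rfl | hA
    · exact ⟨fun _ => 0, by simp, by simp⟩
    obtain ⟨v, hv, hsimpv⟩ := hsimp A hA
    obtain ⟨c, hc1, hc2⟩ := ih (A.erase v) (Finset.erase_ssubset hv)
    set Nb := (A.erase v).filter (fun u => H.Adj u v) with hNb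
    have hNbA : ∀ u ∈ Nb, u ∈ A ∧ H.Adj u v := by
      intro u hu
      rw [hNb, Finset.mem_filter] at hu
      exact ⟨Finset.mem_of_mem_erase hu.1, hu.2⟩
    have hclique : H.IsClique (insert v Nb : Finset W) := by
      intro a ha b hb hab
      simp only [Finset.coe_insert, Set.mem_insert_iff, Finset.mem_coe] at ha hb
      rcases ha with rfl | ha
      · rcases hb with rfl | hb
        · exact absurd rfl hab
        · exact ((hNbA b hb).2).symm
      · rcases hb with rfl | hb
        · exact (hNbA a ha).2
        · exact hsimpv a (hNbA a ha).1 b (hNbA b hb).1 (hNbA a ha).2 (hNbA b hb).2 hab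
    have hvNb : v ∉ Nb := by
      intro hvin
      exact (Finset.notMem_erase v A) ((Finset.mem_filter.1 (hNb ▸ hvin)).1)
    have hcard : Nb.card + 1 ≤ n := by
      have := clique_card_le hfree hclique
      rw [Finset.card_insert_of_notMem hvNb] at this
      omega
    have hused : (Nb.image c).card < (S v).card := by
      calc (Nb.image c).card ≤ Nb.card := Finset.card_image_le
        _ < n := by omega
        _ ≤ (S v).card := le_of_eq (hS v).symm
    have hnotsub : ¬ S v ⊆ Nb.image c := fun hsub =>
      absurd (Finset.card_le_card hsub) (not_le.2 hused)
    obtain ⟨a, haS, haN⟩ := Finset.not_subset.1 hnotsub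
    refine ⟨Function.update c v a, ?_, ?_⟩
    · intro x hx
      by_cases hxv : x = v
      · rw [hxv, Function.update_self _ _ _]
        exact haS
      · rw [Function.update_of_ne hxv]
        exact hc1 x (Finset.mem_erase.2 ⟨hxv, hx⟩)
    · intro x hx y hy hxy
      by_cases hxv : x = v
      · by_cases hyv : y = v
        · rw [hxv, hyv] at hxy
          exact absurd hxy H.irrefl
        · rw [hxv, Function.update_self _ _ _, Function.update_of_ne hyv]
          intro heq
          refine haN (Finset.mem_image.2 ⟨y, ?_, heq.symm⟩)
          rw [hNb, Finset.mem_filter]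
          rw [hxv] at hxy
          exact ⟨Finset.mem_erase.2 ⟨hyv, hy⟩, hxy.symm⟩
      · by_cases hyv : y = v
        · rw [hyv, Function.update_self _ _ _, Function.update_of_ne hxv]
          intro heq
          refine haN (Finset.mem_image.2 ⟨x, ?_, heq⟩)
          rw [hNb, Finset.mem_filter]
          rw [hyv] at hxy
          exact ⟨Finset.mem_erase.2 ⟨hxv, hx⟩, hxy⟩
        · rw [Function.update_of_ne hxv, Function.update_of_ne hyv]
          exact hc2 x (Finset.mem_erase.2 ⟨hxv, hx⟩) y (Finset.mem_erase.2 ⟨hyv, hy⟩) hxy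

lemma choosable_one_colorable {W : Type*} {H : SimpleGraph W} {n : ℕ}
    (h : H.Choosable n 1) : H.Colorable n := by
  classical
  obtain ⟨C, hsub, hcard, hdisj⟩ := h (fun _ => Finset.range n) (fun _ => Finset.card_range n)
  have hne : ∀ v, (C v).Nonempty := fun v => Finset.card_pos.1 (by rw [hcard]; norm_num)
  have hlt : ∀ v, (C v).min' (hne v) < n := fun v =>
    Finset.mem_range.1 (hsub v ((C v).min'_mem (hne v)))
  refine ⟨SimpleGraph.Coloring.mk (fun v => ⟨(C v).min' (hne v), hlt v⟩) ?_⟩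
  intro u v huv heq
  have hmem : (C u).min' (hne u) ∈ C v := by
    have : ((C u).min' (hne u) : ℕ) = (C v).min' (hne v) := congrArg Fin.val (by exact_mod_cast heq)
    rw [this]; exact (C v).min'_mem (hne v)
  exact Finset.disjoint_left.1 (hdisj u v huv) ((C u).min'_mem (hne u)) hmem

lemma path_edge_of_endpoints {V : Type*} {G : SimpleGraph V} {u x : V} (q : G.Walk u x)
    (hq : q.IsPath) (he : s(x, u) ∈ q.edges) : q.length = 1 := by
  cases q with
  | nil => simp at he
  | @cons _ b _ h q' =>
    rw [Walk.edges_cons, List.mem_cons] at he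
    rcases he with he | he
    · have hx : x = b := by
        rw [Sym2.eq_iff] at he
        rcases he with ⟨h1, h2⟩ | ⟨h1, _⟩
        · exact absurd rfl ((h2 ▸ h).ne)
        · exact h1
      subst hx
      have hq' : q' = Walk.nil := Walk.isPath_iff_eq_nil.1 hq.of_cons
      simp [hq']
    · have hu : u ∈ q'.support := Walk.snd_mem_support_of_mem_edges q' he
      rw [Walk.cons_isPath_iff] at hq
      exact absurd hu hq.2

lemma exists_simplicial_edge {V : Type*} [Fintype V] (G : SimpleGraph V)
    (hnocycle : ∀ (v : V) (p : G.Walk v v), p.IsCycle → p.length < 4)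
    (hne : G.edgeSet.Nonempty) :
    ∃ e ∈ G.edgeSet, ∀ f ∈ G.edgeSet, ∀ g ∈ G.edgeSet, f ≠ e → g ≠ e → f ≠ g →
      (∃ x, x ∈ e ∧ x ∈ f) → (∃ x, x ∈ e ∧ x ∈ g) → ∃ x, x ∈ f ∧ x ∈ g := by
  classical
  obtain ⟨e0, he0⟩ := hne
  induction e0 using Sym2.ind with
  | _ a b =>
  rw [SimpleGraph.mem_edgeSet] at he0
  set PS : Set ℕ := {n | ∃ (u w : V) (p : G.Walk u w), p.IsPath ∧ p.length = n} with hPS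
  have hbdd : BddAbove PS := ⟨Fintype.card V, by rintro m ⟨u, w, p, hp, rfl⟩; exact hp.length_lt.le⟩
  have h1 : (1 : ℕ) ∈ PS := by
    refine ⟨a, b, Walk.cons he0 Walk.nil, ?_, rfl⟩
    rw [Walk.cons_isPath_iff]
    exact ⟨Walk.IsPath.nil, by simp [he0.ne]⟩
  have hmax : ∀ m ∈ PS, m ≤ sSup PS := fun m hm => le_csSup hbdd hm
  have h1N : 1 ≤ sSup PS := hmax 1 h1
  obtain ⟨v0, w, p, hp, hlen⟩ := Nat.sSup_mem ⟨1, h1⟩ hbdd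
  have hF1 : ∀ x, G.Adj v0 x → x ∈ p.support := by
    intro x hx
    by_contra hxs
    have hmem : p.length + 1 ∈ PS := ⟨x, w, Walk.cons hx.symm p,
      (Walk.cons_isPath_iff _ _).2 ⟨hp, hxs⟩, rfl⟩
    have := hmax _ hmem
    omega
  have hnbr : ∀ x, G.Adj v0 x → x = p.getVert 1 ∨ x = p.getVert 2 := by
    intro x hx
    have hxs := hF1 x hx
    have hq : (p.takeUntil x hxs).IsPath := hp.takeUntil hxs
    have hle2 : (p.takeUntil x hxs).length ≤ 2 := by
      by_contra h3
      push_neg at h3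
      have hnotmem : s(x, v0) ∉ (p.takeUntil x hxs).edges := by
        intro hmem
        have := path_edge_of_endpoints _ hq hmem
        omega
      have hcyc : (Walk.cons hx.symm (p.takeUntil x hxs)).IsCycle :=
        (Walk.cons_isCycle_iff _ _).2 ⟨hq, hnotmem⟩
      have := hnocycle x _ hcyc
      rw [Walk.length_cons] at this
      omega
    have hge1 : 1 ≤ (p.takeUntil x hxs).length := by
      rcases Nat.eq_zero_or_pos (p.takeUntil x hxs).length with h0 | h
      · exact absurd (Walk.eq_of_length_eq_zero h0) hx.ne
      · exact h
    have hget : p.getVert (p.takeUntil x hxs).length = x := by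
      have h := Walk.getVert_append (p.takeUntil x hxs) (p.dropUntil x hxs)
        ((p.takeUntil x hxs).length)
      rw [p.take_spec hxs] at h
      simpa using h
    have h12 : (p.takeUntil x hxs).length = 1 ∨ (p.takeUntil x hxs).length = 2 := by omega
    rcases h12 with h | h
    · left; rw [← hget, h]
    · right; rw [← hget, h]
  cases p with
  | nil => simp at hlen; omega
  | @cons _ v1 _ h01 p1 =>
    by_cases hB : 1 ≤ p1.length ∧ G.Adj v0 (p1.getVert 1)
    · -- triangle case
      cases p1 with
      | nil => simp at hB
      | @cons _ v2 _ h12 p2 =>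
        have h02 : G.Adj v0 v2 := by simpa using hB.2
        rw [Walk.cons_isPath_iff] at hp
        have hv0supp := hp.2
        rw [Walk.cons_isPath_iff] at hp
        have hp2 : p2.IsPath := hp.1.1
        have hv1p2 : v1 ∉ p2.support := hp.1.2
        have hv0p2 : v0 ∉ p2.support := by
          intro hmem
          exact hv0supp (by simp [Walk.support_cons, hmem])
        have hv0v1 : v0 ≠ v1 := h01.ne
        have hv1v2 : v1 ≠ v2 := h12.ne
        have hv0v2 : v0 ≠ v2 := h02.ne
        have hkey : ∀ y, G.Adj v1 y → y = v0 ∨ y = v2 := by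
          intro y hy
          by_contra hcon
          push_neg at hcon
          obtain ⟨hyv0, hyv2⟩ := hcon
          have hyv1 : y ≠ v1 := fun h => absurd rfl ((h ▸ hy).ne)
          by_cases hymem : y ∈ p2.support
          · -- build a cycle of length ≥ 4
            have hsegpath : (p2.takeUntil y hymem).IsPath := hp2.takeUntil hymem
            have hseglen : 1 ≤ (p2.takeUntil y hymem).length := by
              rcases Nat.eq_zero_or_pos (p2.takeUntil y hymem).length with h0 | h
              · exact absurd (Walk.eq_of_length_eq_zero h0) (Ne.symm hyv2)
              · exact h
            have hsegsub := Walk.support_takeUntil_subset p2 hymem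
            have hv0seg : v0 ∉ (p2.takeUntil y hymem).support := fun h => hv0p2 (hsegsub h)
            have hv1seg : v1 ∉ (p2.takeUntil y hymem).support := fun h => hv1p2 (hsegsub h)
            have hrestpath :
                ((p2.takeUntil y hymem).append
                  (Walk.cons hy.symm (Walk.cons h01.symm Walk.nil))).IsPath := by
              rw [Walk.isPath_def, Walk.support_append]
              simp only [Walk.support_cons, Walk.support_nil, List.tail_cons]
              rw [List.nodup_append]
              refine ⟨hsegpath.support_nodup, by simp [hv0v1.symm], ?_⟩
              intro z hz b hb hzb
              subst hzb
              simp only [List.mem_cons, List.mem_singleton, List.not_mem_nil] at hb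
              rcases hb with rfl | rfl | h
              · exact hv1seg hz
              · exact hv0seg hz
              · exact h.elim
            have hedge : s(v0, v2) ∉
                ((p2.takeUntil y hymem).append
                  (Walk.cons hy.symm (Walk.cons h01.symm Walk.nil))).edges := by
              rw [Walk.edges_append]
              simp only [Walk.edges_cons, Walk.edges_nil, List.mem_append, List.mem_cons,
                List.not_mem_nil, or_false, not_or]
              refine ⟨?_, ?_, ?_⟩
              · intro hmem
                exact hv0seg (Walk.fst_mem_support_of_mem_edges _ hmem)
              · intro hmem
                rw [Sym2.eq_iff] at hmem
                rcases hmem with ⟨h1, h2⟩ | ⟨h1, h2⟩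
                · exact hyv0 h1.symm
                · exact hv0v1 h1
              · intro hmem
                rw [Sym2.eq_iff] at hmem
                rcases hmem with ⟨h1, h2⟩ | ⟨h1, h2⟩
                · exact hv0v1 h1
                · exact hv1v2 h2.symm
            have hcyc : (Walk.cons h02
                ((p2.takeUntil y hymem).append
                  (Walk.cons hy.symm (Walk.cons h01.symm Walk.nil)))).IsCycle :=
              (Walk.cons_isCycle_iff _ _).2 ⟨hrestpath, hedge⟩
            have hlt := hnocycle v0 _ hcyc
            rw [Walk.length_cons, Walk.length_append, Walk.length_cons, Walk.length_cons,
              Walk.length_nil] at hlt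
            omega
          · -- extend the longest path
            have hnewpath : (Walk.cons hy.symm (Walk.cons h01.symm
                (Walk.cons h02 p2))).IsPath := by
              rw [Walk.cons_isPath_iff, Walk.cons_isPath_iff, Walk.cons_isPath_iff]
              refine ⟨⟨⟨hp2, hv0p2⟩, ?_⟩, ?_⟩
              · simp only [Walk.support_cons, List.mem_cons]
                rintro (rfl | hmem)
                · exact hv0v1 rfl
                · exact hv1p2 hmem
              · simp only [Walk.support_cons, List.mem_cons]
                rintro (rfl | rfl | hmem)
                · exact hyv1 rfl
                · exact hyv0 rfl
                · exact hymem hmem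
            have hmem : (Walk.cons hy.symm (Walk.cons h01.symm
                (Walk.cons h02 p2))).length ∈ PS := ⟨y, w, _, hnewpath, rfl⟩
            have hle := hmax _ hmem
            simp only [Walk.length_cons] at hle hlen
            omega
        -- now conclude with e = s(v0, v1)
        have hnbr' : ∀ x, G.Adj v0 x → x = v1 ∨ x = v2 := by
          intro x hx
          rcases hnbr x hx with h1 | h2
          · left; simpa using h1
          · right; simpa using h2
        refine ⟨s(v0, v1), h01, ?_⟩
        rintro f hf g hg hfe hge hfg ⟨x, hxe, hxf⟩ ⟨y, hye, hyg⟩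
        have key : ∀ f', f' ∈ G.edgeSet → f' ≠ s(v0, v1) →
            (∃ z, z ∈ (s(v0, v1) : Sym2 V) ∧ z ∈ f') → v2 ∈ f' := by
          rintro f' hf' hnef ⟨z, hz1, hz2⟩
          rw [Sym2.mem_iff] at hz1
          rcases hz1 with h | h
          · rw [h] at hz2
            obtain ⟨y', rfl⟩ := Sym2.mem_iff_exists.1 hz2
            rw [SimpleGraph.mem_edgeSet] at hf'
            rcases hnbr' y' hf' with h' | h'
            · exact absurd (by rw [h']) hnef
            · rw [h']; simp
          · rw [h] at hz2
            obtain ⟨y', rfl⟩ := Sym2.mem_iff_exists.1 hz2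
            rw [SimpleGraph.mem_edgeSet] at hf'
            rcases hkey y' hf' with h' | h'
            · refine absurd ?_ hnef
              rw [h']
              exact Sym2.eq_swap
            · rw [h']; simp
        exact ⟨v2, key f hf hfe ⟨x, hxe, hxf⟩, key g hg hge ⟨y, hye, hyg⟩⟩
    · -- pendant-ish case: every neighbor of v0 is v1
      have hA : ∀ x, G.Adj v0 x → x = v1 := by
        intro x hx
        rcases hnbr x hx with h1 | h2
        · simpa using h1
        · rw [Walk.getVert_cons_succ] at h2
          rcases Nat.eq_zero_or_pos p1.length with h0 | hpos
          · have hv1w : v1 = w := Walk.eq_of_length_eq_zero h0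
            rw [Walk.getVert_of_length_le p1 (by omega)] at h2
            rw [h2, hv1w]
          · exact absurd ⟨hpos, by rwa [← h2]⟩ hB
      refine ⟨s(v0, v1), h01, ?_⟩
      rintro f hf g hg hfe hge hfg ⟨x, hxe, hxf⟩ ⟨y, hye, hyg⟩
      have key : ∀ f', f' ∈ G.edgeSet → f' ≠ s(v0, v1) →
          (∃ z, z ∈ (s(v0, v1) : Sym2 V) ∧ z ∈ f') → v1 ∈ f' := by
        rintro f' hf' hnef ⟨z, hz1, hz2⟩
        rw [Sym2.mem_iff] at hz1
        rcases hz1 with h | h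
        · rw [h] at hz2
          obtain ⟨y', rfl⟩ := Sym2.mem_iff_exists.1 hz2
          rw [SimpleGraph.mem_edgeSet] at hf'
          exact absurd (by rw [hA y' hf']) hnef
        · rw [h] at hz2
          exact hz2
      exact ⟨v1, key f hf hfe ⟨x, hxe, hxf⟩, key g hg hge ⟨y, hye, hyg⟩⟩

lemma lineGraph_simplicial {V : Type*} [Fintype V] (G : SimpleGraph V)
    (hnocycle : ∀ (v : V) (p : G.Walk v v), p.IsCycle → p.length < 4)
    (A : Finset G.edgeSet) (hA : A.Nonempty) :
    ∃ v ∈ A, ∀ u ∈ A, ∀ w ∈ A, G.lineGraph.Adj u v → G.lineGraph.Adj w v → u ≠ w →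
      G.lineGraph.Adj u w := by
  classical
  set A' : Set (Sym2 V) := Subtype.val '' (A : Set G.edgeSet) with hA'
  have hsub : A' ⊆ G.edgeSet := by rintro e ⟨⟨e', he'⟩, _, rfl⟩; exact he'
  set G' := SimpleGraph.fromEdgeSet A' with hG'
  have hle : G' ≤ G := by
    calc G' ≤ SimpleGraph.fromEdgeSet G.edgeSet := SimpleGraph.fromEdgeSet_mono hsub
    _ = G := G.fromEdgeSet_edgeSet
  have hES : G'.edgeSet = A' := by
    rw [hG', SimpleGraph.edgeSet_fromEdgeSet]
    ext e
    simp only [Set.mem_diff, Set.mem_setOf_eq, and_iff_left_iff_imp]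
    intro he
    exact G.not_isDiag_of_mem_edgeSet (hsub he)
  have hnc' : ∀ (v : V) (p : G'.Walk v v), p.IsCycle → p.length < 4 := by
    intro v p hc
    have := hnocycle v (p.mapLe hle) ((Walk.mapLe_isCycle hle).2 hc)
    simpa [Walk.mapLe, Walk.length_map] using this
  obtain ⟨e1, he1⟩ := hA
  have hne : G'.edgeSet.Nonempty := ⟨e1.val, hES ▸ ⟨e1, he1, rfl⟩⟩
  obtain ⟨e, heES, hsimp⟩ := exists_simplicial_edge G' hnc' hne
  obtain ⟨x0, hx0A, hx0val⟩ : ∃ x0 ∈ A, (x0 : Sym2 V) = e := by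
    have : e ∈ A' := hES ▸ heES
    obtain ⟨x0, hx0, hval⟩ := this
    exact ⟨x0, hx0, hval⟩
  refine ⟨x0, hx0A, ?_⟩
  intro u hu w hw huv hwv huw
  rw [lineGraph_adj_iff_exists] at huv hwv ⊢
  obtain ⟨hune, z1, hz1u, hz1x⟩ := huv
  obtain ⟨hwne, z2, hz2w, hz2x⟩ := hwv
  have huES : (u : Sym2 V) ∈ G'.edgeSet := hES ▸ ⟨u, hu, rfl⟩
  have hwES : (w : Sym2 V) ∈ G'.edgeSet := hES ▸ ⟨w, hw, rfl⟩
  have hunee : (u : Sym2 V) ≠ e := fun h => hune (Subtype.ext (h.trans hx0val.symm))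
  have hwnee : (w : Sym2 V) ≠ e := fun h => hwne (Subtype.ext (h.trans hx0val.symm))
  have huvw : (u : Sym2 V) ≠ (w : Sym2 V) := fun h => huw (Subtype.ext h)
  obtain ⟨z, hzu, hzw⟩ := hsimp u huES w hwES hunee hwnee huvw
    ⟨z1, hx0val ▸ hz1x, hz1u⟩ ⟨z2, hx0val ▸ hz2x, hz2w⟩
  exact ⟨huw, z, hzu, hzw⟩

theorem lineGraph_choice_number_eq_chromaticNumber {V : Type*} [Fintype V]
    (G : SimpleGraph V)
    (hnocycle : ∀ (v : V) (p : G.Walk v v), p.IsCycle → p.length < 4) :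
    (G.lineGraph.chooseNum 1 : ℕ∞) = G.lineGraph.chromaticNumber := by
  classical
  let _ : Fintype G.edgeSet := Fintype.ofFinite _
  have hcolcard : G.lineGraph.Colorable (Fintype.card G.edgeSet) :=
    SimpleGraph.colorable_of_fintype _
  have hne_top : G.lineGraph.chromaticNumber ≠ ⊤ :=
    SimpleGraph.chromaticNumber_ne_top_iff_exists.2 ⟨_, hcolcard⟩
  obtain ⟨k, hk⟩ : ∃ k : ℕ, G.lineGraph.chromaticNumber = (k : ℕ∞) := by
    obtain ⟨k, hk⟩ := WithTop.ne_top_iff_exists.1 hne_top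
    exact ⟨k, hk.symm⟩
  have hcolk : G.lineGraph.Colorable k := by
    rw [← SimpleGraph.chromaticNumber_le_iff_colorable, hk]
  have hfree : G.lineGraph.CliqueFree (k + 1) := hcolk.cliqueFree (by omega)
  have hchoosek : G.lineGraph.Choosable k 1 :=
    greedy_choosable _ hfree (lineGraph_simplicial G hnocycle)
  have heq : G.lineGraph.chooseNum 1 = k := by
    have hdef : G.lineGraph.chooseNum 1 = sInf {n | G.lineGraph.Choosable n 1} := rfl
    rw [hdef]
    apply le_antisymm
    · exact Nat.sInf_le (s := {n | G.lineGraph.Choosable n 1}) hchoosek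
    · refine le_csInf (s := {n | G.lineGraph.Choosable n 1}) ⟨k, hchoosek⟩ ?_
      intro m hm
      have hcolm : G.lineGraph.Colorable m := choosable_one_colorable hm
      have := hcolm.chromaticNumber_le
      rw [hk] at this
      exact_mod_cast this
  rw [heq, hk]
end

section
/- Suppose k and m are positive integers and k is odd. If a finite simple graph G is (2mk:mk)-choosable, then G is also 2m-choosable. -/
theorem two_mk_choosable_implies_two_m_choosable {V : Type*} [Fintype V]
    (G : SimpleGraph V) (k m : ℕ) (hk : 0 < k) (hm : 0 < m) (hodd : Odd k)
    (h : G.Choosable (2 * m * k) (m * k)) :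
    G.Choosable (2 * m) 1 := by
  classical
  intro S hS
  set block : ℕ → Finset ℕ := fun c => (Finset.range k).image (fun i => Nat.pair c i)
    with hblock
  have hblockcard : ∀ c, (block c).card = k := by
    intro c
    rw [hblock]
    rw [Finset.card_image_of_injective _ (fun a b hab => (Nat.pair_eq_pair.mp hab).2)]
    simp
  have hblockdisj : ∀ c c', c ≠ c' → Disjoint (block c) (block c') := by
    intro c c' hne
    simp only [Finset.disjoint_left, hblock, Finset.mem_image, Finset.mem_range]
    rintro x ⟨i, hi, rfl⟩ ⟨j, hj, he⟩
    exact hne (Nat.pair_eq_pair.mp he).1.symm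
  set S' : V → Finset ℕ := fun v => (S v).biUnion block with hS'
  have hS'card : ∀ v, (S' v).card = 2 * m * k := by
    intro v
    rw [hS']
    rw [Finset.card_biUnion (fun c _ c' _ hcc => hblockdisj c c' hcc)]
    simp [hblockcard, hS v, mul_assoc]
  obtain ⟨C, hCsub, hCcard, hCdisj⟩ := h S' hS'card
  have key : ∀ v, ∃ c ∈ S v, k < 2 * (C v ∩ block c).card := by
    intro v
    by_contra hcon
    push_neg at hcon
    obtain ⟨j, hj⟩ := hodd
    have hle : ∀ c ∈ S v, 2 * (C v ∩ block c).card ≤ k - 1 := by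
      intro c hc
      have h1 := hcon c hc
      omega
    have hdecomp : C v = (S v).biUnion (fun c => C v ∩ block c) := by
      ext x
      simp only [Finset.mem_biUnion, Finset.mem_inter]
      constructor
      · intro hx
        have hx' := hCsub v hx
        simp only [hS', Finset.mem_biUnion] at hx'
        obtain ⟨c, hc, hxc⟩ := hx'
        exact ⟨c, hc, hx, hxc⟩
      · rintro ⟨c, hc, hx, _⟩; exact hx
    have hsum : ∑ c ∈ S v, (C v ∩ block c).card = m * k := by
      have hb := Finset.card_biUnion (s := S v) (t := fun c => C v ∩ block c)
        (fun c _ c' _ hcc => ((hblockdisj c c' hcc).mono inf_le_right inf_le_right))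
      rw [← hdecomp] at hb
      rw [← hb]
      exact hCcard v
    have h2 : ∑ c ∈ S v, 2 * (C v ∩ block c).card ≤ ∑ c ∈ S v, (k - 1) :=
      Finset.sum_le_sum hle
    rw [← Finset.mul_sum, hsum, Finset.sum_const, hS v, smul_eq_mul] at h2
    rw [hj] at h2
    have h2' : 2 * (m * (2 * j + 1)) ≤ 2 * m * (2 * j) := by simpa using h2
    nlinarith [h2', hm]
  choose c hc1 hc2 using key
  refine ⟨fun v => {c v}, fun v => Finset.singleton_subset_iff.mpr (hc1 v),
    fun v => rfl, fun u v huv => ?_⟩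
  rw [Finset.disjoint_singleton]
  intro heq
  have hdisj := hCdisj u v huv
  have hinterd : Disjoint (C u ∩ block (c v)) (C v ∩ block (c v)) :=
    hdisj.mono inf_le_left inf_le_left
  have hsub : (C u ∩ block (c v)) ∪ (C v ∩ block (c v)) ⊆ block (c v) :=
    Finset.union_subset inf_le_right inf_le_right
  have hcardle := Finset.card_le_card hsub
  rw [Finset.card_union_of_disjoint hinterd, hblockcard] at hcardle
  have h1 := hc2 u
  have h2 := hc2 v
  rw [heq] at h1
  omega
end

section
/- If a finite simple graph G is strongly k-colorable, then G is strongly (k+1)-colorable as well. -/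
/-- The graph obtained from `G` by adding all edges inside each member of a family `P`
of subsets of the vertices. -/
def SimpleGraph.addCliques {V : Type*} (G : SimpleGraph V) (P : Set (Set V)) :
    SimpleGraph V :=
  G ⊔ SimpleGraph.fromRel (fun u v => ∃ A ∈ P, u ∈ A ∧ v ∈ A)

/-- `G` is strongly `k`-colorable if every graph obtained from `G` by adding a union of
vertex-disjoint cliques of size at most `k` is `k`-colorable. -/
def SimpleGraph.StronglyColorable {V : Type*} (G : SimpleGraph V) (k : ℕ) : Prop :=
  ∀ P : Set (Set V), P.PairwiseDisjoint id → (∀ A ∈ P, A.ncard ≤ k) →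
    (G.addCliques P).Colorable k

private lemma addCliques_adj' {V : Type*} (G : SimpleGraph V) (P : Set (Set V)) (u v : V) :
    (G.addCliques P).Adj u v ↔ G.Adj u v ∨ (u ≠ v ∧ ∃ A ∈ P, u ∈ A ∧ v ∈ A) := by
  simp only [SimpleGraph.addCliques, SimpleGraph.sup_adj, SimpleGraph.fromRel_adj]
  constructor
  · rintro (hg | ⟨hne, ⟨A, hA, h1, h2⟩ | ⟨A, hA, h1, h2⟩⟩)
    · exact Or.inl hg
    · exact Or.inr ⟨hne, A, hA, h1, h2⟩
    · exact Or.inr ⟨hne, A, hA, h2, h1⟩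
  · rintro (hg | ⟨hne, hA⟩)
    · exact Or.inl hg
    · exact Or.inr ⟨hne, Or.inl hA⟩

theorem stronglyColorable_succ {V : Type*} [Fintype V] (G : SimpleGraph V) (k : ℕ)
    (h : G.StronglyColorable k) :
    G.StronglyColorable (k + 1) := by
  classical
  rcases Nat.eq_zero_or_pos k with rfl | hkpos
  · -- k = 0 : V is empty
    obtain ⟨C0⟩ := h ∅ (by simp) (by simp)
    intro P _ _
    exact ⟨SimpleGraph.Coloring.mk (fun v => (C0 v).elim0) (fun {a b} _ => (C0 a).elim0)⟩
  intro P hdisj hcard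
  -- truncation function: remove one chosen vertex from each part of size k+1
  set f : Set V → Set V := fun A =>
    if hA : A.ncard = k + 1 then
      A \ {(Set.nonempty_of_ncard_ne_zero (by omega : A.ncard ≠ 0)).some}
    else A with hf
  have fsub : ∀ A, f A ⊆ A := by
    intro A x hx
    by_cases hA : A.ncard = k + 1
    · simp only [hf, dif_pos hA] at hx; exact hx.1
    · simpa only [hf, dif_neg hA] using hx
  have fbig : ∀ A : Set V, A.ncard = k + 1 → (f A).ncard = k := by
    intro A hA
    have hne : A.ncard ≠ 0 := by omega
    have hsome := (Set.nonempty_of_ncard_ne_zero hne).some_mem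
    simp only [hf, dif_pos hA]
    rw [Set.ncard_diff_singleton_of_mem hsome, hA]
    omega
  -- first family
  have hQ1d : (f '' P).PairwiseDisjoint id := by
    rintro _ ⟨A, hA, rfl⟩ _ ⟨B, hB, rfl⟩ hne
    have hAB : A ≠ B := by rintro rfl; exact hne rfl
    exact Disjoint.mono (fsub A) (fsub B) (hdisj hA hB hAB)
  have hQ1c : ∀ S ∈ f '' P, S.ncard ≤ k := by
    rintro _ ⟨A, hA, rfl⟩
    by_cases hAb : A.ncard = k + 1
    · exact le_of_eq (fbig A hAb)
    · have := hcard A hA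
      have : A.ncard ≤ k := by omega
      simpa only [hf, dif_neg hAb] using this
  obtain ⟨C⟩ := h (f '' P) hQ1d hQ1c
  -- the independent transversal
  set T : Set V :=
    {x | ∃ A ∈ P, A.ncard = k + 1 ∧ x ∈ f A ∧ C x = ⟨0, hkpos⟩} with hT
  -- cliques of addCliques (f '' P) : members of f '' P are cliques
  have hadjQ1 : ∀ A ∈ P, ∀ x ∈ f A, ∀ y ∈ f A, x ≠ y →
      (G.addCliques (f '' P)).Adj x y := by
    intro A hA x hx y hy hxy
    rw [addCliques_adj']
    exact Or.inr ⟨hxy, f A, ⟨A, hA, rfl⟩, hx, hy⟩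
  have hinj : ∀ A ∈ P, Set.InjOn C (f A) := by
    intro A hA x hx y hy hxy
    by_contra hne
    exact C.valid (hadjQ1 A hA x hx y hy hne) hxy
  -- each big part meets T
  have hbigT : ∀ A ∈ P, A.ncard = k + 1 → ∃ t ∈ A, t ∈ T := by
    intro A hA hAb
    have hcardf : (f A).ncard = k := fbig A hAb
    have hfin : (f A).Finite := Set.toFinite _
    have hcard' : hfin.toFinset.card = k := by
      rw [← Set.ncard_eq_toFinset_card (f A) hfin]
      exact hcardf
    have himg : (Finset.image C hfin.toFinset).card = k := by
      rw [Finset.card_image_of_injOn, hcard']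
      intro x hx y hy hxy
      exact hinj A hA (by simpa using hx) (by simpa using hy) hxy
    have huniv : Finset.image C hfin.toFinset = Finset.univ :=
      Finset.eq_univ_of_card _ (by rw [himg, Fintype.card_fin])
    have : (⟨0, hkpos⟩ : Fin k) ∈ Finset.image C hfin.toFinset := by
      rw [huniv]; exact Finset.mem_univ _
    obtain ⟨t, ht, hct⟩ := Finset.mem_image.mp this
    have htf : t ∈ f A := by simpa using ht
    exact ⟨t, fsub A htf, ⟨A, hA, hAb, htf, hct⟩⟩
  -- membership in T within a part pins everything down
  have hmemT : ∀ A ∈ P, ∀ x, x ∈ A → x ∈ T →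
      A.ncard = k + 1 ∧ x ∈ f A ∧ C x = ⟨0, hkpos⟩ := by
    intro A hA x hxA hxT
    obtain ⟨B, hB, hBb, hxf, hx0⟩ := hxT
    have hxB : x ∈ B := fsub B hxf
    have hAB : A = B := by
      by_contra hne
      exact (Set.disjoint_left.mp (hdisj hA hB hne)) hxA hxB
    subst hAB
    exact ⟨hBb, hxf, hx0⟩
  -- T has at most one vertex in each part
  have hTone : ∀ A ∈ P, ∀ x ∈ A, ∀ y ∈ A, x ∈ T → y ∈ T → x = y := by
    intro A hA x hx y hy hxT hyT
    obtain ⟨hAb, hxf, hx0⟩ := hmemT A hA x hx hxT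
    obtain ⟨-, hyf, hy0⟩ := hmemT A hA y hy hyT
    exact hinj A hA hxf hyf (hx0.trans hy0.symm)
  -- T is independent in G
  have hTind : ∀ x ∈ T, ∀ y ∈ T, ¬ G.Adj x y := by
    intro x hxT y hyT hadj
    obtain ⟨A, hA, hAb, hxf, hx0⟩ := hxT
    obtain ⟨B, hB, hBb, hyf, hy0⟩ := hyT
    have : (G.addCliques (f '' P)).Adj x y := by
      rw [addCliques_adj']; exact Or.inl hadj
    exact C.valid this (hx0.trans hy0.symm)
  -- second family: truncate by T
  have hQ2d : ((fun A => A \ T) '' P).PairwiseDisjoint id := by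
    rintro _ ⟨A, hA, rfl⟩ _ ⟨B, hB, rfl⟩ hne
    have hAB : A ≠ B := by rintro rfl; exact hne rfl
    exact Disjoint.mono Set.diff_subset Set.diff_subset (hdisj hA hB hAB)
  have hQ2c : ∀ S ∈ (fun A => A \ T) '' P, S.ncard ≤ k := by
    rintro _ ⟨A, hA, rfl⟩
    by_cases hAb : A.ncard = k + 1
    · obtain ⟨t, htA, htT⟩ := hbigT A hA hAb
      have hsub : A \ T ⊆ A \ {t} := by
        intro x hx
        exact ⟨hx.1, by simp; rintro rfl; exact hx.2 htT⟩
      calc (A \ T).ncard ≤ (A \ {t}).ncard := Set.ncard_le_ncard hsub (Set.toFinite _)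
        _ = k := by rw [Set.ncard_diff_singleton_of_mem htA, hAb]; omega
    · have := hcard A hA
      calc (A \ T).ncard ≤ A.ncard := Set.ncard_le_ncard Set.diff_subset (Set.toFinite _)
        _ ≤ k := by omega
  obtain ⟨D⟩ := h ((fun A => A \ T) '' P) hQ2d hQ2c
  -- final coloring
  refine ⟨SimpleGraph.Coloring.mk
    (fun x => if x ∈ T then Fin.last k else (D x).castSucc) ?_⟩
  intro a b hab
  have hne : a ≠ b := hab.ne
  rw [addCliques_adj'] at hab
  by_cases ha : a ∈ T <;> by_cases hb : b ∈ T <;> simp only [if_pos, if_neg, ha, hb,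
    if_true, if_false]
  · -- both in T : contradiction
    exfalso
    rcases hab with hg | ⟨-, A, hA, haA, hbA⟩
    · exact hTind a ha b hb hg
    · exact hne (hTone A hA a haA b hbA ha hb)
  · exact (Fin.castSucc_lt_last (D b)).ne'
  · exact (Fin.castSucc_lt_last (D a)).ne
  · -- neither in T
    have : (G.addCliques ((fun A => A \ T) '' P)).Adj a b := by
      rw [addCliques_adj']
      rcases hab with hg | ⟨hne', A, hA, haA, hbA⟩
      · exact Or.inl hg
      · exact Or.inr ⟨hne', A \ T, ⟨A, hA, rfl⟩, ⟨haA, ha⟩, ⟨hbA, hb⟩⟩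
    have := D.valid this
    simpa [Fin.castSucc_inj] using this
end
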